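/- arXiv:2601.18175 — 7 statements merged into one kernel-verified Lean document; each statement's English description precedes it below -/
import Mathlib

section
/- For every time t ≥ 0, every nonterminal state s, and every action a, if ℙ_{π0,μ}(Xₜ = s and ∃ u, X_u ∈ 𝒯₊) > 0, then the conditional probability satisfies ℙ_{π0,μ}(Aₜ = a | Xₜ = s and ∃ u, X_u ∈ 𝒯₊) = π0(a|s)·Q_{π0}(s,a)/V_{π0}(s) = π₊(a|s). In particular the success-conditioned action distribution at state s does not depend on t or on μ. -/
open MeasureTheory
open scoped ENNReal

/-- A pmf on a finite type, as a real-valued function. -/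
def IsPMFOn {α : Type*} [Fintype α] (p : α → ℝ) : Prop :=
  (∀ x, 0 ≤ p x) ∧ ∑ x, p x = 1

/-- A terminated trajectory of an episodic MDP: the initial state together with the
list of (action, next-state) steps, recorded up to the first visit to a terminal
state.  Under almost-sure termination this is a faithful (countable) sample space
for the Ionescu–Tulcea law of the chain, terminal states being absorbing. -/
structure Traj (S A : Type*) where
  init : S
  steps : List (A × S)

instance {S A : Type*} : MeasurableSpace (Traj S A) := ⊤

variable {S A : Type*}

/-- The last recorded state of a trajectory. -/
def lastState (ω : Traj S A) : S := ω.steps.foldl (fun _ p => p.2) ω.init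

/-- The state `Xₜ` at time `t` (after termination the chain is absorbed, so we
return the last recorded state). -/
def stateAt (ω : Traj S A) (t : ℕ) : S :=
  (ω.init :: ω.steps.map Prod.snd).getD t (lastState ω)

/-- The action `Aₜ` at time `t`, defined (as `some a`) for `t` before the
termination time. -/
def actionAt (ω : Traj S A) (t : ℕ) : Option A := ω.steps[t]?.map Prod.fst

/-- Probability weight of a path started at `s`: the product of the policy and
transition probabilities along the path, the path being required to stop exactly
on first reaching the terminal set `Term`. -/
def pathWeight [DecidableEq S] (Term : Finset S) (P : S → A → S → ℝ)
    (π : S → A → ℝ) : S → List (A × S) → ℝ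
  | s, [] => if s ∈ Term then 1 else 0
  | s, (a, s') :: l =>
      if s ∈ Term then 0 else π s a * P s a s' * pathWeight Term P π s' l

/-- The law `ℙ_{π,μ}` of the episodic chain `X₀ ~ μ, Aₜ ~ π(·|Xₜ),
X_{t+1} ~ P(·|Xₜ,Aₜ)` with terminal set `Term`, as a measure on terminated
trajectories.  When the chain reaches `Term` almost surely this is a probability
measure and is the (pushforward of the) Ionescu–Tulcea trajectory law. -/
noncomputable def trajMeasure [DecidableEq S] (Term : Finset S) (P : S → A → S → ℝ)
    (π : S → A → ℝ) (μ : S → ℝ) : Measure (Traj S A) :=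
  Measure.sum fun ω : Traj S A =>
    ENNReal.ofReal (μ ω.init * pathWeight Term P π ω.init ω.steps) • Measure.dirac ω

/-- The success event `{∃ t, Xₜ ∈ 𝒯₊}`. -/
def SuccessEvent (Tp : Finset S) : Set (Traj S A) := {ω | ∃ t, stateAt ω t ∈ Tp}

/-- The point mass at `s`, as an initial distribution. -/
def pointMass [DecidableEq S] (s : S) : S → ℝ := fun s' => if s' = s then 1 else 0

/-- The value `V_π(s) := ℙ_{π,s}(∃ t, Xₜ ∈ 𝒯₊)`. -/
noncomputable def Vval [DecidableEq S] (Term Tp : Finset S) (P : S → A → S → ℝ)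
    (π : S → A → ℝ) (s : S) : ℝ :=
  (trajMeasure Term P π (pointMass s) (SuccessEvent Tp)).toReal

/-- The Q-value `Q_π(s,a) := Σ_{s'} P(s'|s,a)·V_π(s')`. -/
noncomputable def Qval [Fintype S] [DecidableEq S] (Term Tp : Finset S)
    (P : S → A → S → ℝ) (π : S → A → ℝ) (s : S) (a : A) : ℝ :=
  ∑ s', P s a s' * Vval Term Tp P π s'

/-- The success-conditioned policy `π₊(a|s) := π0(a|s)·Q_{π0}(s,a)/V_{π0}(s)`. -/
noncomputable def piPlus [Fintype S] [DecidableEq S] (Term Tp : Finset S)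
    (P : S → A → S → ℝ) (π0 : S → A → ℝ) : S → A → ℝ :=
  fun s a => π0 s a * Qval Term Tp P π0 s a / Vval Term Tp P π0 s

/-- The action-influence
`I(s) := Σ_a π0(a|s)·((Q_{π0}(s,a) − V_{π0}(s))/V_{π0}(s))²`. -/
noncomputable def influence [Fintype S] [DecidableEq S] [Fintype A] (Term Tp : Finset S)
    (P : S → A → S → ℝ) (π0 : S → A → ℝ) (s : S) : ℝ :=
  ∑ a, π0 s a * ((Qval Term Tp P π0 s a - Vval Term Tp P π0 s)
      / Vval Term Tp P π0 s) ^ 2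

/-- The occupancy measure `d_π(s) := Σ_{t≥0} ℙ_{π,μ}(Xₜ = s)` (in `ℝ≥0∞`). -/
noncomputable def dOcc [DecidableEq S] (Term : Finset S) (P : S → A → S → ℝ)
    (π : S → A → ℝ) (μ : S → ℝ) (s : S) : ℝ≥0∞ :=
  ∑' t : ℕ, trajMeasure Term P π μ {ω | stateAt ω t = s}

/-- The success-conditioned occupancy
`d⁺_π(s) := 𝔼_{π,μ}[Σ_{t≥0} 1(Xₜ = s) | ∃ t, Xₜ ∈ 𝒯₊]` (in `ℝ≥0∞`). -/
noncomputable def dPlusOcc [DecidableEq S] (Term Tp : Finset S) (P : S → A → S → ℝ)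
    (π : S → A → ℝ) (μ : S → ℝ) (s : S) : ℝ≥0∞ :=
  ∫⁻ ω, (∑' t : ℕ, if stateAt ω t = s then 1 else 0)
    ∂ (ProbabilityTheory.cond (trajMeasure Term P π μ) (SuccessEvent Tp))

/-- Log-likelihood `Σ_{t<T} log π(Aₜ|Xₜ)` of the recorded path under policy `π`. -/
noncomputable def pathLogLik (π : S → A → ℝ) : S → List (A × S) → ℝ
  | _, [] => 0
  | s, (a, s') :: l => Real.log (π s a) + pathLogLik π s' l

/-- The cross-entropy loss
`ℓ(π) := 𝔼_{π0,μ}[ −Σ_{t<T} log π(Aₜ|Xₜ) | ∃ t, Xₜ ∈ 𝒯₊ ]`. -/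
noncomputable def xent [DecidableEq S] (Term Tp : Finset S) (P : S → A → S → ℝ)
    (π0 : S → A → ℝ) (μ : S → ℝ) (π : S → A → ℝ) : ℝ :=
  ∫ ω, -(pathLogLik π ω.init ω.steps)
    ∂ (ProbabilityTheory.cond (trajMeasure Term P π0 μ) (SuccessEvent Tp))

section BayesAux

open scoped Classical

variable {S A : Type*}

@[simp] lemma stateAt_zero (s₀ : S) (l : List (A × S)) :
    stateAt ⟨s₀, l⟩ 0 = s₀ := rfl

@[simp] lemma lastState_nil (s₀ : S) : lastState (⟨s₀, []⟩ : Traj S A) = s₀ := rfl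

@[simp] lemma lastState_cons (s₀ : S) (b : A) (s' : S) (l : List (A × S)) :
    lastState (⟨s₀, (b, s') :: l⟩ : Traj S A) = lastState ⟨s', l⟩ := rfl

@[simp] lemma stateAt_nil (s₀ : S) (u : ℕ) :
    stateAt (⟨s₀, []⟩ : Traj S A) u = s₀ := by
  cases u <;> simp [stateAt, lastState]

@[simp] lemma stateAt_cons_succ (s₀ : S) (b : A) (s' : S) (l : List (A × S)) (u : ℕ) :
    stateAt (⟨s₀, (b, s') :: l⟩ : Traj S A) (u + 1) = stateAt ⟨s', l⟩ u := by
  simp [stateAt, lastState]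

@[simp] lemma actionAt_nil (s₀ : S) (u : ℕ) :
    actionAt (⟨s₀, []⟩ : Traj S A) u = none := by
  simp [actionAt]

@[simp] lemma actionAt_cons_zero (s₀ : S) (b : A) (s' : S) (l : List (A × S)) :
    actionAt (⟨s₀, (b, s') :: l⟩ : Traj S A) 0 = some b := by simp [actionAt]

@[simp] lemma actionAt_cons_succ (s₀ : S) (b : A) (s' : S) (l : List (A × S)) (u : ℕ) :
    actionAt (⟨s₀, (b, s') :: l⟩ : Traj S A) (u + 1) = actionAt ⟨s', l⟩ u := by
  simp [actionAt]

lemma succ_cons_iff {Tp : Finset S} {s₀ : S} (h : s₀ ∉ Tp) (b : A) (s' : S) (l : List (A × S)) :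
    ((⟨s₀, (b, s') :: l⟩ : Traj S A) ∈ SuccessEvent Tp) ↔ ((⟨s', l⟩ : Traj S A) ∈ SuccessEvent Tp) := by
  constructor
  · rintro ⟨u, hu⟩
    cases u with
    | zero => exact absurd hu h
    | succ u => exact ⟨u, by simpa using hu⟩
  · rintro ⟨u, hu⟩
    exact ⟨u + 1, by simpa using hu⟩

lemma ite_iff_eq {α : Sort*} {p q : Prop} (hp : Decidable p) (hq : Decidable q)
    (h : p ↔ q) (x y : α) : @ite α p hp x y = @ite α q hq x y := by
  have hpq := propext h
  subst hpq
  rw [Subsingleton.elim hp hq]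

/-- Reindexing of trajectories by pairs. -/
def trajEquiv (S A : Type*) : S × List (A × S) ≃ Traj S A where
  toFun p := ⟨p.1, p.2⟩
  invFun ω := (ω.init, ω.steps)
  left_inv p := rfl
  right_inv ω := rfl

/-- Splitting a list into nil / cons. -/
def consEquiv (S A : Type*) : Option ((A × S) × List (A × S)) ≃ List (A × S) where
  toFun o := match o with
    | none => []
    | some (p, l) => p :: l
  invFun l := match l with
    | [] => none
    | p :: l => some (p, l)
  left_inv o := by rcases o with _ | ⟨p, l⟩ <;> rfl
  right_inv l := by cases l <;> rfl

lemma tsum_option' {β : Type*} (g : Option β → ℝ≥0∞) :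
    ∑' o, g o = g none + ∑' b, g (some b) := by
  rw [ENNReal.tsum_eq_add_tsum_ite none]
  congr 1
  refine (tsum_congr (fun o : Option β => ?_)).trans
    ((Function.Injective.tsum_eq (Option.some_injective β)
      (f := fun o => Option.elim o 0 (fun b => g (some b))) ?_).symm)
  · cases o <;> simp
  · rintro (_ | b) h
    · simp at h
    · exact ⟨b, rfl⟩

lemma tsum_list {f : List (A × S) → ℝ≥0∞} :
    ∑' l, f l = f [] + ∑' p : (A × S) × List (A × S), f (p.1 :: p.2) := by
  rw [← Equiv.tsum_eq (consEquiv S A) f, tsum_option']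
  rfl

lemma tsum_traj {f : Traj S A → ℝ≥0∞} [Fintype S] :
    ∑' ω, f ω = ∑ s₀ : S, ∑' l : List (A × S), f ⟨s₀, l⟩ := by
  rw [← Equiv.tsum_eq (trajEquiv S A) f, ENNReal.tsum_prod', tsum_fintype]
  rfl

lemma pathWeight_nil [DecidableEq S] (T : Finset S) (P : S → A → S → ℝ) (π : S → A → ℝ)
    (s₀ : S) : pathWeight T P π s₀ [] = if s₀ ∈ T then 1 else 0 := rfl

lemma pathWeight_cons [DecidableEq S] (T : Finset S) (P : S → A → S → ℝ) (π : S → A → ℝ)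
    (s₀ : S) (b : A) (s' : S) (l : List (A × S)) :
    pathWeight T P π s₀ ((b, s') :: l)
      = if s₀ ∈ T then 0 else π s₀ b * P s₀ b s' * pathWeight T P π s' l := rfl

/-- The sum formula for the trajectory measure. -/
lemma trajMeasure_apply [Fintype S] [DecidableEq S] (T : Finset S) (P : S → A → S → ℝ)
    (π : S → A → ℝ) (μ : S → ℝ) (hμ : ∀ x, 0 ≤ μ x) (E : Set (Traj S A)) :
    trajMeasure T P π μ E
      = ∑ s₀ : S, ENNReal.ofReal (μ s₀) *
          ∑' l : List (A × S),
            (if (⟨s₀, l⟩ : Traj S A) ∈ E then ENNReal.ofReal (pathWeight T P π s₀ l) else 0) := by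
  rw [trajMeasure, Measure.sum_apply _ (by trivial : MeasurableSet E)]
  have h1 : ∀ ω : Traj S A,
      (ENNReal.ofReal (μ ω.init * pathWeight T P π ω.init ω.steps) • Measure.dirac ω) E
        = (if ω ∈ E then ENNReal.ofReal (μ ω.init) * ENNReal.ofReal (pathWeight T P π ω.init ω.steps) else 0) := by
    intro ω
    rw [Measure.smul_apply, smul_eq_mul, Measure.dirac_apply' _ (by trivial : MeasurableSet E),
      ENNReal.ofReal_mul (hμ _)]
    by_cases h : ω ∈ E <;> simp [h]
  simp only [h1]
  rw [tsum_traj]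
  refine Finset.sum_congr rfl fun s₀ _ => ?_
  rw [← ENNReal.tsum_mul_left]
  exact tsum_congr fun l => by by_cases h : (⟨s₀, l⟩ : Traj S A) ∈ E <;> simp [h]

section Core

variable [Fintype S] [DecidableEq S] [Fintype A]
variable (T Tp : Finset S) (P : S → A → S → ℝ) (π0 : S → A → ℝ)

/-- `∑_paths from s₀ reaching Tp`, the value in `ℝ≥0∞`. -/
noncomputable def gV (s₀ : S) : ℝ≥0∞ :=
  ∑' l : List (A × S),
    (if (⟨s₀, l⟩ : Traj S A) ∈ SuccessEvent Tp then ENNReal.ofReal (pathWeight T P π0 s₀ l) else 0)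

lemma gV_eq_measure (s₀ : S) :
    trajMeasure T P π0 (pointMass s₀) (SuccessEvent Tp) = gV T Tp P π0 s₀ := by
  rw [trajMeasure_apply T P π0 _ (fun x => by unfold pointMass; split <;> norm_num)]
  rw [Finset.sum_eq_single s₀]
  · simp [pointMass, gV]
  · intro x _ hx
    simp [pointMass, hx]
  · intro hx
    exact absurd (Finset.mem_univ s₀) hx

/-- The one-step transfer operator. -/
noncomputable def Phi (f : S → ℝ≥0∞) : S → ℝ≥0∞ := fun s₀ =>
  if s₀ ∈ T then 0
  else ∑ b : A, ∑ s' : S, ENNReal.ofReal (π0 s₀ b * P s₀ b s') * f s'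

/-- Core sum for the event `Xₜ = s ∧ success`. -/
noncomputable def dCore (s : S) (t : ℕ) (s₀ : S) : ℝ≥0∞ :=
  ∑' l : List (A × S),
    (if (stateAt (⟨s₀, l⟩ : Traj S A) t = s ∧ (⟨s₀, l⟩ : Traj S A) ∈ SuccessEvent Tp)
      then ENNReal.ofReal (pathWeight T P π0 s₀ l) else 0)

/-- Core sum for the event `Xₜ = s ∧ success ∧ Aₜ = a`. -/
noncomputable def nCore (s : S) (a : A) (t : ℕ) (s₀ : S) : ℝ≥0∞ :=
  ∑' l : List (A × S),
    (if ((stateAt (⟨s₀, l⟩ : Traj S A) t = s ∧ (⟨s₀, l⟩ : Traj S A) ∈ SuccessEvent Tp)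
          ∧ actionAt (⟨s₀, l⟩ : Traj S A) t = some a)
      then ENNReal.ofReal (pathWeight T P π0 s₀ l) else 0)

lemma dCore_zero (s s₀ : S) :
    dCore T Tp P π0 s 0 s₀ = if s₀ = s then gV T Tp P π0 s else 0 := by
  unfold dCore gV
  by_cases h : s₀ = s
  · subst h
    rw [if_pos rfl]
    refine tsum_congr fun l => ?_
    exact if_congr (by simp [stateAt_zero]) rfl rfl
  · rw [if_neg h]
    refine (tsum_congr fun l => ?_).trans tsum_zero
    rw [if_neg]
    rintro ⟨h1, -⟩
    rw [stateAt_zero] at h1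
    exact h h1

lemma dCore_succ (hP : ∀ s a, IsPMFOn (P s a)) (hπ0 : ∀ s ∉ T, IsPMFOn (π0 s))
    (hTp : Tp ⊆ T) (s : S) (hs : s ∉ T) (t : ℕ) (s₀ : S) :
    dCore T Tp P π0 s (t + 1) s₀ = Phi T P π0 (dCore T Tp P π0 s t) s₀ := by
  unfold dCore Phi
  rw [tsum_list]
  have hnil : (if (stateAt (⟨s₀, ([] : List (A × S))⟩ : Traj S A) (t + 1) = s
        ∧ (⟨s₀, ([] : List (A × S))⟩ : Traj S A) ∈ SuccessEvent Tp)
      then ENNReal.ofReal (pathWeight T P π0 s₀ []) else 0) = 0 := by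
    by_cases hT : s₀ ∈ T
    · rw [if_neg]
      rintro ⟨h1, -⟩
      rw [stateAt_nil] at h1
      exact hs (h1 ▸ hT)
    · rw [pathWeight_nil, if_neg hT]
      split <;> simp
  rw [hnil, zero_add, ENNReal.tsum_prod', tsum_fintype, Fintype.sum_prod_type]
  by_cases hT : s₀ ∈ T
  · rw [if_pos hT]
    refine Finset.sum_eq_zero fun b _ => Finset.sum_eq_zero fun s' _ => ?_
    refine (tsum_congr fun l => ?_).trans tsum_zero
    rw [pathWeight_cons, if_pos hT]
    split <;> simp
  · rw [if_neg hT]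
    refine Finset.sum_congr rfl fun b _ => Finset.sum_congr rfl fun s' _ => ?_
    rw [← ENNReal.tsum_mul_left]
    refine tsum_congr fun l => ?_
    have hcond : (stateAt (⟨s₀, (b, s') :: l⟩ : Traj S A) (t + 1) = s
          ∧ (⟨s₀, (b, s') :: l⟩ : Traj S A) ∈ SuccessEvent Tp)
        ↔ (stateAt (⟨s', l⟩ : Traj S A) t = s ∧ (⟨s', l⟩ : Traj S A) ∈ SuccessEvent Tp) := by
      rw [stateAt_cons_succ, succ_cons_iff (fun hmem => hT (hTp hmem)) b s' l]
    rw [pathWeight_cons, if_neg hT,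
      ENNReal.ofReal_mul (mul_nonneg ((hπ0 s₀ hT).1 b) ((hP s₀ b).1 s'))]
    by_cases hc : (stateAt (⟨s', l⟩ : Traj S A) t = s ∧ (⟨s', l⟩ : Traj S A) ∈ SuccessEvent Tp)
    · rw [if_pos (hcond.mpr hc), if_pos hc]
    · rw [if_neg (fun hx => hc (hcond.mp hx)), if_neg hc, mul_zero]

lemma nCore_succ (hP : ∀ s a, IsPMFOn (P s a)) (hπ0 : ∀ s ∉ T, IsPMFOn (π0 s))
    (hTp : Tp ⊆ T) (s : S) (a : A) (t : ℕ) (s₀ : S) :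
    nCore T Tp P π0 s a (t + 1) s₀ = Phi T P π0 (nCore T Tp P π0 s a t) s₀ := by
  unfold nCore Phi
  rw [tsum_list]
  have hnil : (if ((stateAt (⟨s₀, ([] : List (A × S))⟩ : Traj S A) (t + 1) = s
        ∧ (⟨s₀, ([] : List (A × S))⟩ : Traj S A) ∈ SuccessEvent Tp)
        ∧ actionAt (⟨s₀, ([] : List (A × S))⟩ : Traj S A) (t + 1) = some a)
      then ENNReal.ofReal (pathWeight T P π0 s₀ []) else 0) = 0 := by
    rw [if_neg]
    rintro ⟨-, h2⟩
    rw [actionAt_nil] at h2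
    exact (Option.some_ne_none a) h2.symm
  rw [hnil, zero_add, ENNReal.tsum_prod', tsum_fintype, Fintype.sum_prod_type]
  by_cases hT : s₀ ∈ T
  · rw [if_pos hT]
    refine Finset.sum_eq_zero fun b _ => Finset.sum_eq_zero fun s' _ => ?_
    refine (tsum_congr fun l => ?_).trans tsum_zero
    rw [pathWeight_cons, if_pos hT]
    split <;> simp
  · rw [if_neg hT]
    refine Finset.sum_congr rfl fun b _ => Finset.sum_congr rfl fun s' _ => ?_
    rw [← ENNReal.tsum_mul_left]
    refine tsum_congr fun l => ?_
    have hcond : ((stateAt (⟨s₀, (b, s') :: l⟩ : Traj S A) (t + 1) = s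
          ∧ (⟨s₀, (b, s') :: l⟩ : Traj S A) ∈ SuccessEvent Tp)
          ∧ actionAt (⟨s₀, (b, s') :: l⟩ : Traj S A) (t + 1) = some a)
        ↔ ((stateAt (⟨s', l⟩ : Traj S A) t = s ∧ (⟨s', l⟩ : Traj S A) ∈ SuccessEvent Tp)
          ∧ actionAt (⟨s', l⟩ : Traj S A) t = some a) := by
      rw [stateAt_cons_succ, actionAt_cons_succ, succ_cons_iff (fun hmem => hT (hTp hmem)) b s' l]
    rw [pathWeight_cons, if_neg hT,
      ENNReal.ofReal_mul (mul_nonneg ((hπ0 s₀ hT).1 b) ((hP s₀ b).1 s'))]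
    by_cases hc : ((stateAt (⟨s', l⟩ : Traj S A) t = s ∧ (⟨s', l⟩ : Traj S A) ∈ SuccessEvent Tp)
          ∧ actionAt (⟨s', l⟩ : Traj S A) t = some a)
    · rw [if_pos (hcond.mpr hc), if_pos hc]
    · rw [if_neg (fun hx => hc (hcond.mp hx)), if_neg hc, mul_zero]

lemma nCore_zero (hP : ∀ s a, IsPMFOn (P s a)) (hπ0 : ∀ s ∉ T, IsPMFOn (π0 s))
    (hTp : Tp ⊆ T) (s : S) (hs : s ∉ T) (a : A) (s₀ : S) :
    nCore T Tp P π0 s a 0 s₀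
      = if s₀ = s
        then ENNReal.ofReal (π0 s a) * ∑ s' : S, ENNReal.ofReal (P s a s') * gV T Tp P π0 s'
        else 0 := by
  unfold nCore gV
  by_cases h : s₀ = s
  · subst h
    rw [if_pos rfl, tsum_list]
    have hnil : (if ((stateAt (⟨s₀, ([] : List (A × S))⟩ : Traj S A) 0 = s₀
          ∧ (⟨s₀, ([] : List (A × S))⟩ : Traj S A) ∈ SuccessEvent Tp)
          ∧ actionAt (⟨s₀, ([] : List (A × S))⟩ : Traj S A) 0 = some a)
        then ENNReal.ofReal (pathWeight T P π0 s₀ []) else 0) = 0 := by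
      rw [if_neg]
      rintro ⟨-, h2⟩
      rw [actionAt_nil] at h2
      exact (Option.some_ne_none a) h2.symm
    rw [hnil, zero_add, ENNReal.tsum_prod', tsum_fintype, Fintype.sum_prod_type]
    have key : ∀ b : A, (∑ s' : S, ∑' l : List (A × S),
          (if ((stateAt (⟨s₀, (b, s') :: l⟩ : Traj S A) 0 = s₀
              ∧ (⟨s₀, (b, s') :: l⟩ : Traj S A) ∈ SuccessEvent Tp)
              ∧ actionAt (⟨s₀, (b, s') :: l⟩ : Traj S A) 0 = some a)
            then ENNReal.ofReal (pathWeight T P π0 s₀ ((b, s') :: l)) else 0))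
        = if b = a
          then ∑ s' : S, ENNReal.ofReal (π0 s₀ a * P s₀ a s') *
            ∑' l : List (A × S),
              (if (⟨s', l⟩ : Traj S A) ∈ SuccessEvent Tp
                then ENNReal.ofReal (pathWeight T P π0 s' l) else 0)
          else 0 := by
      intro b
      by_cases hb : b = a
      · subst hb
        rw [if_pos rfl]
        refine Finset.sum_congr rfl fun s' _ => ?_
        rw [← ENNReal.tsum_mul_left]
        refine tsum_congr fun l => ?_
        have hcond : ((stateAt (⟨s₀, (b, s') :: l⟩ : Traj S A) 0 = s₀
              ∧ (⟨s₀, (b, s') :: l⟩ : Traj S A) ∈ SuccessEvent Tp)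
              ∧ actionAt (⟨s₀, (b, s') :: l⟩ : Traj S A) 0 = some b)
            ↔ ((⟨s', l⟩ : Traj S A) ∈ SuccessEvent Tp) := by
          constructor
          · rintro ⟨⟨-, h2⟩, -⟩
            exact (succ_cons_iff (fun hmem => hs (hTp hmem)) b s' l).mp h2
          · intro hm
            exact ⟨⟨stateAt_zero s₀ _, (succ_cons_iff (fun hmem => hs (hTp hmem)) b s' l).mpr hm⟩,
              actionAt_cons_zero s₀ b s' l⟩
        rw [pathWeight_cons, if_neg hs,
          ENNReal.ofReal_mul (mul_nonneg ((hπ0 s₀ hs).1 b) ((hP s₀ b).1 s'))]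
        by_cases hc : ((⟨s', l⟩ : Traj S A) ∈ SuccessEvent Tp)
        · rw [if_pos (hcond.mpr hc), if_pos hc]
        · rw [if_neg (fun hx => hc (hcond.mp hx)), if_neg hc, mul_zero]
      · rw [if_neg hb]
        refine Finset.sum_eq_zero fun s' _ => ?_
        refine (tsum_congr fun l => ?_).trans tsum_zero
        rw [if_neg]
        rintro ⟨-, h2⟩
        rw [actionAt_cons_zero] at h2
        exact hb (Option.some_injective _ h2)
    rw [Finset.sum_congr rfl fun b _ => key b, Finset.sum_ite_eq' Finset.univ a,
      if_pos (Finset.mem_univ a), Finset.mul_sum]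
    refine Finset.sum_congr rfl fun s' _ => ?_
    rw [ENNReal.ofReal_mul ((hπ0 s₀ hs).1 a), mul_assoc]
  · rw [if_neg h]
    refine (tsum_congr fun l => ?_).trans tsum_zero
    rw [if_neg]
    rintro ⟨⟨h1, -⟩, -⟩
    rw [stateAt_zero] at h1
    exact h h1

lemma Phi_mul (f : S → ℝ≥0∞) (c : ℝ≥0∞) (s₀ : S) :
    Phi T P π0 (fun x => f x * c) s₀ = Phi T P π0 f s₀ * c := by
  unfold Phi
  split
  · rw [zero_mul]
  · rw [Finset.sum_mul]
    refine Finset.sum_congr rfl fun b _ => ?_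
    rw [Finset.sum_mul]
    exact Finset.sum_congr rfl fun s' _ => (mul_assoc _ _ _).symm

lemma Phi_iter_ne_top (f : S → ℝ≥0∞) (hf : ∀ x, f x ≠ ⊤) :
    ∀ t x, (Phi T P π0)^[t] f x ≠ ⊤ := by
  intro t
  induction t with
  | zero => exact hf
  | succ t ih =>
    intro x
    rw [Function.iterate_succ_apply']
    unfold Phi
    split
    · exact ENNReal.zero_ne_top
    · refine (ENNReal.sum_lt_top.mpr fun b _ => ENNReal.sum_lt_top.mpr fun s' _ => ?_).ne
      exact (ENNReal.mul_ne_top ENNReal.ofReal_ne_top (ih s')).lt_top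

lemma dCore_formula (hP : ∀ s a, IsPMFOn (P s a)) (hπ0 : ∀ s ∉ T, IsPMFOn (π0 s))
    (hTp : Tp ⊆ T) (s : S) (hs : s ∉ T) :
    ∀ t s₀, dCore T Tp P π0 s t s₀
      = (Phi T P π0)^[t] (fun x => if x = s then 1 else 0) s₀ * gV T Tp P π0 s := by
  intro t
  induction t with
  | zero =>
    intro s₀
    rw [Function.iterate_zero, id, dCore_zero]
    split <;> simp
  | succ t ih =>
    intro s₀
    rw [dCore_succ T Tp P π0 hP hπ0 hTp s hs t s₀, Function.iterate_succ_apply',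
      show dCore T Tp P π0 s t = fun x => (Phi T P π0)^[t] (fun x => if x = s then 1 else 0) x
        * gV T Tp P π0 s from funext ih, Phi_mul]

lemma nCore_formula (hP : ∀ s a, IsPMFOn (P s a)) (hπ0 : ∀ s ∉ T, IsPMFOn (π0 s))
    (hTp : Tp ⊆ T) (s : S) (hs : s ∉ T) (a : A) :
    ∀ t s₀, nCore T Tp P π0 s a t s₀
      = (Phi T P π0)^[t] (fun x => if x = s then 1 else 0) s₀
        * (ENNReal.ofReal (π0 s a) * ∑ s' : S, ENNReal.ofReal (P s a s') * gV T Tp P π0 s') := by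
  intro t
  induction t with
  | zero =>
    intro s₀
    rw [Function.iterate_zero, id, nCore_zero T Tp P π0 hP hπ0 hTp s hs a]
    split <;> simp
  | succ t ih =>
    intro s₀
    rw [nCore_succ T Tp P π0 hP hπ0 hTp s a t s₀, Function.iterate_succ_apply',
      show nCore T Tp P π0 s a t = fun x => (Phi T P π0)^[t] (fun x => if x = s then 1 else 0) x
        * (ENNReal.ofReal (π0 s a) * ∑ s' : S, ENNReal.ofReal (P s a s') * gV T Tp P π0 s')
        from funext ih, Phi_mul]

end Core

end BayesAux

/-- **Bayes formula for the success-conditioned policy.**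
Episodic-MDP setup: `S` finite with terminal set `𝒯 = 𝒯₊ ∪ 𝒯₋` (disjoint), `A`
finite nonempty, transition kernel `P` (a pmf in its last argument) absorbing on
`𝒯`, every Markov policy reaching `𝒯` almost surely from every state, behavior
policy `π0` with `V_{π0}(s) > 0` at every nonterminal `s`, and initial
distribution `μ` supported on nonterminal states.

For every `t ≥ 0`, nonterminal `s`, and action `a`, if
`ℙ_{π0,μ}(Xₜ = s ∧ ∃ u, X_u ∈ 𝒯₊) > 0`, then
`ℙ_{π0,μ}(Aₜ = a | Xₜ = s ∧ ∃ u, X_u ∈ 𝒯₊) = π0(a|s)·Q_{π0}(s,a)/V_{π0}(s)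
 = π₊(a|s)`; in particular this conditional action distribution does not depend
on `t` or `μ`. -/
theorem success_conditioned_policy_bayes_formula
    {S A : Type*} [Fintype S] [DecidableEq S] [Fintype A] [Nonempty A]
    (T Tp Tm : Finset S) (hpart : Tp ∪ Tm = T) (hdisj : Disjoint Tp Tm)
    (P : S → A → S → ℝ) (hP : ∀ s a, IsPMFOn (P s a))
    (habs : ∀ s ∈ T, ∀ a, P s a s = 1)
    (hterm : ∀ π : S → A → ℝ, (∀ s ∉ T, IsPMFOn (π s)) →
      ∀ s : S, trajMeasure T P π (pointMass s) Set.univ = 1)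
    (π0 : S → A → ℝ) (hπ0 : ∀ s ∉ T, IsPMFOn (π0 s))
    (hV0 : ∀ s ∉ T, 0 < Vval T Tp P π0 s)
    (μ : S → ℝ) (hμ : IsPMFOn μ) (hμT : ∀ s ∈ T, μ s = 0)
    (t : ℕ) (s : S) (hs : s ∉ T) (a : A)
    (hpos : 0 < trajMeasure T P π0 μ ({ω | stateAt ω t = s} ∩ SuccessEvent Tp)) :
    ProbabilityTheory.cond (trajMeasure T P π0 μ)
        ({ω | stateAt ω t = s} ∩ SuccessEvent Tp) {ω | actionAt ω t = some a}
      = ENNReal.ofReal (π0 s a * Qval T Tp P π0 s a / Vval T Tp P π0 s)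
    ∧ piPlus T Tp P π0 s a = π0 s a * Qval T Tp P π0 s a / Vval T Tp P π0 s := by
  classical
  have hTp : Tp ⊆ T := hpart ▸ Finset.subset_union_left
  -- gV is finite and equals ofReal of the value
  have hgV_ne_top : ∀ s₀ : S, gV T Tp P π0 s₀ ≠ ⊤ := by
    intro s₀
    refine ne_top_of_le_ne_top ENNReal.one_ne_top ?_
    rw [← gV_eq_measure T Tp P π0 s₀, ← hterm π0 hπ0 s₀]
    exact measure_mono (Set.subset_univ _)
  have hgV_eq : ∀ s₀ : S, ENNReal.ofReal (Vval T Tp P π0 s₀) = gV T Tp P π0 s₀ := by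
    intro s₀
    unfold Vval
    rw [gV_eq_measure T Tp P π0 s₀]
    exact ENNReal.ofReal_toReal ((gV_eq_measure T Tp P π0 s₀) ▸ hgV_ne_top s₀)
  have hgV_pos : (0 : ℝ≥0∞) < gV T Tp P π0 s := by
    rw [← hgV_eq s]
    exact ENNReal.ofReal_pos.mpr (hV0 s hs)
  -- the numerator constant
  set cA : ℝ≥0∞ :=
    ENNReal.ofReal (π0 s a) * ∑ s' : S, ENNReal.ofReal (P s a s') * gV T Tp P π0 s' with hcA
  have hcA_eq : ENNReal.ofReal (π0 s a * Qval T Tp P π0 s a) = cA := by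
    rw [ENNReal.ofReal_mul ((hπ0 s hs).1 a), hcA]
    congr 1
    unfold Qval
    have hnn : ∀ s' ∈ (Finset.univ : Finset S), 0 ≤ P s a s' * Vval T Tp P π0 s' :=
      fun s' _ => mul_nonneg ((hP s a).1 s') (by unfold Vval; exact ENNReal.toReal_nonneg)
    rw [ENNReal.ofReal_sum_of_nonneg hnn]
    exact Finset.sum_congr rfl fun s' _ => by
      rw [ENNReal.ofReal_mul ((hP s a).1 s'), hgV_eq s']
  -- the weight of reaching s at time t
  set K : ℝ≥0∞ := ∑ s₀ : S,
    ENNReal.ofReal (μ s₀) * (Phi T P π0)^[t] (fun x => if x = s then 1 else 0) s₀ with hK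
  have hK_ne_top : K ≠ ⊤ := by
    refine (ENNReal.sum_lt_top.mpr fun s₀ _ => ?_).ne
    exact (ENNReal.mul_ne_top ENNReal.ofReal_ne_top
      (Phi_iter_ne_top T P π0 _ (fun x => by split <;> simp) t s₀)).lt_top
  -- denominator
  have hD : trajMeasure T P π0 μ ({ω | stateAt ω t = s} ∩ SuccessEvent Tp)
      = K * gV T Tp P π0 s := by
    rw [trajMeasure_apply T P π0 μ hμ.1, hK, Finset.sum_mul]
    refine Finset.sum_congr rfl fun s₀ _ => ?_
    rw [mul_assoc, ← dCore_formula T Tp P π0 hP hπ0 hTp s hs t s₀]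
    congr 1
    unfold dCore
    exact tsum_congr fun l => ite_iff_eq _ _ Iff.rfl _ _
  -- numerator
  have hN : trajMeasure T P π0 μ
        (({ω | stateAt ω t = s} ∩ SuccessEvent Tp) ∩ {ω | actionAt ω t = some a})
      = K * cA := by
    rw [trajMeasure_apply T P π0 μ hμ.1, hK, Finset.sum_mul]
    refine Finset.sum_congr rfl fun s₀ _ => ?_
    rw [mul_assoc, ← nCore_formula T Tp P π0 hP hπ0 hTp s hs a t s₀]
    congr 1
    unfold nCore
    exact tsum_congr fun l => ite_iff_eq _ _ Iff.rfl _ _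
  have hK_ne_zero : K ≠ 0 := by
    intro h0
    rw [hD, h0, zero_mul] at hpos
    exact lt_irrefl _ hpos
  constructor
  · rw [ProbabilityTheory.cond_apply (by trivial) (trajMeasure T P π0 μ), hD, hN,
      ENNReal.ofReal_div_of_pos (hV0 s hs), hcA_eq, hgV_eq s,
      ENNReal.mul_inv (Or.inl hK_ne_zero) (Or.inl hK_ne_top),
      div_eq_mul_inv, mul_mul_mul_comm, ENNReal.inv_mul_cancel hK_ne_zero hK_ne_top, one_mul,
      mul_comm]
  · rfl
end

section
/- The success-conditioned policy exactly solves the trust-region problem: (i) π₊ satisfies the constraint with equality, Σ_s w(s)·χ²_s(π₊‖π0) = Σ_s w(s)·I(s); and (ii) for every family π of probability mass functions π(·|s) on A satisfying Σ_s w(s)·χ²_s(π‖π0) ≤ Σ_s w(s)·I(s), one has Σ_s w(s)·(Σ_a π(a|s)·Adv(s,a))/V(s) ≤ Σ_s w(s)·(Σ_a π₊(a|s)·Adv(s,a))/V(s) = Σ_s w(s)·I(s). -/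
/-- **Success conditioning exactly solves the trust-region problem.**
Multi-state setup: for each state `s` of a finite nonempty type `S`, `π0(·|s)` is a
strictly positive pmf on a finite nonempty action type `A`, `Q(s,·)` takes values
in `[0,1]`, `V(s) = Σ_a π0(a|s)·Q(s,a) > 0`, `Adv(s,a) = Q(s,a) − V(s)`,
`π₊(a|s) = π0(a|s)·Q(s,a)/V(s)`, `I(s) = Σ_a π0(a|s)·(Adv(s,a)/V(s))²`,
`χ²_s(π‖π0) = Σ_a π0(a|s)·(π(a|s)/π0(a|s) − 1)²`, and `w : S → ℝ` is nonnegative.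

(i) `π₊` satisfies the trust-region constraint with equality,
`Σ_s w(s)·χ²_s(π₊‖π0) = Σ_s w(s)·I(s)`; and (ii) every family `π` of pmfs
satisfying `Σ_s w(s)·χ²_s(π‖π0) ≤ Σ_s w(s)·I(s)` has
`Σ_s w(s)·(Σ_a π(a|s)·Adv(s,a))/V(s) ≤ Σ_s w(s)·(Σ_a π₊(a|s)·Adv(s,a))/V(s)
 = Σ_s w(s)·I(s)`. -/
theorem success_conditioning_solves_trust_region
    {S A : Type*} [Fintype S] [Nonempty S] [Fintype A] [Nonempty A]
    (π0 : S → A → ℝ) (hπ0pos : ∀ s a, 0 < π0 s a) (hπ0sum : ∀ s, ∑ a, π0 s a = 1)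
    (Q : S → A → ℝ) (hQ : ∀ s a, 0 ≤ Q s a ∧ Q s a ≤ 1)
    (V : S → ℝ) (hV : ∀ s, V s = ∑ a, π0 s a * Q s a) (hVpos : ∀ s, 0 < V s)
    (Adv : S → A → ℝ) (hAdv : ∀ s a, Adv s a = Q s a - V s)
    (πp : S → A → ℝ) (hπp : ∀ s a, πp s a = π0 s a * Q s a / V s)
    (I : S → ℝ) (hI : ∀ s, I s = ∑ a, π0 s a * (Adv s a / V s) ^ 2)
    (w : S → ℝ) (hw : ∀ s, 0 ≤ w s) :
    (∑ s, w s * ∑ a, π0 s a * (πp s a / π0 s a - 1) ^ 2 = ∑ s, w s * I s)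
      ∧ ∀ π : S → A → ℝ, (∀ s a, 0 ≤ π s a) → (∀ s, ∑ a, π s a = 1) →
          (∑ s, w s * ∑ a, π0 s a * (π s a / π0 s a - 1) ^ 2 ≤ ∑ s, w s * I s) →
          (∑ s, w s * ((∑ a, π s a * Adv s a) / V s)
              ≤ ∑ s, w s * ((∑ a, πp s a * Adv s a) / V s)
            ∧ ∑ s, w s * ((∑ a, πp s a * Adv s a) / V s) = ∑ s, w s * I s) := by
  have hratio : ∀ s a, πp s a / π0 s a - 1 = Adv s a / V s := by
    intro s a
    rw [hπp, hAdv]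
    have h0 := (hπ0pos s a).ne'
    have hv := (hVpos s).ne'
    field_simp
  have hchi : ∀ s, ∑ a, π0 s a * (πp s a / π0 s a - 1) ^ 2 = I s := by
    intro s; rw [hI]
    exact Finset.sum_congr rfl (fun a _ => by rw [hratio])
  have hsum0 : ∀ s, ∑ a, π0 s a * Adv s a = 0 := by
    intro s
    have h1 : ∑ a, π0 s a * Adv s a
        = (∑ a, π0 s a * Q s a) - (∑ a, π0 s a) * V s := by
      rw [Finset.sum_mul, ← Finset.sum_sub_distrib]
      exact Finset.sum_congr rfl (fun a _ => by rw [hAdv]; ring)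
    rw [h1, hπ0sum, ← hV]; ring
  have hgainp : ∀ s, (∑ a, πp s a * Adv s a) / V s = I s := by
    intro s
    have hv := (hVpos s).ne'
    have h1 : ∑ a, πp s a * Adv s a
        = (∑ a, π0 s a * Adv s a ^ 2 / V s) + ∑ a, π0 s a * Adv s a := by
      rw [← Finset.sum_add_distrib]
      apply Finset.sum_congr rfl
      intro a _
      rw [hπp]
      have : Q s a = Adv s a + V s := by rw [hAdv]; ring
      rw [this]
      field_simp
    rw [h1, hsum0, add_zero, hI, Finset.sum_div]
    apply Finset.sum_congr rfl
    intro a _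
    ring
  have key : ∀ s, w s * ((∑ a, πp s a * Adv s a) / V s) = w s * I s := by
    intro s; rw [hgainp]
  have keysum : ∑ s, w s * ((∑ a, πp s a * Adv s a) / V s) = ∑ s, w s * I s :=
    Finset.sum_congr rfl (fun s _ => key s)
  refine ⟨Finset.sum_congr rfl (fun s _ => by rw [hchi]), ?_⟩
  intro π hπpos hπsum hcon
  refine ⟨?_, keysum⟩
  rw [keysum]
  -- per-state bound: gain ≤ (χ_s + I_s)/2
  have hstate : ∀ s, (∑ a, π s a * Adv s a) / V s
      ≤ ((∑ a, π0 s a * (π s a / π0 s a - 1) ^ 2) + I s) / 2 := by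
    intro s
    have hv := (hVpos s).ne'
    have h1 : (∑ a, π s a * Adv s a) / V s
        = ∑ a, π0 s a * ((π s a / π0 s a - 1) * (Adv s a / V s)) := by
      have h2 : ∑ a, π s a * Adv s a
          = (∑ a, π0 s a * ((π s a / π0 s a - 1) * Adv s a)) + ∑ a, π0 s a * Adv s a := by
        rw [← Finset.sum_add_distrib]
        apply Finset.sum_congr rfl
        intro a _
        have h0 := (hπ0pos s a).ne'
        field_simp
        ring
      rw [h2, hsum0, add_zero, Finset.sum_div]
      apply Finset.sum_congr rfl
      intro a _
      ring
    rw [h1, hI]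
    have h3 : ∀ a ∈ Finset.univ, π0 s a * ((π s a / π0 s a - 1) * (Adv s a / V s))
        ≤ (π0 s a * (π s a / π0 s a - 1) ^ 2 + π0 s a * (Adv s a / V s) ^ 2) / 2 := by
      intro a _
      nlinarith [mul_nonneg (hπ0pos s a).le
        (sq_nonneg (π s a / π0 s a - 1 - Adv s a / V s))]
    calc ∑ a, π0 s a * ((π s a / π0 s a - 1) * (Adv s a / V s))
        ≤ ∑ a, (π0 s a * (π s a / π0 s a - 1) ^ 2 + π0 s a * (Adv s a / V s) ^ 2) / 2 :=
          Finset.sum_le_sum h3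
      _ = (∑ a, π0 s a * (π s a / π0 s a - 1) ^ 2 + ∑ a, π0 s a * (Adv s a / V s) ^ 2) / 2 := by
          rw [← Finset.sum_div, Finset.sum_add_distrib]
  calc ∑ s, w s * ((∑ a, π s a * Adv s a) / V s)
      ≤ ∑ s, w s * (((∑ a, π0 s a * (π s a / π0 s a - 1) ^ 2) + I s) / 2) := by
        apply Finset.sum_le_sum
        intro s _
        exact mul_le_mul_of_nonneg_left (hstate s) (hw s)
    _ = ((∑ s, w s * ∑ a, π0 s a * (π s a / π0 s a - 1) ^ 2) + ∑ s, w s * I s) / 2 := by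
        rw [← Finset.sum_add_distrib, Finset.sum_div]
        apply Finset.sum_congr rfl
        intro s _
        ring
    _ ≤ ∑ s, w s * I s := by linarith
end

section
/- Statewise policy improvement: for every nonterminal state s, V_{π₊}(s) ≥ V_{π0}(s)·(1 + I(s)); equivalently, (V_{π₊}(s) − V_{π0}(s))/V_{π0}(s) ≥ I(s) ≥ 0. -/
open MeasureTheory
open scoped ENNReal

variable {S A : Type*}

namespace SPI
/-! ### Auxiliary development -/


open scoped BigOperators

variable {S A : Type*}

lemma lastState_cons (s : S) (a : A) (s' : S) (l : List (A × S)) :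
    lastState (⟨s, (a, s') :: l⟩ : Traj S A) = lastState (⟨s', l⟩ : Traj S A) := rfl

lemma stateAt_nil (s : S) (t : ℕ) : stateAt (⟨s, []⟩ : Traj S A) t = s := by
  cases t <;> rfl

lemma stateAt_cons_zero (s : S) (a : A) (s' : S) (l : List (A × S)) :
    stateAt (⟨s, (a, s') :: l⟩ : Traj S A) 0 = s := rfl

lemma stateAt_cons_succ (s : S) (a : A) (s' : S) (l : List (A × S)) (t : ℕ) :
    stateAt (⟨s, (a, s') :: l⟩ : Traj S A) (t + 1) = stateAt (⟨s', l⟩ : Traj S A) t := by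
  simp [stateAt, lastState_cons]

variable [DecidableEq S] (T Tp : Finset S) (P : S → A → S → ℝ) (π : S → A → ℝ)

lemma success_iff (hTp : Tp ⊆ T) :
    ∀ (l : List (A × S)) (s : S), pathWeight T P π s l ≠ 0 →
      ((∃ t, stateAt (⟨s, l⟩ : Traj S A) t ∈ Tp) ↔ lastState (⟨s, l⟩ : Traj S A) ∈ Tp) := by
  intro l
  induction l with
  | nil =>
      intro s _
      simp [stateAt_nil, lastState]
  | cons p l ih =>
      obtain ⟨a, s'⟩ := p
      intro s hw
      rw [pathWeight] at hw
      have hsT : s ∉ T := by intro h; simp [h] at hw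
      have hw' : pathWeight T P π s' l ≠ 0 := by
        intro h; simp [h, if_neg hsT] at hw
      rw [lastState_cons]
      rw [← ih s' hw']
      constructor
      · rintro ⟨t, ht⟩
        cases t with
        | zero =>
            rw [stateAt_cons_zero] at ht
            exact absurd (hTp ht) hsT
        | succ t => exact ⟨t, by rwa [stateAt_cons_succ] at ht⟩
      · rintro ⟨t, ht⟩
        exact ⟨t + 1, by rwa [stateAt_cons_succ]⟩


variable {S A : Type*}

/-- Trajectories are pairs. -/
def trajEquiv : S × List (A × S) ≃ Traj S A :=
  ⟨fun p => ⟨p.1, p.2⟩, fun ω => (ω.init, ω.steps), fun _ => rfl, fun _ => rfl⟩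

variable [DecidableEq S] (T Tp : Finset S) (P : S → A → S → ℝ) (π : S → A → ℝ)

/-- The success-restricted path-sum value, in `ℝ≥0∞`. -/
noncomputable def Wfun (s : S) : ℝ≥0∞ :=
  ∑' l : List (A × S),
    ENNReal.ofReal (if lastState (⟨s, l⟩ : Traj S A) ∈ Tp then pathWeight T P π s l else 0)

/-- The horizon-`n` truncated success path-sum. -/
noncomputable def Wtr (n : ℕ) (s : S) : ℝ≥0∞ :=
  ∑' l : List (A × S),
    ENNReal.ofReal (if lastState (⟨s, l⟩ : Traj S A) ∈ Tp ∧ l.length ≤ n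
      then pathWeight T P π s l else 0)

lemma trajMeasure_apply (s : S) (E : Set (Traj S A)) :
    trajMeasure T P π (pointMass s) E
      = ∑' l : List (A × S),
          ENNReal.ofReal (pathWeight T P π s l) * E.indicator 1 ⟨s, l⟩ := by
  classical
  have hE : MeasurableSet E := trivial
  rw [trajMeasure, Measure.sum_apply _ hE]
  rw [← (trajEquiv (S := S) (A := A)).tsum_eq]
  have : ∀ p : S × List (A × S),
      (ENNReal.ofReal (pointMass s (trajEquiv p).init
            * pathWeight T P π (trajEquiv p).init (trajEquiv p).steps)
          • Measure.dirac (trajEquiv (S := S) (A := A) p)) E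
        = ENNReal.ofReal (pointMass s p.1 * pathWeight T P π p.1 p.2)
            * E.indicator 1 (⟨p.1, p.2⟩ : Traj S A) := by
    intro p
    rw [Measure.smul_apply, Measure.dirac_apply' _ hE]
    rfl
  rw [tsum_congr this, ENNReal.tsum_prod']
  rw [tsum_eq_single s (by
    intro b hb
    simp only [pointMass, if_neg hb]
    simp)]
  refine tsum_congr fun l => ?_
  simp [pointMass]

lemma Vval_eq (hTp : Tp ⊆ T) (s : S) : Vval T Tp P π s = (Wfun T Tp P π s).toReal := by
  rw [Vval, Wfun, trajMeasure_apply]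
  congr 1
  refine tsum_congr fun l => ?_
  by_cases hw : pathWeight T P π s l = 0
  · simp [hw]
  · have hiff := success_iff T Tp P π hTp l s hw
    by_cases hsucc : (⟨s, l⟩ : Traj S A) ∈ SuccessEvent Tp
    · have hlast : lastState (⟨s, l⟩ : Traj S A) ∈ Tp := hiff.1 hsucc
      rw [Set.indicator_of_mem hsucc, if_pos hlast]
      simp
    · have hlast : lastState (⟨s, l⟩ : Traj S A) ∉ Tp := fun h => hsucc (hiff.2 h)
      rw [Set.indicator_of_notMem hsucc, if_neg hlast]
      simp

lemma total_mass (s : S) (h1 : trajMeasure T P π (pointMass s) Set.univ = 1) :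
    ∑' l : List (A × S), ENNReal.ofReal (pathWeight T P π s l) = 1 := by
  rw [trajMeasure_apply] at h1
  simpa using h1

lemma Wfun_le_one (s : S) (h1 : trajMeasure T P π (pointMass s) Set.univ = 1) :
    Wfun T Tp P π s ≤ 1 := by
  rw [← total_mass T P π s h1, Wfun]
  refine ENNReal.tsum_le_tsum fun l => ?_
  split_ifs with h
  · exact le_rfl
  · simp
set_option linter.unusedSectionVars false

lemma tsum_list_cons (f : List (A × S) → ℝ≥0∞) (h0 : f [] = 0) :
    ∑' l : List (A × S), f l = ∑' p : (A × S) × List (A × S), f (p.1 :: p.2) := by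
  refine tsum_eq_tsum_of_ne_zero_bij (fun x => x.1.1 :: x.1.2) ?_ ?_ (fun x => rfl)
  · rintro ⟨⟨p, l⟩, hx⟩ ⟨⟨q, m⟩, hy⟩ h
    simp only [List.cons.injEq] at h
    simp [h.1, h.2]
  · rintro (_ | ⟨p, l⟩) hl
    · exact absurd h0 hl
    · exact ⟨⟨(p, l), hl⟩, rfl⟩

variable [Fintype S] [Fintype A]

lemma Wfun_succ (hTp : Tp ⊆ T) {s : S} (hs : s ∈ Tp) : Wfun T Tp P π s = 1 := by
  rw [Wfun, tsum_eq_single ([] : List (A × S))]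
  · show ENNReal.ofReal (if lastState (⟨s, []⟩ : Traj S A) ∈ Tp then _ else 0) = 1
    rw [if_pos (show lastState (⟨s, []⟩ : Traj S A) ∈ Tp from hs)]
    simp [pathWeight, hTp hs]
  · rintro (_ | ⟨p, l⟩) hl
    · exact absurd rfl hl
    · obtain ⟨a, s'⟩ := p
      simp [pathWeight, hTp hs]

lemma Wfun_fail {s : S} (hs : s ∈ T) (hs' : s ∉ Tp) : Wfun T Tp P π s = 0 := by
  rw [Wfun, ENNReal.tsum_eq_zero]
  rintro (_ | ⟨⟨a, s'⟩, l⟩)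
  · rw [if_neg (show lastState (⟨s, []⟩ : Traj S A) ∉ Tp from hs')]
    simp
  · simp [pathWeight, hs]

lemma Wtr_succ {s : S} (hTp : Tp ⊆ T) (hs : s ∈ Tp) (n : ℕ) : Wtr T Tp P π n s = 1 := by
  rw [Wtr, tsum_eq_single ([] : List (A × S))]
  · rw [if_pos ⟨(show lastState (⟨s, []⟩ : Traj S A) ∈ Tp from hs), by simp⟩]
    simp [pathWeight, hTp hs]
  · rintro (_ | ⟨⟨a, s'⟩, l⟩) hl
    · exact absurd rfl hl
    · simp [pathWeight, hTp hs]

lemma Wtr_fail {s : S} (hs : s ∈ T) (hs' : s ∉ Tp) (n : ℕ) : Wtr T Tp P π n s = 0 := by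
  rw [Wtr, ENNReal.tsum_eq_zero]
  rintro (_ | ⟨⟨a, s'⟩, l⟩)
  · rw [if_neg (by
      rintro ⟨h, -⟩
      exact hs' (show lastState (⟨s, []⟩ : Traj S A) ∈ Tp from h))]
    simp
  · simp [pathWeight, hs]

lemma Wtr_zero (hTp : Tp ⊆ T) {s : S} (hs : s ∉ T) : Wtr T Tp P π 0 s = 0 := by
  rw [Wtr, ENNReal.tsum_eq_zero]
  rintro (_ | ⟨⟨a, s'⟩, l⟩)
  · rw [if_neg (by
      rintro ⟨h, -⟩
      exact hs (hTp h))]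
    simp
  · simp

lemma Wfun_bellman (hTp : Tp ⊆ T) {s : S} (hs : s ∉ T)
    (hπ : ∀ a, 0 ≤ π s a) (hP : ∀ a s', 0 ≤ P s a s') :
    Wfun T Tp P π s
      = ∑ a : A, ∑ s' : S, ENNReal.ofReal (π s a * P s a s') * Wfun T Tp P π s' := by
  rw [Wfun, tsum_list_cons _ (by
    rw [if_neg (show lastState (⟨s, []⟩ : Traj S A) ∉ Tp from fun h => hs (hTp h))]
    simp)]
  have hterm : ∀ p : (A × S) × List (A × S),
      ENNReal.ofReal (if lastState (⟨s, p.1 :: p.2⟩ : Traj S A) ∈ Tp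
          then pathWeight T P π s (p.1 :: p.2) else 0)
        = ENNReal.ofReal (π s p.1.1 * P s p.1.1 p.1.2)
            * ENNReal.ofReal (if lastState (⟨p.1.2, p.2⟩ : Traj S A) ∈ Tp
                then pathWeight T P π p.1.2 p.2 else 0) := by
    rintro ⟨⟨a, s'⟩, l⟩
    rw [show lastState (⟨s, (a, s') :: l⟩ : Traj S A) = lastState (⟨s', l⟩ : Traj S A) from rfl]
    show ENNReal.ofReal (if _ then (if s ∈ T then 0 else π s a * P s a s' * pathWeight T P π s' l) else 0) = _
    rw [if_neg hs]
    split_ifs with h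
    · rw [ENNReal.ofReal_mul (mul_nonneg (hπ a) (hP a s'))]
    · simp
  rw [tsum_congr hterm]
  calc ∑' p : (A × S) × List (A × S), ENNReal.ofReal (π s p.1.1 * P s p.1.1 p.1.2)
          * ENNReal.ofReal (if lastState (⟨p.1.2, p.2⟩ : Traj S A) ∈ Tp
              then pathWeight T P π p.1.2 p.2 else 0)
      = ∑' (q : A × S) (l : List (A × S)), ENNReal.ofReal (π s q.1 * P s q.1 q.2)
          * ENNReal.ofReal (if lastState (⟨q.2, l⟩ : Traj S A) ∈ Tp
              then pathWeight T P π q.2 l else 0) := ENNReal.tsum_prod'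
    _ = ∑' q : A × S, ENNReal.ofReal (π s q.1 * P s q.1 q.2) * Wfun T Tp P π q.2 :=
        tsum_congr fun q => ENNReal.tsum_mul_left
    _ = ∑' (a : A) (s' : S), ENNReal.ofReal (π s a * P s a s') * Wfun T Tp P π s' :=
        ENNReal.tsum_prod'
    _ = ∑ a : A, ∑ s' : S, ENNReal.ofReal (π s a * P s a s') * Wfun T Tp P π s' := by
        rw [tsum_fintype]
        exact Finset.sum_congr rfl fun a _ => tsum_fintype _

lemma Wtr_bellman (hTp : Tp ⊆ T) {s : S} (hs : s ∉ T)
    (hπ : ∀ a, 0 ≤ π s a) (hP : ∀ a s', 0 ≤ P s a s') (n : ℕ) :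
    Wtr T Tp P π (n + 1) s
      = ∑ a : A, ∑ s' : S, ENNReal.ofReal (π s a * P s a s') * Wtr T Tp P π n s' := by
  rw [Wtr, tsum_list_cons _ (by
    rw [if_neg (by
      rintro ⟨h, -⟩
      exact hs (hTp (show lastState (⟨s, []⟩ : Traj S A) ∈ Tp from h)))]
    simp)]
  have hterm : ∀ p : (A × S) × List (A × S),
      ENNReal.ofReal (if lastState (⟨s, p.1 :: p.2⟩ : Traj S A) ∈ Tp ∧ (p.1 :: p.2).length ≤ n + 1
          then pathWeight T P π s (p.1 :: p.2) else 0)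
        = ENNReal.ofReal (π s p.1.1 * P s p.1.1 p.1.2)
            * ENNReal.ofReal (if lastState (⟨p.1.2, p.2⟩ : Traj S A) ∈ Tp ∧ p.2.length ≤ n
                then pathWeight T P π p.1.2 p.2 else 0) := by
    rintro ⟨⟨a, s'⟩, l⟩
    have hl : (lastState (⟨s, (a, s') :: l⟩ : Traj S A) ∈ Tp ∧ ((a, s') :: l).length ≤ n + 1)
        ↔ (lastState (⟨s', l⟩ : Traj S A) ∈ Tp ∧ l.length ≤ n) := by
      rw [show lastState (⟨s, (a, s') :: l⟩ : Traj S A) = lastState (⟨s', l⟩ : Traj S A) from rfl]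
      simp [Nat.succ_le_succ_iff]
    rw [if_congr hl rfl rfl]
    show ENNReal.ofReal (if _ then (if s ∈ T then 0 else π s a * P s a s' * pathWeight T P π s' l) else 0) = _
    rw [if_neg hs]
    split_ifs with h
    · rw [ENNReal.ofReal_mul (mul_nonneg (hπ a) (hP a s'))]
    · simp
  rw [tsum_congr hterm]
  calc ∑' p : (A × S) × List (A × S), ENNReal.ofReal (π s p.1.1 * P s p.1.1 p.1.2)
          * ENNReal.ofReal (if lastState (⟨p.1.2, p.2⟩ : Traj S A) ∈ Tp ∧ p.2.length ≤ n
              then pathWeight T P π p.1.2 p.2 else 0)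
      = ∑' (q : A × S) (l : List (A × S)), ENNReal.ofReal (π s q.1 * P s q.1 q.2)
          * ENNReal.ofReal (if lastState (⟨q.2, l⟩ : Traj S A) ∈ Tp ∧ l.length ≤ n
              then pathWeight T P π q.2 l else 0) := ENNReal.tsum_prod'
    _ = ∑' q : A × S, ENNReal.ofReal (π s q.1 * P s q.1 q.2) * Wtr T Tp P π n q.2 :=
        tsum_congr fun q => ENNReal.tsum_mul_left
    _ = ∑' (a : A) (s' : S), ENNReal.ofReal (π s a * P s a s') * Wtr T Tp P π n s' :=
        ENNReal.tsum_prod'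
    _ = ∑ a : A, ∑ s' : S, ENNReal.ofReal (π s a * P s a s') * Wtr T Tp P π n s' := by
        rw [tsum_fintype]
        exact Finset.sum_congr rfl fun a _ => tsum_fintype _

lemma Wtr_mono (s : S) : Monotone fun n => Wtr T Tp P π n s := by
  refine monotone_nat_of_le_succ fun n => ENNReal.tsum_le_tsum fun l => ?_
  by_cases h : lastState (⟨s, l⟩ : Traj S A) ∈ Tp ∧ l.length ≤ n
  · rw [if_pos h, if_pos ⟨h.1, h.2.trans (Nat.le_succ n)⟩]
  · rw [if_neg h]
    simp

lemma Wtr_le_Wfun (n : ℕ) (s : S) : Wtr T Tp P π n s ≤ Wfun T Tp P π s := by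
  refine ENNReal.tsum_le_tsum fun l => ?_
  by_cases h : lastState (⟨s, l⟩ : Traj S A) ∈ Tp ∧ l.length ≤ n
  · rw [if_pos h, if_pos h.1]
  · rw [if_neg h]
    simp

lemma iSup_Wtr (s : S) : ⨆ n, Wtr T Tp P π n s = Wfun T Tp P π s := by
  refine le_antisymm (iSup_le fun n => Wtr_le_Wfun T Tp P π n s) ?_
  rw [Wfun, ENNReal.tsum_eq_iSup_sum]
  refine iSup_le fun F => ?_
  set n : ℕ := F.sup List.length with hn
  refine le_trans ?_ (le_iSup _ n)
  refine le_trans (Finset.sum_le_sum fun l hl => ?_) (ENNReal.sum_le_tsum F)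
  by_cases h : lastState (⟨s, l⟩ : Traj S A) ∈ Tp
  · rw [if_pos h, if_pos ⟨h, Finset.le_sup hl⟩]
  · rw [if_neg h]
    simp

/-- Truncated value, in `ℝ`. -/
noncomputable def Vtr (n : ℕ) (s : S) : ℝ := (Wtr T Tp P π n s).toReal

lemma Vval_succ' (hTp : Tp ⊆ T) {s : S} (hs : s ∈ Tp) : Vval T Tp P π s = 1 := by
  rw [Vval_eq T Tp P π hTp, Wfun_succ T Tp P π hTp hs, ENNReal.toReal_one]

lemma Vval_fail' (hTp : Tp ⊆ T) {s : S} (hs : s ∈ T) (hs' : s ∉ Tp) :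
    Vval T Tp P π s = 0 := by
  rw [Vval_eq T Tp P π hTp, Wfun_fail T Tp P π hs hs', ENNReal.toReal_zero]

lemma Vval_nonneg (hTp : Tp ⊆ T) (s : S) : 0 ≤ Vval T Tp P π s := by
  rw [Vval_eq T Tp P π hTp]; exact ENNReal.toReal_nonneg

lemma Vtr_succ' (hTp : Tp ⊆ T) {s : S} (hs : s ∈ Tp) (n : ℕ) : Vtr T Tp P π n s = 1 := by
  rw [Vtr, Wtr_succ T Tp P π hTp hs, ENNReal.toReal_one]

lemma Vtr_fail' {s : S} (hs : s ∈ T) (hs' : s ∉ Tp) (n : ℕ) : Vtr T Tp P π n s = 0 := by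
  rw [Vtr, Wtr_fail T Tp P π hs hs', ENNReal.toReal_zero]

lemma Vtr_zero' (hTp : Tp ⊆ T) {s : S} (hs : s ∉ T) : Vtr T Tp P π 0 s = 0 := by
  rw [Vtr, Wtr_zero T Tp P π hTp hs, ENNReal.toReal_zero]

lemma Vtr_nonneg (n : ℕ) (s : S) : 0 ≤ Vtr T Tp P π n s := ENNReal.toReal_nonneg

lemma Vtr_le_Vval (hTp : Tp ⊆ T) (hfin : Wfun T Tp P π s ≠ ∞) (n : ℕ) :
    Vtr T Tp P π n s ≤ Vval T Tp P π s := by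
  rw [Vtr, Vval_eq T Tp P π hTp]
  exact ENNReal.toReal_mono hfin (Wtr_le_Wfun T Tp P π n s)

lemma Vtr_tendsto (hTp : Tp ⊆ T) (hfin : Wfun T Tp P π s ≠ ∞) :
    Filter.Tendsto (fun n => Vtr T Tp P π n s) Filter.atTop (nhds (Vval T Tp P π s)) := by
  rw [Vval_eq T Tp P π hTp]
  have h1 : Filter.Tendsto (fun n => Wtr T Tp P π n s) Filter.atTop (nhds (Wfun T Tp P π s)) := by
    rw [← iSup_Wtr T Tp P π s]
    exact tendsto_atTop_iSup (Wtr_mono T Tp P π s)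
  exact (ENNReal.tendsto_toReal hfin).comp h1

lemma Vval_bellman (hTp : Tp ⊆ T) (hfin : ∀ s', Wfun T Tp P π s' ≠ ∞) {s : S} (hs : s ∉ T)
    (hπ : ∀ a, 0 ≤ π s a) (hP : ∀ a s', 0 ≤ P s a s') :
    Vval T Tp P π s = ∑ a : A, π s a * ∑ s' : S, P s a s' * Vval T Tp P π s' := by
  rw [Vval_eq T Tp P π hTp, Wfun_bellman T Tp P π hTp hs hπ hP,
    ENNReal.toReal_sum (fun a _ => (ENNReal.sum_lt_top.2
      (fun s' _ => ENNReal.mul_lt_top ENNReal.ofReal_lt_top (hfin s').lt_top)).ne)]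
  refine Finset.sum_congr rfl fun a _ => ?_
  rw [ENNReal.toReal_sum (fun s' _ =>
    (ENNReal.mul_lt_top ENNReal.ofReal_lt_top (hfin s').lt_top).ne), Finset.mul_sum]
  refine Finset.sum_congr rfl fun s' _ => ?_
  rw [ENNReal.toReal_mul, ENNReal.toReal_ofReal (mul_nonneg (hπ a) (hP a s')),
    ← Vval_eq T Tp P π hTp]
  ring

lemma Vtr_bellman (hTp : Tp ⊆ T) (hfin : ∀ s', Wfun T Tp P π s' ≠ ∞) {s : S} (hs : s ∉ T)
    (hπ : ∀ a, 0 ≤ π s a) (hP : ∀ a s', 0 ≤ P s a s') (n : ℕ) :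
    Vtr T Tp P π (n + 1) s = ∑ a : A, π s a * ∑ s' : S, P s a s' * Vtr T Tp P π n s' := by
  have hfin' : ∀ s', Wtr T Tp P π n s' ≠ ∞ :=
    fun s' => ((Wtr_le_Wfun T Tp P π n s').trans_lt (hfin s').lt_top).ne
  rw [Vtr, Wtr_bellman T Tp P π hTp hs hπ hP n,
    ENNReal.toReal_sum (fun a _ => (ENNReal.sum_lt_top.2
      (fun s' _ => ENNReal.mul_lt_top ENNReal.ofReal_lt_top (hfin' s').lt_top)).ne)]
  refine Finset.sum_congr rfl fun a _ => ?_
  rw [ENNReal.toReal_sum (fun s' _ =>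
    (ENNReal.mul_lt_top ENNReal.ofReal_lt_top (hfin' s').lt_top).ne), Finset.mul_sum]
  refine Finset.sum_congr rfl fun s' _ => ?_
  rw [ENNReal.toReal_mul, ENNReal.toReal_ofReal (mul_nonneg (hπ a) (hP a s'))]
  show π s a * P s a s' * Vtr T Tp P π n s' = _
  ring

lemma jensen_sq {ι : Type*} [Fintype ι] (p x : ι → ℝ) (hp : ∀ i, 0 ≤ p i)
    (hp1 : ∑ i, p i = 1) : (∑ i, p i * x i) ^ 2 ≤ ∑ i, p i * x i ^ 2 := by
  have key := Finset.sum_mul_sq_le_sq_mul_sq Finset.univ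
    (fun i => Real.sqrt (p i)) (fun i => Real.sqrt (p i) * x i)
  have h1 : ∀ i : ι, Real.sqrt (p i) * (Real.sqrt (p i) * x i) = p i * x i := by
    intro i
    rw [← mul_assoc, Real.mul_self_sqrt (hp i)]
  have h2 : ∀ i : ι, Real.sqrt (p i) ^ 2 = p i := fun i => Real.sq_sqrt (hp i)
  have h3 : ∀ i : ι, (Real.sqrt (p i) * x i) ^ 2 = p i * x i ^ 2 := by
    intro i
    rw [mul_pow, h2]
  calc (∑ i, p i * x i) ^ 2
      = (∑ i, Real.sqrt (p i) * (Real.sqrt (p i) * x i)) ^ 2 := by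
        rw [Finset.sum_congr rfl fun i _ => (h1 i).symm]
    _ ≤ (∑ i, Real.sqrt (p i) ^ 2) * ∑ i, (Real.sqrt (p i) * x i) ^ 2 := key
    _ = ∑ i, p i * x i ^ 2 := by
        rw [Finset.sum_congr rfl fun i _ => h2 i,
          Finset.sum_congr rfl fun i _ => h3 i, hp1, one_mul]

lemma cs_div {ι : Type*} [Fintype ι] (p v x : ι → ℝ) (hp : ∀ i, 0 ≤ p i)
    (hv : ∀ i, 0 ≤ v i) (hxv : ∀ i, v i = 0 → x i = 0) :
    (∑ i, p i * x i) ^ 2 ≤ (∑ i, p i * v i) * ∑ i, p i * (x i ^ 2 / v i) := by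
  have key := Finset.sum_mul_sq_le_sq_mul_sq Finset.univ
    (fun i => Real.sqrt (p i * v i))
    (fun i => if v i = 0 then 0 else Real.sqrt (p i) * x i / Real.sqrt (v i))
  have h1 : ∀ i : ι, Real.sqrt (p i * v i)
      * (if v i = 0 then 0 else Real.sqrt (p i) * x i / Real.sqrt (v i)) = p i * x i := by
    intro i
    by_cases hvi : v i = 0
    · rw [if_pos hvi, hxv i hvi, mul_zero, mul_zero]
    · rw [if_neg hvi]
      have hvpos : 0 < v i := lt_of_le_of_ne (hv i) (Ne.symm hvi)
      have hsv : Real.sqrt (v i) ≠ 0 := by positivity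
      rw [Real.sqrt_mul (hp i)]
      field_simp
      rw [Real.sq_sqrt (hp i)]
      ring
  have h2 : ∀ i : ι, Real.sqrt (p i * v i) ^ 2 = p i * v i :=
    fun i => Real.sq_sqrt (mul_nonneg (hp i) (hv i))
  have h3 : ∀ i : ι, (if v i = 0 then 0 else Real.sqrt (p i) * x i / Real.sqrt (v i)) ^ 2
      = p i * (x i ^ 2 / v i) := by
    intro i
    by_cases hvi : v i = 0
    · rw [if_pos hvi, hxv i hvi, hvi]
      simp
    · rw [if_neg hvi]
      have hvpos : 0 < v i := lt_of_le_of_ne (hv i) (Ne.symm hvi)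
      rw [div_pow, mul_pow, Real.sq_sqrt (hp i), Real.sq_sqrt (hv i)]
      ring
  calc (∑ i, p i * x i) ^ 2
      = (∑ i, Real.sqrt (p i * v i)
          * (if v i = 0 then 0 else Real.sqrt (p i) * x i / Real.sqrt (v i))) ^ 2 := by
        rw [Finset.sum_congr rfl fun i _ => (h1 i).symm]
    _ ≤ (∑ i, Real.sqrt (p i * v i) ^ 2)
          * ∑ i, (if v i = 0 then 0 else Real.sqrt (p i) * x i / Real.sqrt (v i)) ^ 2 := key
    _ = (∑ i, p i * v i) * ∑ i, p i * (x i ^ 2 / v i) := by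
        rw [Finset.sum_congr rfl fun i _ => h2 i, Finset.sum_congr rfl fun i _ => h3 i]

end SPI
/-- **Statewise policy improvement.**
Episodic-MDP setup: `S` finite with terminal set `𝒯 = 𝒯₊ ∪ 𝒯₋` (disjoint), `A`
finite nonempty, transition kernel `P` (a pmf in its last argument) absorbing on
`𝒯`, every Markov policy reaching `𝒯` almost surely from every state, and
behavior policy `π0` with `V_{π0}(s) > 0` at every nonterminal `s`.

For every nonterminal state `s`, `V_{π₊}(s) ≥ V_{π0}(s)·(1 + I(s))`;
equivalently, `(V_{π₊}(s) − V_{π0}(s))/V_{π0}(s) ≥ I(s) ≥ 0`. -/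
theorem statewise_policy_improvement
    {S A : Type*} [Fintype S] [DecidableEq S] [Fintype A] [Nonempty A]
    (T Tp Tm : Finset S) (hpart : Tp ∪ Tm = T) (hdisj : Disjoint Tp Tm)
    (P : S → A → S → ℝ) (hP : ∀ s a, IsPMFOn (P s a))
    (habs : ∀ s ∈ T, ∀ a, P s a s = 1)
    (hterm : ∀ π : S → A → ℝ, (∀ s ∉ T, IsPMFOn (π s)) →
      ∀ s : S, trajMeasure T P π (pointMass s) Set.univ = 1)
    (π0 : S → A → ℝ) (hπ0 : ∀ s ∉ T, IsPMFOn (π0 s))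
    (hV0 : ∀ s ∉ T, 0 < Vval T Tp P π0 s) :
    ∀ s ∉ T,
      Vval T Tp P (piPlus T Tp P π0) s
          ≥ Vval T Tp P π0 s * (1 + influence T Tp P π0 s)
      ∧ (Vval T Tp P (piPlus T Tp P π0) s - Vval T Tp P π0 s) / Vval T Tp P π0 s
          ≥ influence T Tp P π0 s
      ∧ influence T Tp P π0 s ≥ 0 := by
  classical
  open SPI in
  intro s hs
  set πp := piPlus T Tp P π0 with hπp_def
  have hTp : Tp ⊆ T := hpart ▸ Finset.subset_union_left
  have hPnn : ∀ s a s', 0 ≤ P s a s' := fun s a s' => (hP s a).1 s'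
  have hπ0nn : ∀ s ∉ T, ∀ a, 0 ≤ π0 s a := fun s hs a => (hπ0 s hs).1 a
  have hfin0 : ∀ s', SPI.Wfun T Tp P π0 s' ≠ ∞ := fun s' =>
    ((SPI.Wfun_le_one T Tp P π0 s' (hterm π0 hπ0 s')).trans_lt ENNReal.one_lt_top).ne
  have hV0nn : ∀ s', 0 ≤ Vval T Tp P π0 s' := SPI.Vval_nonneg T Tp P π0 hTp
  have hQnn : ∀ s' a, 0 ≤ Qval T Tp P π0 s' a := by
    intro s' a
    refine Finset.sum_nonneg fun s'' _ => mul_nonneg (hPnn s' a s'') (hV0nn s'')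
  have hB0 : ∀ s' ∉ T, Vval T Tp P π0 s' = ∑ a, π0 s' a * Qval T Tp P π0 s' a := by
    intro s' hs'
    exact SPI.Vval_bellman T Tp P π0 hTp hfin0 hs' (hπ0nn s' hs') (fun a s'' => hPnn s' a s'')
  have hπp_pmf : ∀ s' ∉ T, IsPMFOn (πp s') := by
    intro s' hs'
    constructor
    · intro a
      exact div_nonneg (mul_nonneg (hπ0nn s' hs' a) (hQnn s' a)) (hV0 s' hs').le
    · rw [hπp_def]
      simp only [piPlus]
      rw [← Finset.sum_div, ← hB0 s' hs', div_self (hV0 s' hs').ne']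
  have hπpnn : ∀ s' ∉ T, ∀ a, 0 ≤ πp s' a := fun s' hs' a => (hπp_pmf s' hs').1 a
  have hfinp : ∀ s', SPI.Wfun T Tp P πp s' ≠ ∞ := fun s' =>
    ((SPI.Wfun_le_one T Tp P πp s' (hterm πp hπp_pmf s')).trans_lt ENNReal.one_lt_top).ne
  -- key one-step estimate
  have hstep : ∀ n : ℕ,
      (∀ s', SPI.Vtr T Tp P π0 n s' ^ 2 ≤ Vval T Tp P π0 s' * SPI.Vtr T Tp P πp n s') →
      ∀ s' ∉ T,
        ∑ a, π0 s' a * (∑ s'', P s' a s'' * SPI.Vtr T Tp P π0 n s'') ^ 2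
          ≤ Vval T Tp P π0 s' * SPI.Vtr T Tp P πp (n + 1) s' := by
    intro n hn s' hs'
    have hx0 : ∀ s'', Vval T Tp P π0 s'' = 0 → SPI.Vtr T Tp P π0 n s'' = 0 := by
      intro s'' h0
      have h1 := SPI.Vtr_le_Vval T Tp P π0 hTp (hfin0 s'') n
      have h2 := SPI.Vtr_nonneg T Tp P π0 n s''
      linarith [h1.trans_eq h0]
    have hVp_ge : ∀ s'',
        SPI.Vtr T Tp P π0 n s'' ^ 2 / Vval T Tp P π0 s'' ≤ SPI.Vtr T Tp P πp n s'' := by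
      intro s''
      rcases eq_or_lt_of_le (hV0nn s'') with h0 | hpos
      · rw [hx0 s'' h0.symm]
        simpa using SPI.Vtr_nonneg T Tp P πp n s''
      · rw [div_le_iff₀ hpos]
        calc SPI.Vtr T Tp P π0 n s'' ^ 2
            ≤ Vval T Tp P π0 s'' * SPI.Vtr T Tp P πp n s'' := hn s''
          _ = SPI.Vtr T Tp P πp n s'' * Vval T Tp P π0 s'' := mul_comm _ _
    rw [SPI.Vtr_bellman T Tp P πp hTp hfinp hs' (hπpnn s' hs') (fun a s'' => hPnn s' a s'') n,
      Finset.mul_sum]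
    refine Finset.sum_le_sum fun a _ => ?_
    have hcs := SPI.cs_div (P s' a) (Vval T Tp P π0) (SPI.Vtr T Tp P π0 n)
      (hPnn s' a) hV0nn hx0
    calc π0 s' a * (∑ s'', P s' a s'' * SPI.Vtr T Tp P π0 n s'') ^ 2
        ≤ π0 s' a * ((∑ s'', P s' a s'' * Vval T Tp P π0 s'')
            * ∑ s'', P s' a s'' * (SPI.Vtr T Tp P π0 n s'' ^ 2 / Vval T Tp P π0 s'')) :=
          mul_le_mul_of_nonneg_left hcs (hπ0nn s' hs' a)
      _ ≤ π0 s' a * ((∑ s'', P s' a s'' * Vval T Tp P π0 s'')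
            * ∑ s'', P s' a s'' * SPI.Vtr T Tp P πp n s'') := by
          refine mul_le_mul_of_nonneg_left ?_ (hπ0nn s' hs' a)
          refine mul_le_mul_of_nonneg_left ?_ (hQnn s' a)
          exact Finset.sum_le_sum fun s'' _ =>
            mul_le_mul_of_nonneg_left (hVp_ge s'') (hPnn s' a s'')
      _ = Vval T Tp P π0 s' * (πp s' a * ∑ s'', P s' a s'' * SPI.Vtr T Tp P πp n s'') := by
          rw [hπp_def]
          simp only [piPlus, Qval]
          field_simp
          rw [mul_div_cancel_right₀ _ (hV0 s' hs').ne']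
  -- the inductive claim
  have hclaim : ∀ n s',
      SPI.Vtr T Tp P π0 n s' ^ 2 ≤ Vval T Tp P π0 s' * SPI.Vtr T Tp P πp n s' := by
    intro n
    induction n with
    | zero =>
        intro s'
        by_cases h1 : s' ∈ Tp
        · rw [SPI.Vtr_succ' T Tp P π0 hTp h1, SPI.Vtr_succ' T Tp P πp hTp h1,
            SPI.Vval_succ' T Tp P π0 hTp h1]
          norm_num
        · by_cases h2 : s' ∈ T
          · rw [SPI.Vtr_fail' T Tp P π0 h2 h1]
            simpa using mul_nonneg (hV0nn s') (SPI.Vtr_nonneg T Tp P πp 0 s')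
          · rw [SPI.Vtr_zero' T Tp P π0 hTp h2]
            simpa using mul_nonneg (hV0nn s') (SPI.Vtr_nonneg T Tp P πp 0 s')
    | succ n ih =>
        intro s'
        by_cases h1 : s' ∈ Tp
        · rw [SPI.Vtr_succ' T Tp P π0 hTp h1, SPI.Vtr_succ' T Tp P πp hTp h1,
            SPI.Vval_succ' T Tp P π0 hTp h1]
          norm_num
        · by_cases h2 : s' ∈ T
          · rw [SPI.Vtr_fail' T Tp P π0 h2 h1]
            simpa using mul_nonneg (hV0nn s') (SPI.Vtr_nonneg T Tp P πp (n + 1) s')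
          · have hbell := SPI.Vtr_bellman T Tp P π0 hTp hfin0 h2 (hπ0nn s' h2)
              (fun a s'' => hPnn s' a s'') n
            rw [hbell]
            refine le_trans (SPI.jensen_sq (π0 s') _ (hπ0nn s' h2) (hπ0 s' h2).2) ?_
            exact hstep n ih s' h2
  -- pass to the limit
  have hkey : ∀ n : ℕ,
      ∑ a, π0 s a * (∑ s'', P s a s'' * SPI.Vtr T Tp P π0 n s'') ^ 2
        ≤ Vval T Tp P π0 s * Vval T Tp P πp s := by
    intro n
    refine le_trans (hstep n (hclaim n) s hs) ?_
    exact mul_le_mul_of_nonneg_left (SPI.Vtr_le_Vval T Tp P πp hTp (hfinp s) (n + 1))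
      (hV0nn s)
  have hlim : Filter.Tendsto
      (fun n => ∑ a, π0 s a * (∑ s'', P s a s'' * SPI.Vtr T Tp P π0 n s'') ^ 2)
      Filter.atTop (nhds (∑ a, π0 s a * Qval T Tp P π0 s a ^ 2)) := by
    refine tendsto_finset_sum _ fun a _ => ?_
    refine Filter.Tendsto.const_mul _ (Filter.Tendsto.pow ?_ 2)
    refine tendsto_finset_sum _ fun s'' _ => ?_
    exact Filter.Tendsto.const_mul _ (SPI.Vtr_tendsto T Tp P π0 hTp (hfin0 s''))
  have hfinal : ∑ a, π0 s a * Qval T Tp P π0 s a ^ 2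
      ≤ Vval T Tp P π0 s * Vval T Tp P πp s :=
    le_of_tendsto hlim (Filter.Eventually.of_forall hkey)
  -- algebra
  have hV0pos := hV0 s hs
  have hI0 : 0 ≤ influence T Tp P π0 s := by
    refine Finset.sum_nonneg fun a _ => mul_nonneg (hπ0nn s hs a) (sq_nonneg _)
  have hsum : ∑ a, π0 s a * Qval T Tp P π0 s a ^ 2
      = Vval T Tp P π0 s ^ 2 * (1 + influence T Tp P π0 s) := by
    have e1 : ∑ a, π0 s a * (Qval T Tp P π0 s a - Vval T Tp P π0 s) ^ 2
        = ∑ a, π0 s a * Qval T Tp P π0 s a ^ 2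
          - 2 * Vval T Tp P π0 s * ∑ a, π0 s a * Qval T Tp P π0 s a
          + Vval T Tp P π0 s ^ 2 * ∑ a, π0 s a := by
      rw [Finset.mul_sum, Finset.mul_sum, ← Finset.sum_sub_distrib, ← Finset.sum_add_distrib]
      exact Finset.sum_congr rfl fun a _ => by ring
    rw [← hB0 s hs, (hπ0 s hs).2] at e1
    have e2 : influence T Tp P π0 s
        = (∑ a, π0 s a * (Qval T Tp P π0 s a - Vval T Tp P π0 s) ^ 2)
            / Vval T Tp P π0 s ^ 2 := by
      simp only [influence]
      rw [Finset.sum_div]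
      refine Finset.sum_congr rfl fun a _ => ?_
      rw [div_pow, mul_div_assoc]
    rw [e2, e1]
    field_simp
    ring
  have hmain : Vval T Tp P π0 s * (1 + influence T Tp P π0 s) ≤ Vval T Tp P πp s := by
    have h1 : Vval T Tp P π0 s * (Vval T Tp P π0 s * (1 + influence T Tp P π0 s))
        ≤ Vval T Tp P π0 s * Vval T Tp P πp s := by
      calc Vval T Tp P π0 s * (Vval T Tp P π0 s * (1 + influence T Tp P π0 s))
          = Vval T Tp P π0 s ^ 2 * (1 + influence T Tp P π0 s) := by ring
        _ = ∑ a, π0 s a * Qval T Tp P π0 s a ^ 2 := hsum.symm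
        _ ≤ Vval T Tp P π0 s * Vval T Tp P πp s := hfinal
    exact le_of_mul_le_mul_left h1 hV0pos
  refine ⟨hmain, ?_, hI0⟩
  rw [ge_iff_le, le_div_iff₀ hV0pos]
  nlinarith [hmain]
end

section
/- Success conditioning never degrades performance: ρ(π₊) ≥ ρ(π0), where ρ(π) := ℙ_{π,μ}(∃ t, Xₜ ∈ 𝒯₊). -/
open MeasureTheory
open scoped ENNReal

variable {S A : Type*}

/-! ### Auxiliary development for the proof -/

set_option linter.unusedSectionVars false

namespace SCAux

theorem tsum_list' {β : Type*} (f : List β → ℝ≥0∞) :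
    ∑' l, f l = f [] + ∑' x : β × List β, f (x.1 :: x.2) := by
  classical
  rw [ENNReal.tsum_eq_add_tsum_ite ([] : List β)]
  congr 1
  have hinj : Function.Injective (fun x : β × List β => x.1 :: x.2) := by
    rintro ⟨a, l⟩ ⟨b, m⟩ h; simp_all
  have hs : Function.support (fun l => if l = [] then 0 else f l) ⊆
      Set.range (fun x : β × List β => x.1 :: x.2) := by
    intro l hl
    simp only [Function.mem_support, ne_eq, ite_eq_left_iff, not_forall] at hl
    obtain ⟨h, -⟩ := hl
    match l, h with
    | a :: m, _ => exact ⟨(a, m), rfl⟩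
  have h1 := hinj.tsum_eq (f := fun l => if l = [] then 0 else f l) hs
  have h2 : ∑' (c : β × List β), (fun l => if l = [] then 0 else f l) (c.1 :: c.2)
      = ∑' x : β × List β, f (x.1 :: x.2) := tsum_congr fun x => by simp
  have h3 : (∑' (x : List β), @ite _ (x = []) (Classical.propDecidable _) 0 (f x))
      = ∑' (b : List β), (fun l => if l = [] then 0 else f l) b :=
    tsum_congr fun l => by by_cases h : l = [] <;> simp [h]
  exact h3.trans (h1.symm.trans h2)

variable {S A : Type*} [Fintype S] [DecidableEq S] [Fintype A]

theorem measurable_traj (E : Set (Traj S A)) : MeasurableSet E := trivial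

def trajEquiv : S × List (A × S) ≃ Traj S A :=
  ⟨fun p => ⟨p.1, p.2⟩, fun ω => (ω.init, ω.steps), fun ⟨s, l⟩ => rfl, fun ⟨s, l⟩ => rfl⟩

theorem tsum_traj (f : Traj S A → ℝ≥0∞) :
    ∑' ω : Traj S A, f ω = ∑' s : S, ∑' l : List (A × S), f ⟨s, l⟩ := by
  rw [← (trajEquiv (S := S) (A := A)).tsum_eq f]
  exact ENNReal.tsum_prod (f := fun s l => f ⟨s, l⟩)

theorem pathWeight_nil (T : Finset S) (P : S → A → S → ℝ) (π : S → A → ℝ) (s : S) :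
    pathWeight T P π s [] = if s ∈ T then 1 else 0 := rfl

theorem pathWeight_cons (T : Finset S) (P : S → A → S → ℝ) (π : S → A → ℝ)
    (s : S) (a : A) (s' : S) (l : List (A × S)) :
    pathWeight T P π s ((a, s') :: l)
      = if s ∈ T then 0 else π s a * P s a s' * pathWeight T P π s' l := rfl

theorem stateAt_nil (s : S) (t : ℕ) : stateAt (⟨s, []⟩ : Traj S A) t = s := by
  cases t <;> rfl

theorem stateAt_cons_succ (s : S) (a : A) (s' : S) (l : List (A × S)) (t : ℕ) :
    stateAt (⟨s, (a, s') :: l⟩ : Traj S A) (t + 1) = stateAt ⟨s', l⟩ t := rfl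

theorem success_nil {Tp : Finset S} {s : S} :
    (⟨s, []⟩ : Traj S A) ∈ SuccessEvent Tp ↔ s ∈ Tp := by
  constructor
  · rintro ⟨t, ht⟩; rwa [stateAt_nil] at ht
  · intro h; exact ⟨0, h⟩

theorem success_cons {Tp : Finset S} {s : S} {a : A} {s' : S} {l : List (A × S)} :
    (⟨s, (a, s') :: l⟩ : Traj S A) ∈ SuccessEvent Tp
      ↔ s ∈ Tp ∨ (⟨s', l⟩ : Traj S A) ∈ SuccessEvent Tp := by
  constructor
  · rintro ⟨t, ht⟩
    cases t with
    | zero => exact Or.inl ht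
    | succ t => exact Or.inr ⟨t, by rwa [stateAt_cons_succ] at ht⟩
  · rintro (h | ⟨t, ht⟩)
    · exact ⟨0, h⟩
    · exact ⟨t + 1, by rwa [stateAt_cons_succ]⟩

/-- The success weight from a given start state. -/
noncomputable def sucWt (T Tp : Finset S) (P : S → A → S → ℝ) (π : S → A → ℝ) (s : S) : ℝ≥0∞ :=
  ∑' l : List (A × S),
    Set.indicator (SuccessEvent Tp)
      (fun ω : Traj S A => ENNReal.ofReal (pathWeight T P π ω.init ω.steps)) ⟨s, l⟩

/-- The total weight from a given start state. -/
noncomputable def totWt (T : Finset S) (P : S → A → S → ℝ) (π : S → A → ℝ) (s : S) : ℝ≥0∞ :=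
  ∑' l : List (A × S), ENNReal.ofReal (pathWeight T P π s l)

theorem trajMeasure_apply (T : Finset S) (P : S → A → S → ℝ) (π : S → A → ℝ)
    (μ : S → ℝ) (E : Set (Traj S A)) :
    trajMeasure T P π μ E
      = ∑' ω : Traj S A,
          Set.indicator E
            (fun ω => ENNReal.ofReal (μ ω.init * pathWeight T P π ω.init ω.steps)) ω := by
  rw [trajMeasure, Measure.sum_apply _ (measurable_traj E)]
  refine tsum_congr fun ω => ?_
  rw [Measure.smul_apply, Measure.dirac_apply' _ (measurable_traj E), smul_eq_mul]
  by_cases h : ω ∈ E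
  · simp [Set.indicator_of_mem h]
  · simp [Set.indicator_of_notMem h]

theorem trajMeasure_success (T Tp : Finset S) (P : S → A → S → ℝ) (π : S → A → ℝ)
    (μ : S → ℝ) (hμ : ∀ s, 0 ≤ μ s) :
    trajMeasure T P π μ (SuccessEvent Tp)
      = ∑' s : S, ENNReal.ofReal (μ s) * sucWt T Tp P π s := by
  rw [trajMeasure_apply, tsum_traj]
  refine tsum_congr fun s => ?_
  rw [sucWt, ← ENNReal.tsum_mul_left]
  refine tsum_congr fun l => ?_
  by_cases h : (⟨s, l⟩ : Traj S A) ∈ SuccessEvent Tp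
  · rw [Set.indicator_of_mem h, Set.indicator_of_mem h]
    exact ENNReal.ofReal_mul (hμ s)
  · rw [Set.indicator_of_notMem h, Set.indicator_of_notMem h, mul_zero]

theorem pointMass_nonneg (s u : S) : 0 ≤ pointMass s u := by
  by_cases h : u = s <;> simp [pointMass, h]

theorem pointMass_success (T Tp : Finset S) (P : S → A → S → ℝ) (π : S → A → ℝ) (s : S) :
    trajMeasure T P π (pointMass s) (SuccessEvent Tp) = sucWt T Tp P π s := by
  rw [trajMeasure_success T Tp P π _ (pointMass_nonneg s), tsum_fintype]
  have h : ∀ u : S, ENNReal.ofReal (pointMass s u) * sucWt T Tp P π u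
      = if u = s then sucWt T Tp P π u else 0 := fun u => by
    by_cases h : u = s <;> simp [pointMass, h]
  rw [Finset.sum_congr rfl fun u _ => h u]
  simp

theorem pointMass_univ (T : Finset S) (P : S → A → S → ℝ) (π : S → A → ℝ) (s : S) :
    trajMeasure T P π (pointMass s) Set.univ = totWt T P π s := by
  rw [trajMeasure_apply, tsum_traj]
  simp only [Set.indicator_univ]
  rw [tsum_fintype]
  have h : ∀ u : S, (∑' l : List (A × S),
        ENNReal.ofReal (pointMass s u * pathWeight T P π u l))
      = if u = s then totWt T P π u else 0 := fun u => by
    by_cases h : u = s <;> simp [pointMass, h, totWt]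
  rw [Finset.sum_congr rfl fun u _ => h u]
  simp

theorem Vval_eq (T Tp : Finset S) (P : S → A → S → ℝ) (π : S → A → ℝ) (s : S) :
    Vval T Tp P π s = (sucWt T Tp P π s).toReal := by
  rw [Vval, pointMass_success]

/-- Generic head-splitting for tsums over lists of steps. -/
theorem tsum_cons_split (F G : S → List (A × S) → ℝ≥0∞) (c : A → S → ℝ≥0∞) (s : S)
    (hcons : ∀ a s' l, F s ((a, s') :: l) = c a s' * G s' l) :
    ∑' l, F s l = F s [] + ∑ a : A, ∑ s' : S, c a s' * ∑' l, G s' l := by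
  rw [tsum_list' (f := F s)]
  congr 1
  calc ∑' x : (A × S) × List (A × S), F s (x.1 :: x.2)
      = ∑' x : (A × S) × List (A × S), c x.1.1 x.1.2 * G x.1.2 x.2 :=
        tsum_congr fun ⟨⟨a, s'⟩, l⟩ => hcons a s' l
    _ = ∑' p : A × S, ∑' l, c p.1 p.2 * G p.2 l :=
        ENNReal.tsum_prod (f := fun (p : A × S) l => c p.1 p.2 * G p.2 l)
    _ = ∑' p : A × S, c p.1 p.2 * ∑' l, G p.2 l :=
        tsum_congr fun p => ENNReal.tsum_mul_left
    _ = ∑ p : A × S, c p.1 p.2 * ∑' l, G p.2 l := tsum_fintype _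
    _ = ∑ a : A, ∑ s' : S, c a s' * ∑' l, G s' l := Fintype.sum_prod_type _

section Rec

variable (T Tp : Finset S) (P : S → A → S → ℝ) (π : S → A → ℝ)

/-- Abbreviation for the success-indicator weight function. -/
noncomputable def sWt (s : S) (l : List (A × S)) : ℝ≥0∞ :=
  Set.indicator (SuccessEvent Tp)
    (fun ω : Traj S A => ENNReal.ofReal (pathWeight T P π ω.init ω.steps)) ⟨s, l⟩

theorem sucWt_def (s : S) : sucWt T Tp P π s = ∑' l, sWt T Tp P π s l := rfl

theorem sWt_cons_mem {s : S} {a : A} {s' : S} {l : List (A × S)} (hsTp : s ∉ Tp) :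
    sWt T Tp P π s ((a, s') :: l)
      = ENNReal.ofReal (pathWeight T P π s ((a, s') :: l))
          * Set.indicator (SuccessEvent Tp) (fun _ => 1) (⟨s', l⟩ : Traj S A) := by
  have hmem : ((⟨s, (a, s') :: l⟩ : Traj S A) ∈ SuccessEvent Tp)
      ↔ (⟨s', l⟩ : Traj S A) ∈ SuccessEvent Tp := by
    rw [success_cons]; simp [hsTp]
  by_cases h : (⟨s', l⟩ : Traj S A) ∈ SuccessEvent Tp
  · rw [sWt, Set.indicator_of_mem (hmem.mpr h), Set.indicator_of_mem h, mul_one]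
  · rw [sWt, Set.indicator_of_notMem (fun hc => h (hmem.mp hc)),
      Set.indicator_of_notMem h, mul_zero]

theorem sucWt_term_cons (s : S) (hs : s ∈ T) (a : A) (s' : S) (l : List (A × S)) :
    sWt T Tp P π s ((a, s') :: l) = 0 := by
  by_cases h : (⟨s, (a, s') :: l⟩ : Traj S A) ∈ SuccessEvent Tp
  · rw [sWt, Set.indicator_of_mem h]
    simp [pathWeight_cons, hs]
  · rw [sWt, Set.indicator_of_notMem h]

theorem sucWt_Tp (s : S) (hs : s ∈ T) (hsp : s ∈ Tp) : sucWt T Tp P π s = 1 := by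
  have h := tsum_cons_split (sWt T Tp P π) (sWt T Tp P π) (fun _ _ => 0) s
    (fun a s' l => by rw [sucWt_term_cons T Tp P π s hs, zero_mul])
  calc sucWt T Tp P π s
      = sWt T Tp P π s [] + ∑ a : A, ∑ s' : S, (0 : ℝ≥0∞) * ∑' l, sWt T Tp P π s' l := h
    _ = 1 := by
        simp only [zero_mul, Finset.sum_const_zero, add_zero]
        rw [sWt, Set.indicator_of_mem (success_nil.mpr hsp)]
        simp [pathWeight_nil, hs]

theorem sucWt_Tm (s : S) (hs : s ∈ T) (hsp : s ∉ Tp) : sucWt T Tp P π s = 0 := by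
  have h := tsum_cons_split (sWt T Tp P π) (sWt T Tp P π) (fun _ _ => 0) s
    (fun a s' l => by rw [sucWt_term_cons T Tp P π s hs, zero_mul])
  calc sucWt T Tp P π s
      = sWt T Tp P π s [] + ∑ a : A, ∑ s' : S, (0 : ℝ≥0∞) * ∑' l, sWt T Tp P π s' l := h
    _ = 0 := by
        simp only [zero_mul, Finset.sum_const_zero, add_zero]
        rw [sWt, Set.indicator_of_notMem (fun h => hsp (success_nil.mp h))]

theorem sucWt_nonterm (hTp : Tp ⊆ T) {s : S} (hs : s ∉ T)
    (hπ : ∀ a, 0 ≤ π s a) (hP : ∀ a s', 0 ≤ P s a s') :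
    sucWt T Tp P π s
      = ∑ a : A, ∑ s' : S, ENNReal.ofReal (π s a * P s a s') * sucWt T Tp P π s' := by
  have hsTp : s ∉ Tp := fun h => hs (hTp h)
  have hcons : ∀ (a : A) (s' : S) (l : List (A × S)),
      sWt T Tp P π s ((a, s') :: l)
        = ENNReal.ofReal (π s a * P s a s') * sWt T Tp P π s' l := by
    intro a s' l
    rw [sWt_cons_mem T Tp P π hsTp]
    have hpw : pathWeight T P π s ((a, s') :: l)
        = π s a * P s a s' * pathWeight T P π s' l := by
      rw [pathWeight_cons, if_neg hs]
    rw [hpw, ENNReal.ofReal_mul (mul_nonneg (hπ a) (hP a s')), mul_assoc]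
    congr 1
    by_cases h : (⟨s', l⟩ : Traj S A) ∈ SuccessEvent Tp
    · rw [Set.indicator_of_mem h, sWt, Set.indicator_of_mem h, mul_one]
    · rw [Set.indicator_of_notMem h, sWt, Set.indicator_of_notMem h, mul_zero]
  have h := tsum_cons_split (sWt T Tp P π) (sWt T Tp P π)
    (fun a s' => ENNReal.ofReal (π s a * P s a s')) s hcons
  calc sucWt T Tp P π s
      = sWt T Tp P π s []
          + ∑ a : A, ∑ s' : S, ENNReal.ofReal (π s a * P s a s') * ∑' l, sWt T Tp P π s' l := h
    _ = ∑ a : A, ∑ s' : S, ENNReal.ofReal (π s a * P s a s') * sucWt T Tp P π s' := by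
        rw [sWt, Set.indicator_of_notMem (fun h => hsTp (success_nil.mp h)), zero_add]
        rfl

theorem totWt_def (s : S) :
    totWt T P π s = ∑' l, (fun u l => ENNReal.ofReal (pathWeight T P π u l)) s l := rfl

theorem totWt_term (s : S) (hs : s ∈ T) : totWt T P π s = 1 := by
  have h := tsum_cons_split (fun u l => ENNReal.ofReal (pathWeight T P π u l))
    (fun u l => ENNReal.ofReal (pathWeight T P π u l)) (fun _ _ => 0) s
    (fun a s' l => by simp [pathWeight_cons, hs])
  calc totWt T P π s
      = ENNReal.ofReal (pathWeight T P π s [])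
          + ∑ a : A, ∑ s' : S, (0 : ℝ≥0∞) * ∑' l, ENNReal.ofReal (pathWeight T P π s' l) := h
    _ = 1 := by simp [pathWeight_nil, hs]

theorem totWt_nonterm {s : S} (hs : s ∉ T) (hπ : ∀ a, 0 ≤ π s a)
    (hP : ∀ a s', 0 ≤ P s a s') :
    totWt T P π s
      = ∑ a : A, ∑ s' : S, ENNReal.ofReal (π s a * P s a s') * totWt T P π s' := by
  have h := tsum_cons_split (fun u l => ENNReal.ofReal (pathWeight T P π u l))
    (fun u l => ENNReal.ofReal (pathWeight T P π u l))
    (fun a s' => ENNReal.ofReal (π s a * P s a s')) s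
    (fun a s' l => by
      show ENNReal.ofReal (pathWeight T P π s ((a, s') :: l)) = _
      rw [pathWeight_cons, if_neg hs, ENNReal.ofReal_mul (mul_nonneg (hπ a) (hP a s'))])
  calc totWt T P π s
      = ENNReal.ofReal (pathWeight T P π s [])
          + ∑ a : A, ∑ s' : S, ENNReal.ofReal (π s a * P s a s')
              * ∑' l, ENNReal.ofReal (pathWeight T P π s' l) := h
    _ = ∑ a : A, ∑ s' : S, ENNReal.ofReal (π s a * P s a s') * totWt T P π s' := by
        rw [pathWeight_nil, if_neg hs, ENNReal.ofReal_zero, zero_add]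
        rfl

theorem sucWt_le_totWt (s : S) : sucWt T Tp P π s ≤ totWt T P π s := by
  refine Summable.tsum_le_tsum (fun l => ?_) ENNReal.summable ENNReal.summable
  by_cases h : (⟨s, l⟩ : Traj S A) ∈ SuccessEvent Tp
  · rw [Set.indicator_of_mem h]
  · rw [Set.indicator_of_notMem h]; exact zero_le

end Rec

section Main

variable (T Tp : Finset S) (P : S → A → S → ℝ) (π0 : S → A → ℝ)

theorem Vval_nonneg (π : S → A → ℝ) (s : S) : 0 ≤ Vval T Tp P π s := by
  rw [Vval_eq]; exact ENNReal.toReal_nonneg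

theorem Qval_nonneg (hP : ∀ s a, IsPMFOn (P s a)) (π : S → A → ℝ) (s : S) (a : A) :
    0 ≤ Qval T Tp P π s a :=
  Finset.sum_nonneg fun s' _ => mul_nonneg ((hP s a).1 s') (Vval_nonneg T Tp P π s')

theorem sucWt_ne_top (htot : ∀ s, totWt T P π0 s = 1) (s : S) :
    sucWt T Tp P π0 s ≠ ⊤ := by
  refine ne_top_of_le_ne_top ?_ (sucWt_le_totWt T Tp P π0 s)
  rw [htot s]; exact ENNReal.one_ne_top

theorem bellman0 (hTp : Tp ⊆ T) (hP : ∀ s a, IsPMFOn (P s a))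
    (hπ0 : ∀ s ∉ T, IsPMFOn (π0 s)) (htot : ∀ s, totWt T P π0 s = 1)
    {s : S} (hs : s ∉ T) :
    Vval T Tp P π0 s = ∑ a : A, π0 s a * Qval T Tp P π0 s a := by
  have hfin := sucWt_ne_top T Tp P π0 htot
  have hmulfin : ∀ (a : A) (s' : S),
      ENNReal.ofReal (π0 s a * P s a s') * sucWt T Tp P π0 s' ≠ ⊤ :=
    fun a s' => ENNReal.mul_ne_top ENNReal.ofReal_ne_top (hfin s')
  rw [Vval_eq, sucWt_nonterm T Tp P π0 hTp hs (fun a => (hπ0 s hs).1 a)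
    (fun a s' => (hP s a).1 s')]
  rw [ENNReal.toReal_sum (fun a _ =>
    (ENNReal.sum_lt_top.mpr fun s' _ => (hmulfin a s').lt_top).ne)]
  refine Finset.sum_congr rfl fun a _ => ?_
  rw [ENNReal.toReal_sum (fun s' _ => hmulfin a s')]
  have : ∀ s' : S, (ENNReal.ofReal (π0 s a * P s a s') * sucWt T Tp P π0 s').toReal
      = π0 s a * (P s a s' * Vval T Tp P π0 s') := fun s' => by
    rw [ENNReal.toReal_mul, ENNReal.toReal_ofReal
      (mul_nonneg ((hπ0 s hs).1 a) ((hP s a).1 s')), Vval_eq, mul_assoc]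
  rw [Finset.sum_congr rfl fun s' _ => this s', ← Finset.mul_sum, Qval]

theorem piPlus_pmf (hTp : Tp ⊆ T) (hP : ∀ s a, IsPMFOn (P s a))
    (hπ0 : ∀ s ∉ T, IsPMFOn (π0 s)) (htot : ∀ s, totWt T P π0 s = 1)
    (hV0 : ∀ s ∉ T, 0 < Vval T Tp P π0 s) {s : S} (hs : s ∉ T) :
    IsPMFOn (piPlus T Tp P π0 s) := by
  constructor
  · intro a
    exact div_nonneg (mul_nonneg ((hπ0 s hs).1 a) (Qval_nonneg T Tp P hP π0 s a))
      (hV0 s hs).le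
  · simp only [piPlus]
    rw [← Finset.sum_div, ← bellman0 T Tp P π0 hTp hP hπ0 htot hs,
      div_self (hV0 s hs).ne']

theorem improve (hTp : Tp ⊆ T) (hP : ∀ s a, IsPMFOn (P s a))
    (hπ0 : ∀ s ∉ T, IsPMFOn (π0 s)) (htot : ∀ s, totWt T P π0 s = 1)
    (hV0 : ∀ s ∉ T, 0 < Vval T Tp P π0 s) {s : S} (hs : s ∉ T) :
    Vval T Tp P π0 s ≤ ∑ a : A, piPlus T Tp P π0 s a * Qval T Tp P π0 s a := by
  set V := Vval T Tp P π0 s with hVdef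
  set Q := fun a => Qval T Tp P π0 s a with hQdef
  have hV : 0 < V := hV0 s hs
  have hπn : ∀ a, 0 ≤ π0 s a := (hπ0 s hs).1
  have hCS : V ^ 2 ≤ ∑ a : A, π0 s a * Q a ^ 2 := by
    have h := Finset.sum_mul_sq_le_sq_mul_sq Finset.univ
      (fun a => Real.sqrt (π0 s a)) (fun a => Real.sqrt (π0 s a) * Q a)
    have e1 : ∀ a : A, Real.sqrt (π0 s a) * (Real.sqrt (π0 s a) * Q a)
        = π0 s a * Q a := fun a => by
      rw [← mul_assoc, Real.mul_self_sqrt (hπn a)]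
    have e2 : ∀ a : A, Real.sqrt (π0 s a) ^ 2 = π0 s a := fun a => Real.sq_sqrt (hπn a)
    have e3 : ∀ a : A, (Real.sqrt (π0 s a) * Q a) ^ 2 = π0 s a * Q a ^ 2 := fun a => by
      rw [mul_pow, e2]
    calc V ^ 2 = (∑ a : A, π0 s a * Q a) ^ 2 := by
          rw [hVdef, bellman0 T Tp P π0 hTp hP hπ0 htot hs]
      _ = (∑ a : A, Real.sqrt (π0 s a) * (Real.sqrt (π0 s a) * Q a)) ^ 2 := by
          congr 1; exact Finset.sum_congr rfl fun a _ => (e1 a).symm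
      _ ≤ (∑ a : A, Real.sqrt (π0 s a) ^ 2) * ∑ a : A, (Real.sqrt (π0 s a) * Q a) ^ 2 := h
      _ = (∑ a : A, π0 s a) * ∑ a : A, π0 s a * Q a ^ 2 := by
          rw [Finset.sum_congr rfl fun a _ => e2 a, Finset.sum_congr rfl fun a _ => e3 a]
      _ = ∑ a : A, π0 s a * Q a ^ 2 := by rw [(hπ0 s hs).2, one_mul]
  refine le_of_mul_le_mul_right ?_ hV
  calc V * V = V ^ 2 := (sq V).symm
    _ ≤ ∑ a : A, π0 s a * Q a ^ 2 := hCS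
    _ = (∑ a : A, piPlus T Tp P π0 s a * Q a) * V := by
        rw [Finset.sum_mul]
        refine Finset.sum_congr rfl fun a _ => ?_
        simp only [piPlus, ← hVdef, ← hQdef]
        field_simp

theorem improveE (hTp : Tp ⊆ T) (hP : ∀ s a, IsPMFOn (P s a))
    (hπ0 : ∀ s ∉ T, IsPMFOn (π0 s)) (htot : ∀ s, totWt T P π0 s = 1)
    (hV0 : ∀ s ∉ T, 0 < Vval T Tp P π0 s) {s : S} (hs : s ∉ T) :
    sucWt T Tp P π0 s ≤ ∑ a : A, ∑ s' : S,
      ENNReal.ofReal (piPlus T Tp P π0 s a * P s a s') * sucWt T Tp P π0 s' := by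
  have hfin := sucWt_ne_top T Tp P π0 htot
  have hW : ∀ u, sucWt T Tp P π0 u = ENNReal.ofReal (Vval T Tp P π0 u) := fun u => by
    rw [Vval_eq, ENNReal.ofReal_toReal (hfin u)]
  have hπp := (piPlus_pmf T Tp P π0 hTp hP hπ0 htot hV0 hs).1
  have hQ : ∀ a, 0 ≤ Qval T Tp P π0 s a := Qval_nonneg T Tp P hP π0 s
  calc sucWt T Tp P π0 s = ENNReal.ofReal (Vval T Tp P π0 s) := hW s
    _ ≤ ENNReal.ofReal (∑ a : A, piPlus T Tp P π0 s a * Qval T Tp P π0 s a) :=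
        ENNReal.ofReal_le_ofReal (improve T Tp P π0 hTp hP hπ0 htot hV0 hs)
    _ = ∑ a : A, ENNReal.ofReal (piPlus T Tp P π0 s a * Qval T Tp P π0 s a) :=
        ENNReal.ofReal_sum_of_nonneg fun a _ => mul_nonneg (hπp a) (hQ a)
    _ = ∑ a : A, ∑ s' : S,
          ENNReal.ofReal (piPlus T Tp P π0 s a * P s a s') * sucWt T Tp P π0 s' := by
        refine Finset.sum_congr rfl fun a _ => ?_
        rw [Qval, Finset.mul_sum, ENNReal.ofReal_sum_of_nonneg (fun s' _ =>
          mul_nonneg (hπp a) (mul_nonneg ((hP s a).1 s') (Vval_nonneg T Tp P π0 s')))]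
        refine Finset.sum_congr rfl fun s' _ => ?_
        rw [hW s', ← ENNReal.ofReal_mul (mul_nonneg (hπp a) ((hP s a).1 s'))]
        congr 1
        ring

end Main

section Alive

variable (T : Finset S) (P : S → A → S → ℝ) (π : S → A → ℝ)

/-- Probability of being alive (nonterminated) after `n` steps. -/
noncomputable def alive : ℕ → S → ℝ≥0∞
  | 0 => fun s => if s ∈ T then 0 else 1
  | n + 1 => fun s => if s ∈ T then 0
      else ∑ a : A, ∑ s' : S, ENNReal.ofReal (π s a * P s a s') * alive n s'

/-- Probability of having terminated within `n` steps. -/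
noncomputable def deadW (n : ℕ) (s : S) : ℝ≥0∞ :=
  ∑' l : List (A × S), if l.length ≤ n then ENNReal.ofReal (pathWeight T P π s l) else 0

theorem alive_term (n : ℕ) {s : S} (hs : s ∈ T) : alive T P π n s = 0 := by
  cases n <;> simp [alive, hs]

theorem alive_zero {s : S} (hs : s ∉ T) : alive T P π 0 s = 1 := by simp [alive, hs]

theorem alive_succ {s : S} (hs : s ∉ T) (n : ℕ) :
    alive T P π (n + 1) s
      = ∑ a : A, ∑ s' : S, ENNReal.ofReal (π s a * P s a s') * alive T P π n s' := by
  simp [alive, hs]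

theorem deadW_term (n : ℕ) {s : S} (hs : s ∈ T) : deadW T P π n s = 1 := by
  have h := tsum_cons_split
    (fun u l => if l.length ≤ n then ENNReal.ofReal (pathWeight T P π u l) else 0)
    (fun u l => if l.length ≤ n then ENNReal.ofReal (pathWeight T P π u l) else 0)
    (fun _ _ => 0) s
    (fun a s' l => by
      show (if ((a, s') :: l).length ≤ n then
        ENNReal.ofReal (pathWeight T P π s ((a, s') :: l)) else 0) = _
      rw [pathWeight_cons, if_pos hs]
      simp)
  calc deadW T P π n s
      = (if ([] : List (A × S)).length ≤ n then ENNReal.ofReal (pathWeight T P π s []) else 0)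
        + ∑ a : A, ∑ s' : S, (0 : ℝ≥0∞)
            * ∑' l, (if l.length ≤ n then ENNReal.ofReal (pathWeight T P π s' l) else 0) := h
    _ = 1 := by simp [pathWeight_nil, hs]

theorem deadW_zero {s : S} (hs : s ∉ T) : deadW T P π 0 s = 0 := by
  have h := tsum_cons_split
    (fun u l => if l.length ≤ 0 then ENNReal.ofReal (pathWeight T P π u l) else 0)
    (fun u l => if l.length ≤ 0 then ENNReal.ofReal (pathWeight T P π u l) else 0)
    (fun _ _ => 0) s
    (fun a s' l => by
      show (if ((a, s') :: l).length ≤ 0 then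
        ENNReal.ofReal (pathWeight T P π s ((a, s') :: l)) else 0) = _
      simp)
  calc deadW T P π 0 s
      = (if ([] : List (A × S)).length ≤ 0 then ENNReal.ofReal (pathWeight T P π s []) else 0)
        + ∑ a : A, ∑ s' : S, (0 : ℝ≥0∞)
            * ∑' l, (if l.length ≤ 0 then ENNReal.ofReal (pathWeight T P π s' l) else 0) := h
    _ = 0 := by simp [pathWeight_nil, hs]

theorem deadW_succ {s : S} (hs : s ∉ T) (hπ : ∀ a, 0 ≤ π s a)
    (hP : ∀ a s', 0 ≤ P s a s') (n : ℕ) :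
    deadW T P π (n + 1) s
      = ∑ a : A, ∑ s' : S, ENNReal.ofReal (π s a * P s a s') * deadW T P π n s' := by
  have h := tsum_cons_split
    (fun u l => if l.length ≤ n + 1 then ENNReal.ofReal (pathWeight T P π u l) else 0)
    (fun u l => if l.length ≤ n then ENNReal.ofReal (pathWeight T P π u l) else 0)
    (fun a s' => ENNReal.ofReal (π s a * P s a s')) s
    (fun a s' l => by
      show (if ((a, s') :: l).length ≤ n + 1 then
        ENNReal.ofReal (pathWeight T P π s ((a, s') :: l)) else 0) = _
      rw [pathWeight_cons, if_neg hs]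
      by_cases hl : l.length ≤ n
      · rw [if_pos (by simpa using Nat.succ_le_succ hl),
          ENNReal.ofReal_mul (mul_nonneg (hπ a) (hP a s'))]
        simp [hl]
      · rw [if_neg (by simpa using fun hc => hl (Nat.le_of_succ_le_succ hc))]
        simp [hl])
  calc deadW T P π (n + 1) s
      = (if ([] : List (A × S)).length ≤ n + 1 then ENNReal.ofReal (pathWeight T P π s []) else 0)
        + ∑ a : A, ∑ s' : S, ENNReal.ofReal (π s a * P s a s')
            * ∑' l, (if l.length ≤ n then ENNReal.ofReal (pathWeight T P π s' l) else 0) := h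
    _ = ∑ a : A, ∑ s' : S, ENNReal.ofReal (π s a * P s a s') * deadW T P π n s' := by
        rw [pathWeight_nil, if_neg hs]
        simp [deadW]

theorem sum_ofReal_one (hP : ∀ s a, IsPMFOn (P s a)) {s : S} (hπ : IsPMFOn (π s)) :
    (∑ a : A, ∑ s' : S, ENNReal.ofReal (π s a * P s a s')) = 1 := by
  have h1 : ∀ a : A, (∑ s' : S, ENNReal.ofReal (π s a * P s a s'))
      = ENNReal.ofReal (π s a) := fun a => by
    rw [← ENNReal.ofReal_sum_of_nonneg (fun s' _ => mul_nonneg (hπ.1 a) ((hP s a).1 s')),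
      ← Finset.mul_sum, (hP s a).2, mul_one]
  rw [Finset.sum_congr rfl fun a _ => h1 a,
    ← ENNReal.ofReal_sum_of_nonneg (fun a _ => hπ.1 a), hπ.2, ENNReal.ofReal_one]

theorem dead_add_alive (hP : ∀ s a, IsPMFOn (P s a)) (hπ : ∀ s ∉ T, IsPMFOn (π s)) :
    ∀ (n : ℕ) (s : S), deadW T P π n s + alive T P π n s = 1 := by
  intro n
  induction n with
  | zero =>
    intro s
    by_cases hs : s ∈ T
    · rw [deadW_term T P π 0 hs, alive_term T P π 0 hs, add_zero]
    · rw [deadW_zero T P π hs, alive_zero T P π hs, zero_add]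
  | succ n ih =>
    intro s
    by_cases hs : s ∈ T
    · rw [deadW_term T P π (n + 1) hs, alive_term T P π (n + 1) hs, add_zero]
    · rw [deadW_succ T P π hs (hπ s hs).1 (fun a s' => (hP s a).1 s') n,
        alive_succ T P π hs n, ← Finset.sum_add_distrib]
      rw [Finset.sum_congr rfl fun a _ => (Finset.sum_add_distrib).symm]
      rw [Finset.sum_congr rfl fun a _ => Finset.sum_congr rfl
        fun s' _ => (mul_add (ENNReal.ofReal (π s a * P s a s'))
          (deadW T P π n s') (alive T P π n s')).symm]
      rw [Finset.sum_congr rfl fun a _ => Finset.sum_congr rfl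
        fun s' _ => by rw [ih s', mul_one]]
      exact sum_ofReal_one P π hP (hπ s hs)

theorem iSup_deadW (s : S) : ⨆ n, deadW T P π n s = totWt T P π s := by
  apply le_antisymm
  · refine iSup_le fun n => ?_
    refine Summable.tsum_le_tsum (fun l => ?_) ENNReal.summable ENNReal.summable
    by_cases h : l.length ≤ n <;> simp [h]
  · rw [totWt, ENNReal.tsum_eq_iSup_sum]
    refine iSup_le fun F => ?_
    refine le_trans ?_ (le_iSup _ (F.sup List.length))
    calc ∑ l ∈ F, ENNReal.ofReal (pathWeight T P π s l)
        = ∑ l ∈ F, (if l.length ≤ F.sup List.length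
            then ENNReal.ofReal (pathWeight T P π s l) else 0) :=
          Finset.sum_congr rfl fun l hl => (if_pos (Finset.le_sup hl)).symm
      _ ≤ deadW T P π (F.sup List.length) s := ENNReal.sum_le_tsum F

theorem iInf_alive (hP : ∀ s a, IsPMFOn (P s a)) (hπ : ∀ s ∉ T, IsPMFOn (π s))
    (htot : ∀ s, totWt T P π s = 1) (s : S) : ⨅ n, alive T P π n s = 0 := by
  have hd : ∀ n, alive T P π n s = 1 - deadW T P π n s := fun n => by
    refine ENNReal.eq_sub_of_add_eq ?_ ?_
    · refine ne_top_of_le_ne_top ENNReal.one_ne_top ?_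
      calc deadW T P π n s ≤ deadW T P π n s + alive T P π n s := le_self_add
        _ = 1 := dead_add_alive T P π hP hπ n s
    · rw [add_comm]; exact dead_add_alive T P π hP hπ n s
  calc ⨅ n, alive T P π n s = ⨅ n, (1 - deadW T P π n s) := by
        exact iInf_congr hd
    _ = 1 - ⨆ n, deadW T P π n s := (ENNReal.sub_iSup ENNReal.one_ne_top).symm
    _ = 0 := by rw [iSup_deadW, htot s, tsub_self]

end Alive

end SCAux
/-- **Success conditioning never degrades performance.**
Episodic-MDP setup: `S` finite with terminal set `𝒯 = 𝒯₊ ∪ 𝒯₋` (disjoint), `A`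
finite nonempty, transition kernel `P` (a pmf in its last argument) absorbing on
`𝒯`, every Markov policy reaching `𝒯` almost surely from every state, behavior
policy `π0` with `V_{π0}(s) > 0` at every nonterminal `s`, and initial
distribution `μ` supported on nonterminal states.

Then `ρ(π₊) ≥ ρ(π0)`, where `ρ(π) := ℙ_{π,μ}(∃ t, Xₜ ∈ 𝒯₊)`. -/
theorem success_conditioning_never_degrades
    {S A : Type*} [Fintype S] [DecidableEq S] [Fintype A] [Nonempty A]
    (T Tp Tm : Finset S) (hpart : Tp ∪ Tm = T) (hdisj : Disjoint Tp Tm)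
    (P : S → A → S → ℝ) (hP : ∀ s a, IsPMFOn (P s a))
    (habs : ∀ s ∈ T, ∀ a, P s a s = 1)
    (hterm : ∀ π : S → A → ℝ, (∀ s ∉ T, IsPMFOn (π s)) →
      ∀ s : S, trajMeasure T P π (pointMass s) Set.univ = 1)
    (π0 : S → A → ℝ) (hπ0 : ∀ s ∉ T, IsPMFOn (π0 s))
    (hV0 : ∀ s ∉ T, 0 < Vval T Tp P π0 s)
    (μ : S → ℝ) (hμ : IsPMFOn μ) (hμT : ∀ s ∈ T, μ s = 0) :
    trajMeasure T P π0 μ (SuccessEvent Tp)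
      ≤ trajMeasure T P (piPlus T Tp P π0) μ (SuccessEvent Tp) := by
  classical
  have hTp : Tp ⊆ T := hpart ▸ Finset.subset_union_left
  set πp := piPlus T Tp P π0 with hπp_def
  have htot0 : ∀ s, SCAux.totWt T P π0 s = 1 := fun s => by
    rw [← SCAux.pointMass_univ]; exact hterm π0 hπ0 s
  have hπp_pmf : ∀ s ∉ T, IsPMFOn (πp s) := fun s hs =>
    SCAux.piPlus_pmf T Tp P π0 hTp hP hπ0 htot0 hV0 hs
  have htotp : ∀ s, SCAux.totWt T P πp s = 1 := fun s => by
    rw [← SCAux.pointMass_univ]; exact hterm πp hπp_pmf s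
  have hterm_eq : ∀ s ∈ T, SCAux.sucWt T Tp P π0 s = SCAux.sucWt T Tp P πp s := by
    intro s hs
    by_cases hsp : s ∈ Tp
    · rw [SCAux.sucWt_Tp T Tp P π0 s hs hsp, SCAux.sucWt_Tp T Tp P πp s hs hsp]
    · rw [SCAux.sucWt_Tm T Tp P π0 s hs hsp, SCAux.sucWt_Tm T Tp P πp s hs hsp]
  have key : ∀ (n : ℕ) (s : S),
      SCAux.sucWt T Tp P π0 s ≤ SCAux.sucWt T Tp P πp s + SCAux.alive T P πp n s := by
    intro n
    induction n with
    | zero =>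
      intro s
      by_cases hs : s ∈ T
      · rw [hterm_eq s hs, SCAux.alive_term T P πp 0 hs, add_zero]
      · rw [SCAux.alive_zero T P πp hs]
        calc SCAux.sucWt T Tp P π0 s
            ≤ SCAux.totWt T P π0 s := SCAux.sucWt_le_totWt _ _ _ _ _
          _ = 1 := htot0 s
          _ ≤ SCAux.sucWt T Tp P πp s + 1 := le_add_self
    | succ n ih =>
      intro s
      by_cases hs : s ∈ T
      · rw [hterm_eq s hs, SCAux.alive_term T P πp (n + 1) hs, add_zero]
      · calc SCAux.sucWt T Tp P π0 s
            ≤ ∑ a : A, ∑ s' : S,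
                ENNReal.ofReal (πp s a * P s a s') * SCAux.sucWt T Tp P π0 s' :=
              SCAux.improveE T Tp P π0 hTp hP hπ0 htot0 hV0 hs
          _ ≤ ∑ a : A, ∑ s' : S, ENNReal.ofReal (πp s a * P s a s')
                * (SCAux.sucWt T Tp P πp s' + SCAux.alive T P πp n s') :=
              Finset.sum_le_sum fun a _ => Finset.sum_le_sum fun s' _ =>
                mul_le_mul_right (ih s') _
          _ = (∑ a : A, ∑ s' : S,
                ENNReal.ofReal (πp s a * P s a s') * SCAux.sucWt T Tp P πp s')
              + ∑ a : A, ∑ s' : S,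
                ENNReal.ofReal (πp s a * P s a s') * SCAux.alive T P πp n s' := by
              rw [← Finset.sum_add_distrib]
              refine Finset.sum_congr rfl fun a _ => ?_
              rw [← Finset.sum_add_distrib]
              exact Finset.sum_congr rfl fun s' _ => mul_add _ _ _
          _ = SCAux.sucWt T Tp P πp s + SCAux.alive T P πp (n + 1) s := by
              rw [← SCAux.sucWt_nonterm T Tp P πp hTp hs (fun a => (hπp_pmf s hs).1 a)
                (fun a s' => (hP s a).1 s'), ← SCAux.alive_succ T P πp hs n]
  have hle : ∀ s, SCAux.sucWt T Tp P π0 s ≤ SCAux.sucWt T Tp P πp s := by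
    intro s
    have h1 : SCAux.sucWt T Tp P π0 s
        ≤ ⨅ n, (SCAux.sucWt T Tp P πp s + SCAux.alive T P πp n s) :=
      le_iInf fun n => key n s
    rwa [← ENNReal.add_iInf, SCAux.iInf_alive T P πp hP hπp_pmf htotp s, add_zero] at h1
  rw [SCAux.trajMeasure_success T Tp P π0 μ hμ.1, SCAux.trajMeasure_success T Tp P πp μ hμ.1]
  exact Summable.tsum_le_tsum (fun s => mul_le_mul_right (hle s) _) ENNReal.summable ENNReal.summable
end

section
/- Success-conditioned occupancy formula: for every Markov policy π with ρ(π) > 0 and every nonterminal state s with d_π(s) < ∞, one has ρ(π)·d⁺_π(s) = V_π(s)·d_π(s); that is, d⁺_π(s) = (V_π(s)/ρ(π))·d_π(s). -/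
open MeasureTheory
open scoped ENNReal

variable {S A : Type*}

/-! ### Auxiliary development for the success-conditioned occupancy formula -/

section SCOF
open scoped Classical
set_option linter.unusedSectionVars false

variable {S A : Type*} [DecidableEq S]

/-- Partial path weight: like `pathWeight` but without requiring the path to end
in a terminal state. -/
def SCOFpw (T : Finset S) (P : S → A → S → ℝ) (π : S → A → ℝ) :
    S → List (A × S) → ℝ
  | _, [] => 1
  | s, (a, s') :: l => if s ∈ T then 0 else π s a * P s a s' * SCOFpw T P π s' l

lemma SCOF_lastState_cons (s : S) (a : A) (s' : S) (l : List (A × S)) :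
    lastState (⟨s, (a, s') :: l⟩ : Traj S A) = lastState ⟨s', l⟩ := rfl

lemma SCOF_lastState_append (s : S) (l1 l2 : List (A × S)) :
    lastState (⟨s, l1 ++ l2⟩ : Traj S A)
      = lastState (⟨lastState (⟨s, l1⟩ : Traj S A), l2⟩ : Traj S A) := by
  simp [lastState, List.foldl_append]

lemma SCOF_pathWeight_eq (T : Finset S) (P : S → A → S → ℝ) (π : S → A → ℝ)
    (s : S) (l : List (A × S)) :
    pathWeight T P π s l
      = if lastState (⟨s, l⟩ : Traj S A) ∈ T then SCOFpw T P π s l else 0 := by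
  induction l generalizing s with
  | nil => simp [pathWeight, SCOFpw, lastState]; congr
  | cons p l ih =>
    obtain ⟨a, s'⟩ := p
    rw [SCOF_lastState_cons]
    simp only [pathWeight, SCOFpw, ih]
    split_ifs <;> ring

lemma SCOFpw_nonneg {T : Finset S} {P : S → A → S → ℝ} {π : S → A → ℝ}
    (hP : ∀ s a x, 0 ≤ P s a x) (hπ : ∀ s, s ∉ T → ∀ a, 0 ≤ π s a) :
    ∀ (l : List (A × S)) (s : S), 0 ≤ SCOFpw T P π s l
  | [], s => zero_le_one
  | (a, s') :: l, s => by
    by_cases h : s ∈ T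
    · simp [SCOFpw, h]
    · simp only [SCOFpw, if_neg h]
      have h1 := hπ s h a
      have h2 := hP s a s'
      have h3 := SCOFpw_nonneg hP hπ l s'
      positivity

lemma SCOF_stateAt_zero (s : S) (l : List (A × S)) :
    stateAt (⟨s, l⟩ : Traj S A) 0 = s := rfl

lemma SCOF_stateAt_cons (s : S) (a : A) (s' : S) (l : List (A × S)) (u : ℕ) :
    stateAt (⟨s, (a, s') :: l⟩ : Traj S A) (u + 1) = stateAt (⟨s', l⟩ : Traj S A) u := by
  simp [stateAt, SCOF_lastState_cons, lastState]

lemma SCOF_stateAt_append (s0 : S) (l1 l2 : List (A × S)) (u : ℕ) :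
    stateAt (⟨s0, l1 ++ l2⟩ : Traj S A) (l1.length + u)
      = stateAt (⟨lastState (⟨s0, l1⟩ : Traj S A), l2⟩ : Traj S A) u := by
  induction l1 generalizing s0 with
  | nil => simp [lastState]
  | cons p l1 ih =>
    obtain ⟨a, s1⟩ := p
    have h1 : ((a, s1) :: l1).length + u = (l1.length + u) + 1 := by
      simp [Nat.succ_add, Nat.add_right_comm]
    rw [h1, show ((a, s1) :: l1) ++ l2 = (a, s1) :: (l1 ++ l2) from rfl,
      SCOF_stateAt_cons, ih, SCOF_lastState_cons]

lemma SCOF_stateAt_long (ω : Traj S A) {t : ℕ} (h : ω.steps.length < t) :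
    stateAt ω t = lastState ω := by
  rw [stateAt]
  apply List.getD_eq_default
  simp only [List.length_cons, List.length_map]
  omega

lemma SCOFpw_cons_ne_zero {T : Finset S} {P : S → A → S → ℝ} {π : S → A → ℝ}
    {s : S} {a : A} {s' : S} {l : List (A × S)}
    (h : SCOFpw T P π s ((a, s') :: l) ≠ 0) :
    s ∉ T ∧ SCOFpw T P π s' l ≠ 0 := by
  by_cases hT : s ∈ T
  · simp [SCOFpw, hT] at h
  · refine ⟨hT, fun h0 => h ?_⟩
    simp [SCOFpw, hT, h0]

lemma SCOFpw_stateAt_not_mem {T : Finset S} {P : S → A → S → ℝ} {π : S → A → ℝ} :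
    ∀ (l1 : List (A × S)) (s0 : S), SCOFpw T P π s0 l1 ≠ 0 →
      ∀ (l2 : List (A × S)) (v : ℕ), v < l1.length →
        stateAt (⟨s0, l1 ++ l2⟩ : Traj S A) v ∉ T
  | [], s0, _, l2, v, hv => absurd hv (by simp)
  | (a, s1) :: l1, s0, h, l2, v, hv => by
    obtain ⟨hs0, h1⟩ := SCOFpw_cons_ne_zero h
    match v with
    | 0 => simpa [SCOF_stateAt_zero] using hs0
    | v + 1 =>
      rw [show ((a, s1) :: l1) ++ l2 = (a, s1) :: (l1 ++ l2) from rfl, SCOF_stateAt_cons]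
      exact SCOFpw_stateAt_not_mem l1 s1 h1 l2 v (by simpa using hv)

lemma SCOFpw_append (T : Finset S) (P : S → A → S → ℝ) (π : S → A → ℝ) :
    ∀ (l1 : List (A × S)) (s : S) (l2 : List (A × S)),
      SCOFpw T P π s (l1 ++ l2)
        = SCOFpw T P π s l1 * SCOFpw T P π (lastState (⟨s, l1⟩ : Traj S A)) l2
  | [], s, l2 => by simp [SCOFpw, lastState]
  | (a, s') :: l1, s, l2 => by
    rw [show ((a, s') :: l1) ++ l2 = (a, s') :: (l1 ++ l2) from rfl, SCOF_lastState_cons]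
    simp only [SCOFpw, SCOFpw_append T P π l1 s' l2]
    split_ifs <;> ring

lemma SCOF_pathWeight_append (T : Finset S) (P : S → A → S → ℝ) (π : S → A → ℝ)
    (s : S) (l1 l2 : List (A × S)) :
    pathWeight T P π s (l1 ++ l2)
      = SCOFpw T P π s l1 * pathWeight T P π (lastState (⟨s, l1⟩ : Traj S A)) l2 := by
  rw [SCOF_pathWeight_eq, SCOF_pathWeight_eq, SCOF_lastState_append, SCOFpw_append]
  split_ifs <;> ring

lemma SCOF_success_append {T Tp : Finset S} {P : S → A → S → ℝ} {π : S → A → ℝ}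
    (hTpT : ∀ x ∈ Tp, x ∈ T) {s0 s : S} {l1 l2 : List (A × S)}
    (hlast : lastState (⟨s0, l1⟩ : Traj S A) = s)
    (hpw : SCOFpw T P π s0 l1 ≠ 0) :
    ((⟨s0, l1 ++ l2⟩ : Traj S A) ∈ SuccessEvent Tp
      ↔ (⟨s, l2⟩ : Traj S A) ∈ SuccessEvent Tp) := by
  constructor
  · rintro ⟨v, hv⟩
    rcases lt_or_ge v l1.length with h | h
    · exact absurd (hTpT _ hv) (SCOFpw_stateAt_not_mem l1 s0 hpw l2 v h)
    · refine ⟨v - l1.length, ?_⟩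
      rw [← hlast, ← SCOF_stateAt_append, Nat.add_sub_cancel' h]
      exact hv
  · rintro ⟨u, hu⟩
    exact ⟨l1.length + u, by rw [SCOF_stateAt_append, hlast]; exact hu⟩

instance : MeasurableSingletonClass (Traj S A) :=
  ⟨fun _ => MeasurableSpace.measurableSet_top⟩

/-- The obvious equivalence between trajectories and pairs. -/
def SCOFequiv : Traj S A ≃ S × List (A × S) where
  toFun ω := (ω.init, ω.steps)
  invFun p := ⟨p.1, p.2⟩
  left_inv ω := rfl
  right_inv p := rfl

lemma SCOF_tsum_traj (f : Traj S A → ℝ≥0∞) :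
    ∑' ω : Traj S A, f ω = ∑' s0 : S, ∑' l : List (A × S), f ⟨s0, l⟩ := by
  rw [← ENNReal.tsum_prod]
  exact ((SCOFequiv (S := S) (A := A)).symm.tsum_eq f).symm

lemma SCOF_measE (T : Finset S) (P : S → A → S → ℝ) (π : S → A → ℝ) (μ : S → ℝ)
    (E : Set (Traj S A)) :
    trajMeasure T P π μ E
      = ∑' ω : Traj S A,
          ENNReal.ofReal (μ ω.init * pathWeight T P π ω.init ω.steps)
            * E.indicator 1 ω := by
  rw [trajMeasure, Measure.sum_apply _ MeasurableSpace.measurableSet_top]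
  refine tsum_congr fun ω => ?_
  rw [Measure.smul_apply, Measure.dirac_apply' _ MeasurableSpace.measurableSet_top,
    smul_eq_mul]

lemma SCOF_lintegral (T : Finset S) (P : S → A → S → ℝ) (π : S → A → ℝ) (μ : S → ℝ)
    (f : Traj S A → ℝ≥0∞) :
    ∫⁻ ω, f ω ∂(trajMeasure T P π μ)
      = ∑' ω : Traj S A,
          ENNReal.ofReal (μ ω.init * pathWeight T P π ω.init ω.steps) * f ω := by
  rw [trajMeasure, lintegral_sum_measure]
  refine tsum_congr fun ω => ?_
  rw [lintegral_smul_measure, lintegral_dirac, smul_eq_mul]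

lemma SCOF_measE_point (T : Finset S) (P : S → A → S → ℝ) (π : S → A → ℝ)
    (s' : S) (E : Set (Traj S A)) :
    trajMeasure T P π (pointMass s') E
      = ∑' l : List (A × S),
          ENNReal.ofReal (pathWeight T P π s' l)
            * E.indicator 1 (⟨s', l⟩ : Traj S A) := by
  rw [SCOF_measE, SCOF_tsum_traj]
  rw [tsum_eq_single s' (fun b hb => by simp [pointMass, hb])]
  simp [pointMass]

lemma SCOF_meas_univ [Fintype S] (T : Finset S) (P : S → A → S → ℝ) (π : S → A → ℝ)
    (μ : S → ℝ)
    (hterm : ∀ s : S, trajMeasure T P π (pointMass s) Set.univ = 1)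
    (hμ0 : ∀ x, 0 ≤ μ x) (hμ1 : ∑ x, μ x = 1) :
    trajMeasure T P π μ Set.univ = 1 := by
  rw [SCOF_measE, SCOF_tsum_traj]
  simp only [Set.indicator_univ, Pi.one_apply, mul_one]
  have h1 : ∀ s0 : S,
      (∑' l : List (A × S), ENNReal.ofReal (μ s0 * pathWeight T P π s0 l))
        = ENNReal.ofReal (μ s0) := by
    intro s0
    have h2 := hterm s0
    rw [SCOF_measE_point] at h2
    simp only [Set.indicator_univ, Pi.one_apply, mul_one] at h2
    have h3 : ∀ l : List (A × S),
        ENNReal.ofReal (μ s0 * pathWeight T P π s0 l)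
          = ENNReal.ofReal (μ s0) * ENNReal.ofReal (pathWeight T P π s0 l) :=
      fun l => ENNReal.ofReal_mul (hμ0 s0)
    rw [tsum_congr h3, ENNReal.tsum_mul_left, h2, mul_one]
  rw [tsum_congr h1, tsum_fintype, ← ENNReal.ofReal_sum_of_nonneg (fun i _ => hμ0 i), hμ1,
    ENNReal.ofReal_one]

lemma SCOF_reindex (t : ℕ) (f : Traj S A → ℝ≥0∞)
    (hvan : ∀ ω : Traj S A, ω.steps.length < t → f ω = 0) :
    ∑' ω : Traj S A, f ω
      = ∑' (p : S × {l : List (A × S) // l.length = t}) (l2 : List (A × S)),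
          f ⟨p.1, p.2.1 ++ l2⟩ := by
  have hinj : Function.Injective
      (fun q : (S × {l : List (A × S) // l.length = t}) × List (A × S) =>
        (⟨q.1.1, q.1.2.1 ++ q.2⟩ : Traj S A)) := by
    rintro ⟨⟨s0, l1, h1⟩, l2⟩ ⟨⟨s0', l1', h1'⟩, l2'⟩ h
    simp only [Traj.mk.injEq] at h
    obtain ⟨hi, hsteps⟩ := h
    obtain ⟨e1, e2⟩ := List.append_inj hsteps (h1.trans h1'.symm)
    subst hi; subst e1; subst e2; rfl
  have hsupp : Function.support f ⊆ Set.range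
      (fun q : (S × {l : List (A × S) // l.length = t}) × List (A × S) =>
        (⟨q.1.1, q.1.2.1 ++ q.2⟩ : Traj S A)) := by
    intro ω hω
    have hlen : t ≤ ω.steps.length := by
      by_contra hc
      push_neg at hc
      exact hω (hvan ω hc)
    refine ⟨⟨⟨ω.init, ⟨ω.steps.take t, by
      simp only [List.length_take]; omega⟩⟩, ω.steps.drop t⟩, ?_⟩
    simp only [List.take_append_drop]
  rw [← hinj.tsum_eq hsupp]
  exact ENNReal.tsum_prod
    (f := fun (p : S × {l : List (A × S) // l.length = t}) (l2 : List (A × S)) =>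
      f ⟨p.1, p.2.1 ++ l2⟩)

lemma SCOF_split (T : Finset S) (P : S → A → S → ℝ) (π : S → A → ℝ) (μ : S → ℝ)
    (hP : ∀ s a x, 0 ≤ P s a x) (hπ : ∀ s, s ∉ T → ∀ a, 0 ≤ π s a)
    (hμ0 : ∀ x, 0 ≤ μ x) {s : S} (hs : s ∉ T) (t : ℕ) (E : Set (Traj S A))
    (hE : ∀ (s0 : S) (l1 l2 : List (A × S)), l1.length = t →
      lastState (⟨s0, l1⟩ : Traj S A) = s → SCOFpw T P π s0 l1 ≠ 0 →
      ((⟨s0, l1 ++ l2⟩ : Traj S A) ∈ E ↔ (⟨s, l2⟩ : Traj S A) ∈ E)) :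
    trajMeasure T P π μ ({ω | stateAt ω t = s} ∩ E)
      = (∑' p : S × {l : List (A × S) // l.length = t},
          if lastState (⟨p.1, p.2.1⟩ : Traj S A) = s
          then ENNReal.ofReal (μ p.1 * SCOFpw T P π p.1 p.2.1) else 0)
        * trajMeasure T P π (pointMass s) E := by
  have hvan : ∀ ω : Traj S A, ω.steps.length < t →
      ENNReal.ofReal (μ ω.init * pathWeight T P π ω.init ω.steps)
        * ({ω | stateAt ω t = s} ∩ E).indicator 1 ω = 0 := by
    rintro ⟨i, l⟩ hlt
    by_cases hmem : (⟨i, l⟩ : Traj S A) ∈ {ω | stateAt ω t = s} ∩ E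
    · have hm1 : stateAt (⟨i, l⟩ : Traj S A) t = s := hmem.1
      have h1 : stateAt (⟨i, l⟩ : Traj S A) t = lastState (⟨i, l⟩ : Traj S A) :=
        SCOF_stateAt_long _ hlt
      have h2 : lastState (⟨i, l⟩ : Traj S A) ∉ T := by
        rw [← h1, hm1]; exact hs
      have h3 : pathWeight T P π i l = 0 := by
        rw [SCOF_pathWeight_eq, if_neg h2]
      show ENNReal.ofReal (μ i * pathWeight T P π i l) * _ = 0
      rw [h3, mul_zero, ENNReal.ofReal_zero, zero_mul]
    · rw [Set.indicator_of_notMem hmem, mul_zero]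
  rw [SCOF_measE, SCOF_reindex t _ hvan, ← ENNReal.tsum_mul_right]
  refine tsum_congr fun p => ?_
  obtain ⟨s0, l1, hl1⟩ := p
  by_cases hlast : lastState (⟨s0, l1⟩ : Traj S A) = s
  · by_cases hpw : SCOFpw T P π s0 l1 = 0
    · refine Eq.trans (tsum_congr (g := fun _ : List (A × S) => (0 : ℝ≥0∞))
        fun l2 => ?_) ?_
      · show ENNReal.ofReal (μ s0 * pathWeight T P π s0 (l1 ++ l2))
            * ({ω | stateAt ω t = s} ∩ E).indicator 1 (⟨s0, l1 ++ l2⟩ : Traj S A) = 0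
        rw [SCOF_pathWeight_append, hpw, zero_mul, mul_zero, ENNReal.ofReal_zero, zero_mul]
      · rw [tsum_zero, if_pos hlast, hpw, mul_zero, ENNReal.ofReal_zero, zero_mul]
    · refine Eq.trans (tsum_congr (g := fun l2 : List (A × S) =>
        ENNReal.ofReal (μ s0 * SCOFpw T P π s0 l1)
          * (ENNReal.ofReal (pathWeight T P π s l2)
            * E.indicator 1 (⟨s, l2⟩ : Traj S A))) fun l2 => ?_) ?_
      · show ENNReal.ofReal (μ s0 * pathWeight T P π s0 (l1 ++ l2))
            * ({ω | stateAt ω t = s} ∩ E).indicator 1 (⟨s0, l1 ++ l2⟩ : Traj S A) = _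
        have hst : stateAt (⟨s0, l1 ++ l2⟩ : Traj S A) t = s := by
          have h := SCOF_stateAt_append s0 l1 l2 0
          rw [Nat.add_zero, hl1, hlast] at h
          rw [h, SCOF_stateAt_zero]
        have hEiff := hE s0 l1 l2 hl1 hlast hpw
        have hiff : ((⟨s0, l1 ++ l2⟩ : Traj S A) ∈ {ω | stateAt ω t = s} ∩ E)
            ↔ ((⟨s, l2⟩ : Traj S A) ∈ E) :=
          ⟨fun hc => hEiff.mp hc.2, fun hc => ⟨hst, hEiff.mpr hc⟩⟩
        have hind : ({ω | stateAt ω t = s} ∩ E).indicator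
              (1 : Traj S A → ℝ≥0∞) (⟨s0, l1 ++ l2⟩ : Traj S A)
            = E.indicator 1 (⟨s, l2⟩ : Traj S A) := by
          by_cases hm : (⟨s, l2⟩ : Traj S A) ∈ E
          · rw [Set.indicator_of_mem (hiff.mpr hm), Set.indicator_of_mem hm]
            rfl
          · rw [Set.indicator_of_notMem (fun hc => hm (hiff.mp hc)),
              Set.indicator_of_notMem hm]
        rw [hind, SCOF_pathWeight_append, hlast,
          show μ s0 * (SCOFpw T P π s0 l1 * pathWeight T P π s l2)
            = (μ s0 * SCOFpw T P π s0 l1) * pathWeight T P π s l2 by ring,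
          ENNReal.ofReal_mul (mul_nonneg (hμ0 s0) (SCOFpw_nonneg hP hπ l1 s0)), mul_assoc]
      · rw [ENNReal.tsum_mul_left, if_pos hlast, SCOF_measE_point]
  · refine Eq.trans (tsum_congr (g := fun _ : List (A × S) => (0 : ℝ≥0∞))
      fun l2 => ?_) ?_
    · show ENNReal.ofReal (μ s0 * pathWeight T P π s0 (l1 ++ l2))
          * ({ω | stateAt ω t = s} ∩ E).indicator 1 (⟨s0, l1 ++ l2⟩ : Traj S A) = 0
      have hst : stateAt (⟨s0, l1 ++ l2⟩ : Traj S A) t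
          = lastState (⟨s0, l1⟩ : Traj S A) := by
        have h := SCOF_stateAt_append s0 l1 l2 0
        rw [Nat.add_zero, hl1] at h
        rw [h, SCOF_stateAt_zero]
      rw [Set.indicator_of_notMem
        (fun hc : (⟨s0, l1 ++ l2⟩ : Traj S A) ∈ {ω | stateAt ω t = s} ∩ E =>
          hlast (hst.symm.trans hc.1)), mul_zero]
    · rw [tsum_zero, if_neg hlast, zero_mul]

lemma SCOF_pointwise (Suc : Set (Traj S A)) (s : S) (w : ℝ≥0∞) (ω : Traj S A) :
    w * Suc.indicator (fun ω => ∑' t : ℕ, if stateAt ω t = s then 1 else 0) ω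
      = ∑' t : ℕ, w * ({ω | stateAt ω t = s} ∩ Suc).indicator 1 ω := by
  by_cases hω : ω ∈ Suc
  · rw [Set.indicator_of_mem hω, ← ENNReal.tsum_mul_left]
    refine tsum_congr fun t => ?_
    congr 1
    by_cases hts : stateAt ω t = s
    · rw [if_pos hts]
      exact ((Set.indicator_of_mem
        (show ω ∈ {ω | stateAt ω t = s} ∩ Suc from ⟨hts, hω⟩)
        (1 : Traj S A → ℝ≥0∞)).trans (Pi.one_apply ω)).symm
    · rw [if_neg hts]
      exact (Set.indicator_of_notMem
        (fun hc : ω ∈ {ω | stateAt ω t = s} ∩ Suc => hts hc.1)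
        (1 : Traj S A → ℝ≥0∞)).symm
  · rw [Set.indicator_of_notMem hω, mul_zero]
    symm
    refine (tsum_congr fun t => ?_).trans tsum_zero
    rw [Set.indicator_of_notMem
      (fun hc : ω ∈ {ω | stateAt ω t = s} ∩ Suc => hω hc.2), mul_zero]

end SCOF

/-- **Success-conditioned occupancy formula.**
Episodic-MDP setup: `S` finite with terminal set `𝒯 = 𝒯₊ ∪ 𝒯₋` (disjoint), `A`
finite nonempty, transition kernel `P` (a pmf in its last argument) absorbing on
`𝒯`, every Markov policy reaching `𝒯` almost surely from every state, and initial
distribution `μ` supported on nonterminal states.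

For every Markov policy `π` with `ρ(π) > 0` and every nonterminal state `s` with
`d_π(s) < ∞`, one has `ρ(π)·d⁺_π(s) = V_π(s)·d_π(s)`; that is,
`d⁺_π(s) = (V_π(s)/ρ(π))·d_π(s)`. -/
theorem success_conditioned_occupancy_formula
    {S A : Type*} [Fintype S] [DecidableEq S] [Fintype A] [Nonempty A]
    (T Tp Tm : Finset S) (hpart : Tp ∪ Tm = T) (hdisj : Disjoint Tp Tm)
    (P : S → A → S → ℝ) (hP : ∀ s a, IsPMFOn (P s a))
    (habs : ∀ s ∈ T, ∀ a, P s a s = 1)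
    (hterm : ∀ π : S → A → ℝ, (∀ s ∉ T, IsPMFOn (π s)) →
      ∀ s : S, trajMeasure T P π (pointMass s) Set.univ = 1)
    (μ : S → ℝ) (hμ : IsPMFOn μ) (hμT : ∀ s ∈ T, μ s = 0)
    (π : S → A → ℝ) (hπ : ∀ s ∉ T, IsPMFOn (π s))
    (hρ : 0 < trajMeasure T P π μ (SuccessEvent Tp))
    (s : S) (hs : s ∉ T) (hd : dOcc T P π μ s ≠ ⊤) :
    trajMeasure T P π μ (SuccessEvent Tp) * dPlusOcc T Tp P π μ s
        = ENNReal.ofReal (Vval T Tp P π s) * dOcc T P π μ s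
      ∧ dPlusOcc T Tp P π μ s
        = ENNReal.ofReal (Vval T Tp P π s) * dOcc T P π μ s
            / trajMeasure T P π μ (SuccessEvent Tp) := by
  classical
  have hTpT : ∀ x ∈ Tp, x ∈ T := fun x hx => by
    rw [← hpart]; exact Finset.mem_union_left _ hx
  have hP0 : ∀ s a x, 0 ≤ P s a x := fun s a x => (hP s a).1 x
  have hπ0 : ∀ s', s' ∉ T → ∀ a, 0 ≤ π s' a := fun s' hs' a => (hπ s' hs').1 a
  have hptuniv : ∀ s0 : S, trajMeasure T P π (pointMass s0) Set.univ = 1 := hterm π hπ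
  have huniv : trajMeasure T P π μ Set.univ = 1 :=
    SCOF_meas_univ T P π μ hptuniv hμ.1 hμ.2
  have hρ1 : trajMeasure T P π μ (SuccessEvent Tp) ≤ 1 := by
    rw [← huniv]; exact measure_mono (Set.subset_univ _)
  have hρtop : trajMeasure T P π μ (SuccessEvent Tp) ≠ ⊤ :=
    ne_top_of_le_ne_top ENNReal.one_ne_top hρ1
  have hρ0 : trajMeasure T P π μ (SuccessEvent Tp) ≠ 0 := hρ.ne'
  have hVtop : trajMeasure T P π (pointMass s) (SuccessEvent Tp) ≠ ⊤ := by
    refine ne_top_of_le_ne_top ENNReal.one_ne_top ?_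
    rw [← hptuniv s]; exact measure_mono (Set.subset_univ _)
  have hVpt : ENNReal.ofReal (Vval T Tp P π s)
      = trajMeasure T P π (pointMass s) (SuccessEvent Tp) := by
    rw [show Vval T Tp P π s
        = (trajMeasure T P π (pointMass s) (SuccessEvent Tp)).toReal from rfl,
      ENNReal.ofReal_toReal hVtop]
  have hEuniv : ∀ t : ℕ, trajMeasure T P π μ {ω | stateAt ω t = s}
      = ∑' p : S × {l : List (A × S) // l.length = t},
          if lastState (⟨p.1, p.2.1⟩ : Traj S A) = s
          then ENNReal.ofReal (μ p.1 * SCOFpw T P π p.1 p.2.1) else 0 := by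
    intro t
    have h := SCOF_split T P π μ hP0 hπ0 hμ.1 hs t Set.univ
      (fun s0 l1 l2 _ _ _ => Iff.rfl)
    rw [Set.inter_univ, hptuniv s, mul_one] at h
    exact h
  have hkey : ∀ t : ℕ,
      trajMeasure T P π μ ({ω | stateAt ω t = s} ∩ SuccessEvent Tp)
        = ENNReal.ofReal (Vval T Tp P π s)
            * trajMeasure T P π μ {ω | stateAt ω t = s} := by
    intro t
    have h := SCOF_split T P π μ hP0 hπ0 hμ.1 hs t (SuccessEvent Tp)
      (fun s0 l1 l2 _ hlast hpw => SCOF_success_append hTpT hlast hpw)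
    rw [h, ← hEuniv t, ← hVpt, mul_comm]
  have main : trajMeasure T P π μ (SuccessEvent Tp) * dPlusOcc T Tp P π μ s
      = ENNReal.ofReal (Vval T Tp P π s) * dOcc T P π μ s := by
    rw [show dPlusOcc T Tp P π μ s
        = ∫⁻ ω, (∑' t : ℕ, if stateAt ω t = s then 1 else 0)
            ∂(ProbabilityTheory.cond (trajMeasure T P π μ) (SuccessEvent Tp)) from rfl]
    unfold ProbabilityTheory.cond
    rw [lintegral_smul_measure, smul_eq_mul, ← mul_assoc,
      ENNReal.mul_inv_cancel hρ0 hρtop, one_mul,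
      ← lintegral_indicator MeasurableSpace.measurableSet_top, SCOF_lintegral]
    refine Eq.trans (tsum_congr fun ω => SCOF_pointwise (SuccessEvent Tp) s _ ω) ?_
    rw [ENNReal.tsum_comm]
    refine Eq.trans (tsum_congr fun t : ℕ =>
      (SCOF_measE T P π μ ({ω | stateAt ω t = s} ∩ SuccessEvent Tp)).symm) ?_
    refine Eq.trans (tsum_congr hkey) ?_
    rw [ENNReal.tsum_mul_left]
    rfl
  exact ⟨main, by rw [ENNReal.eq_div_iff hρ0 hρtop]; exact main⟩
end

section
/- Exact improvement formula: assume d_{π₊}(s) < ∞ for every nonterminal state s. Then ρ(π₊) − ρ(π0) = Σ_{s nonterminal} d_{π₊}(s)·V_{π0}(s)·I(s). -/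
open MeasureTheory
open scoped ENNReal

variable {S A : Type*}

-- (auxiliary lemmas)
-- AUX START
namespace EIF

lemma stateAt_nil (x : S) (t : ℕ) : stateAt (⟨x, []⟩ : Traj S A) t = x := by
  cases t <;> simp [stateAt, lastState, List.getD]

lemma stateAt_zero (ω : Traj S A) : stateAt ω 0 = ω.init := by
  simp [stateAt]

lemma lastState_cons (x s1 : S) (a : A) (l : List (A × S)) :
    lastState (⟨x, (a, s1) :: l⟩ : Traj S A) = lastState (⟨s1, l⟩ : Traj S A) := by
  simp [lastState]

lemma stateAt_cons (x s1 : S) (a : A) (l : List (A × S)) (t : ℕ) :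
    stateAt (⟨x, (a, s1) :: l⟩ : Traj S A) (t + 1) = stateAt (⟨s1, l⟩ : Traj S A) t := by
  simp [stateAt, lastState_cons, List.getD]

def trajEquiv : Traj S A ≃ S × List (A × S) where
  toFun ω := (ω.init, ω.steps)
  invFun p := ⟨p.1, p.2⟩
  left_inv ω := rfl
  right_inv p := rfl

variable [DecidableEq S] (T : Finset S) (P : S → A → S → ℝ) (π : S → A → ℝ)

lemma trajMeasure_apply (μ : S → ℝ) (E : Set (Traj S A)) :
    trajMeasure T P π μ E
      = ∑' (s : S) (l : List (A × S)),
          E.indicator (fun ω => ENNReal.ofReal (μ ω.init * pathWeight T P π ω.init ω.steps))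
            ⟨s, l⟩ := by
  rw [trajMeasure, Measure.sum_apply _ MeasurableSpace.measurableSet_top]
  rw [← Equiv.tsum_eq (trajEquiv (S := S) (A := A)).symm
      (fun ω => (ENNReal.ofReal (μ ω.init * pathWeight T P π ω.init ω.steps) •
        Measure.dirac ω) E)]
  rw [← ENNReal.tsum_prod]
  refine tsum_congr fun p => ?_
  rw [Measure.smul_apply, Measure.dirac_apply' _ MeasurableSpace.measurableSet_top]
  by_cases h : (⟨p.1, p.2⟩ : Traj S A) ∈ E
  · simp [trajEquiv, Set.indicator_of_mem h]
  · simp [trajEquiv, Set.indicator_of_notMem h]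

lemma point_apply (x : S) (E : Set (Traj S A)) :
    trajMeasure T P π (pointMass x) E
      = ∑' l : List (A × S),
          E.indicator (fun ω => ENNReal.ofReal (pathWeight T P π x ω.steps)) ⟨x, l⟩ := by
  rw [trajMeasure_apply]
  rw [tsum_eq_single x]
  · refine tsum_congr fun l => ?_
    by_cases h : (⟨x, l⟩ : Traj S A) ∈ E
    · simp [Set.indicator_of_mem h, pointMass]
    · simp [Set.indicator_of_notMem h]
  · intro s' hs'
    refine Summable.tsum_eq_zero_iff ENNReal.summable |>.mpr fun l => ?_
    by_cases h : (⟨s', l⟩ : Traj S A) ∈ E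
    · simp [Set.indicator_of_mem h, pointMass, hs']
    · simp [Set.indicator_of_notMem h]

lemma mix_apply (μ : S → ℝ) (hμ : ∀ s, 0 ≤ μ s) [Fintype S] (E : Set (Traj S A)) :
    trajMeasure T P π μ E
      = ∑ x : S, ENNReal.ofReal (μ x) * trajMeasure T P π (pointMass x) E := by
  rw [trajMeasure_apply, tsum_fintype]
  refine Finset.sum_congr rfl fun x _ => ?_
  rw [point_apply, ← ENNReal.tsum_mul_left]
  refine tsum_congr fun l => ?_
  by_cases h : (⟨x, l⟩ : Traj S A) ∈ E
  · simp [Set.indicator_of_mem h, ENNReal.ofReal_mul (hμ x)]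
  · simp [Set.indicator_of_notMem h]

lemma point_congr (x : S) {E E' : Set (Traj S A)}
    (h : ∀ l : List (A × S), (⟨x, l⟩ : Traj S A) ∈ E ↔ (⟨x, l⟩ : Traj S A) ∈ E') :
    trajMeasure T P π (pointMass x) E = trajMeasure T P π (pointMass x) E' := by
  rw [point_apply, point_apply]
  refine tsum_congr fun l => ?_
  by_cases hE : (⟨x, l⟩ : Traj S A) ∈ E
  · rw [Set.indicator_of_mem hE, Set.indicator_of_mem ((h l).mp hE)]
  · rw [Set.indicator_of_notMem hE, Set.indicator_of_notMem (fun hc => hE ((h l).mpr hc))]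

lemma point_term {x : S} (hx : x ∈ T) (E : Set (Traj S A)) :
    trajMeasure T P π (pointMass x) E
      = E.indicator (fun _ => (1 : ℝ≥0∞)) ⟨x, []⟩ := by
  classical
  rw [point_apply, tsum_eq_single ([] : List (A × S))]
  · by_cases h : (⟨x, ([] : List (A × S))⟩ : Traj S A) ∈ E
    · simp [Set.indicator_of_mem h, pathWeight, hx]
    · simp [Set.indicator_of_notMem h, h]
  · intro l hl
    match l with
    | [] => exact absurd rfl hl
    | (a, s') :: l' =>
      by_cases h : (⟨x, (a, s') :: l'⟩ : Traj S A) ∈ E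
      · simp [Set.indicator_of_mem h, pathWeight, hx]
      · simp [Set.indicator_of_notMem h]

lemma point_step {x : S} (hx : x ∉ T) (hπ : ∀ a, 0 ≤ π x a) (hP : ∀ a s', 0 ≤ P x a s')
    [Fintype S] [Fintype A] (E : Set (Traj S A)) :
    trajMeasure T P π (pointMass x) E
      = ∑ a : A, ∑ s1 : S, ENNReal.ofReal (π x a * P x a s1) *
          trajMeasure T P π (pointMass s1)
            {ω : Traj S A | (⟨x, (a, s1) :: ω.steps⟩ : Traj S A) ∈ E} := by
  classical
  rw [point_apply]
  have hinj : Function.Injective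
      (fun p : (A × S) × List (A × S) => p.1 :: p.2 : (A × S) × List (A × S) → List (A × S)) := by
    intro p q h
    simp only [List.cons.injEq] at h
    exact Prod.ext h.1 h.2
  rw [← Function.Injective.tsum_eq hinj ?hsupp]
  case hsupp =>
    intro l hl
    match l with
    | [] =>
      exfalso
      apply hl
      by_cases h : (⟨x, ([] : List (A × S))⟩ : Traj S A) ∈ E
      · simp [Set.indicator_of_mem h, pathWeight, hx]
      · simp [Set.indicator_of_notMem h]
    | (a, s') :: l' => exact ⟨((a, s'), l'), rfl⟩
  rw [ENNReal.tsum_prod (f := fun (y : A × S) (l : List (A × S)) =>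
    E.indicator (fun ω => ENNReal.ofReal (pathWeight T P π x ω.steps)) ⟨x, y :: l⟩)]
  rw [ENNReal.tsum_prod (f := fun (a : A) (s1 : S) => ∑' l : List (A × S),
    E.indicator (fun ω => ENNReal.ofReal (pathWeight T P π x ω.steps)) ⟨x, (a, s1) :: l⟩)]
  rw [tsum_fintype]
  refine Finset.sum_congr rfl fun a _ => ?_
  rw [tsum_fintype]
  refine Finset.sum_congr rfl fun s1 _ => ?_
  rw [point_apply, ← ENNReal.tsum_mul_left]
  refine tsum_congr fun l => ?_
  by_cases h : (⟨x, (a, s1) :: l⟩ : Traj S A) ∈ E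
  · have h2 : (⟨s1, l⟩ : Traj S A) ∈
        {ω : Traj S A | (⟨x, (a, s1) :: ω.steps⟩ : Traj S A) ∈ E} := h
    rw [Set.indicator_of_mem h, Set.indicator_of_mem h2]
    have : pathWeight T P π x ((a, s1) :: l) = π x a * P x a s1 * pathWeight T P π s1 l := by
      simp [pathWeight, hx]
    simp only []
    rw [this, ENNReal.ofReal_mul (mul_nonneg (hπ a) (hP a s1))]
  · have h2 : (⟨s1, l⟩ : Traj S A) ∉
        {ω : Traj S A | (⟨x, (a, s1) :: ω.steps⟩ : Traj S A) ∈ E} := h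
    rw [Set.indicator_of_notMem h, Set.indicator_of_notMem h2]
    simp


section Policy
variable [Fintype S] [Fintype A]

def StateEvent (t : ℕ) (s : S) : Set (Traj S A) := {ω | stateAt ω t = s}

lemma mem_success_nil (Tp : Finset S) (x : S) :
    (⟨x, []⟩ : Traj S A) ∈ SuccessEvent Tp ↔ x ∈ Tp := by
  simp [SuccessEvent, stateAt_nil]

lemma mem_success_cons {Tp : Finset S} {x : S} (hx : x ∉ Tp) (a : A) (s1 : S)
    (l : List (A × S)) :
    (⟨x, (a, s1) :: l⟩ : Traj S A) ∈ SuccessEvent Tp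
      ↔ (⟨s1, l⟩ : Traj S A) ∈ SuccessEvent Tp := by
  constructor
  · rintro ⟨t, ht⟩
    cases t with
    | zero => rw [stateAt_zero] at ht; exact absurd ht hx
    | succ t => exact ⟨t, by rwa [stateAt_cons] at ht⟩
  · rintro ⟨t, ht⟩
    exact ⟨t + 1, by rwa [stateAt_cons]⟩

lemma mem_state_nil (t : ℕ) (s x : S) :
    (⟨x, []⟩ : Traj S A) ∈ StateEvent t s ↔ x = s := by
  simp [StateEvent, stateAt_nil]

lemma mem_state_cons (t : ℕ) (s x s1 : S) (a : A) (l : List (A × S)) :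
    (⟨x, (a, s1) :: l⟩ : Traj S A) ∈ StateEvent (t + 1) s
      ↔ (⟨s1, l⟩ : Traj S A) ∈ StateEvent t s := by
  simp [StateEvent, stateAt_cons]

variable (T Tp : Finset S) (P : S → A → S → ℝ) (π : S → A → ℝ)

lemma G_term {x : S} (hx : x ∈ T) :
    trajMeasure T P π (pointMass x) (SuccessEvent Tp) = if x ∈ Tp then 1 else 0 := by
  rw [point_term T P π hx]
  by_cases h : x ∈ Tp
  · rw [Set.indicator_of_mem ((mem_success_nil Tp x).mpr h), if_pos h]
  · rw [Set.indicator_of_notMem (fun hc => h ((mem_success_nil Tp x).mp hc)), if_neg h]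

lemma G_step (hsub : Tp ⊆ T) (hP : ∀ s a, IsPMFOn (P s a))
    (hπ : ∀ s ∉ T, IsPMFOn (π s)) {x : S} (hx : x ∉ T) :
    trajMeasure T P π (pointMass x) (SuccessEvent Tp)
      = ∑ a : A, ∑ s1 : S, ENNReal.ofReal (π x a * P x a s1) *
          trajMeasure T P π (pointMass s1) (SuccessEvent Tp) := by
  rw [point_step T P π hx (hπ x hx).1 (fun a s' => (hP x a).1 s')]
  refine Finset.sum_congr rfl fun a _ => Finset.sum_congr rfl fun s1 _ => ?_
  congr 1
  refine point_congr T P π s1 fun l => ?_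
  have : (⟨s1, l⟩ : Traj S A) ∈
      {ω : Traj S A | (⟨x, (a, s1) :: ω.steps⟩ : Traj S A) ∈ SuccessEvent Tp}
      ↔ (⟨x, (a, s1) :: l⟩ : Traj S A) ∈ SuccessEvent Tp := Iff.rfl
  rw [this, mem_success_cons (fun hc => hx (hsub hc))]

lemma m_term {x : S} (hx : x ∈ T) (t : ℕ) (s : S) :
    trajMeasure T P π (pointMass x) (StateEvent t s) = if x = s then 1 else 0 := by
  rw [point_term T P π hx]
  by_cases h : x = s
  · rw [Set.indicator_of_mem ((mem_state_nil t s x).mpr h), if_pos h]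
  · rw [Set.indicator_of_notMem (fun hc => h ((mem_state_nil t s x).mp hc)), if_neg h]

lemma m_zero (hT : ∀ s : S, trajMeasure T P π (pointMass s) Set.univ = 1) (x s : S) :
    trajMeasure T P π (pointMass x) (StateEvent 0 s) = if x = s then 1 else 0 := by
  by_cases h : x = s
  · rw [if_pos h, ← hT x]
    refine point_congr T P π x fun l => ?_
    simp [StateEvent, stateAt_zero, h]
  · rw [if_neg h, ← measure_empty (μ := trajMeasure T P π (pointMass x))]
    refine point_congr T P π x fun l => ?_
    simp [StateEvent, stateAt_zero, h]

lemma m_step (hP : ∀ s a, IsPMFOn (P s a)) (hπ : ∀ s ∉ T, IsPMFOn (π s))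
    {x : S} (hx : x ∉ T) (t : ℕ) (s : S) :
    trajMeasure T P π (pointMass x) (StateEvent (t + 1) s)
      = ∑ a : A, ∑ s1 : S, ENNReal.ofReal (π x a * P x a s1) *
          trajMeasure T P π (pointMass s1) (StateEvent t s) := by
  rw [point_step T P π hx (hπ x hx).1 (fun a s' => (hP x a).1 s')]
  refine Finset.sum_congr rfl fun a _ => Finset.sum_congr rfl fun s1 _ => ?_
  congr 1
  refine point_congr T P π s1 fun l => ?_
  have : (⟨s1, l⟩ : Traj S A) ∈
      {ω : Traj S A | (⟨x, (a, s1) :: ω.steps⟩ : Traj S A) ∈ StateEvent (t + 1) s}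
      ↔ (⟨x, (a, s1) :: l⟩ : Traj S A) ∈ StateEvent (t + 1) s := Iff.rfl
  rw [this, mem_state_cons]

/-- The one-step transition kernel of the chain (absorbing on `T`). -/
noncomputable def Kker (T : Finset S) (P : S → A → S → ℝ) (π : S → A → ℝ) (y s : S) : ℝ≥0∞ :=
  if y ∈ T then (if y = s then 1 else 0) else ∑ a : A, ENNReal.ofReal (π y a * P y a s)

lemma chapman (hP : ∀ s a, IsPMFOn (P s a)) (hπ : ∀ s ∉ T, IsPMFOn (π s))
    (hT : ∀ s : S, trajMeasure T P π (pointMass s) Set.univ = 1) :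
    ∀ (t : ℕ) (x s : S),
      trajMeasure T P π (pointMass x) (StateEvent (t + 1) s)
        = ∑ y : S, trajMeasure T P π (pointMass x) (StateEvent t y) * Kker T P π y s := by
  intro t
  induction t with
  | zero =>
    intro x s
    have hm1 : ∀ x s : S, trajMeasure T P π (pointMass x) (StateEvent 1 s) = Kker T P π x s := by
      intro x s
      by_cases hx : x ∈ T
      · rw [m_term T P π hx, Kker, if_pos hx]
      · rw [m_step T P π hP hπ hx, Kker, if_neg hx]
        refine Finset.sum_congr rfl fun a _ => ?_
        rw [Finset.sum_congr rfl (fun s1 _ => by rw [m_zero T P π hT s1 s])]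
        simp
    rw [hm1]
    rw [Finset.sum_congr rfl (fun y _ => by rw [m_zero T P π hT x y])]
    simp only [ite_mul, one_mul, zero_mul, Finset.sum_ite_eq, Finset.mem_univ, if_true]
  | succ t ih =>
    intro x s
    by_cases hx : x ∈ T
    · rw [m_term T P π hx]
      rw [Finset.sum_congr rfl (fun y _ => by rw [m_term T P π hx])]
      simp only [ite_mul, one_mul, zero_mul, Finset.sum_ite_eq, Finset.mem_univ, if_true]
      simp [Kker, hx]
    · rw [m_step T P π hP hπ hx]
      have : ∀ a : A, ∀ s1 : S,
          ENNReal.ofReal (π x a * P x a s1) *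
            trajMeasure T P π (pointMass s1) (StateEvent (t + 1) s)
          = ∑ y : S, ENNReal.ofReal (π x a * P x a s1) *
              trajMeasure T P π (pointMass s1) (StateEvent t y) * Kker T P π y s := by
        intro a s1
        rw [ih s1 s, Finset.mul_sum]
        exact Finset.sum_congr rfl fun y _ => by ring
      rw [Finset.sum_congr rfl (fun a _ => Finset.sum_congr rfl fun s1 _ => this a s1)]
      rw [Finset.sum_congr rfl (fun a _ => Finset.sum_comm)]
      rw [Finset.sum_comm]
      refine Finset.sum_congr rfl fun y _ => ?_
      rw [m_step T P π hP hπ hx, Finset.sum_mul]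
      exact Finset.sum_congr rfl fun a _ => by rw [Finset.sum_mul]

lemma G_le_one (hT : ∀ s : S, trajMeasure T P π (pointMass s) Set.univ = 1) (x : S)
    (E : Set (Traj S A)) : trajMeasure T P π (pointMass x) E ≤ 1 := by
  rw [← hT x]
  exact measure_mono (Set.subset_univ E)


lemma supp_mono {Tp : Finset S} (hsub : Tp ⊆ T) :
    ∀ (l : List (A × S)) (x : S), pathWeight T P π x l ≠ 0 →
      ∀ t N : ℕ, t ≤ N → stateAt (⟨x, l⟩ : Traj S A) t ∈ Tp →
        stateAt (⟨x, l⟩ : Traj S A) N ∈ Tp := by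
  intro l
  induction l with
  | nil => intro x _ t N _ ht; rw [stateAt_nil] at ht ⊢; exact ht
  | cons p l ih =>
    obtain ⟨a, s1⟩ := p
    intro x hw t N htN ht
    have hx : x ∉ T := by
      intro hxT
      exact hw (by simp [pathWeight, hxT])
    have hw' : pathWeight T P π s1 l ≠ 0 := by
      intro h0
      exact hw (by simp [pathWeight, h0])
    cases t with
    | zero => rw [stateAt_zero] at ht; exact absurd (hsub ht) hx
    | succ t =>
      cases N with
      | zero => omega
      | succ N =>
        rw [stateAt_cons] at ht ⊢
        exact ih s1 hw' t N (by omega) ht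

lemma measure_upto_le (Tp : Finset S) (hsub : Tp ⊆ T) (μ : S → ℝ) (N : ℕ) :
    trajMeasure T P π μ {ω : Traj S A | ∃ t ≤ N, stateAt ω t ∈ Tp}
      ≤ trajMeasure T P π μ {ω : Traj S A | stateAt ω N ∈ Tp} := by
  rw [trajMeasure_apply, trajMeasure_apply]
  refine ENNReal.tsum_le_tsum fun x => ENNReal.tsum_le_tsum fun l => ?_
  by_cases hC : (⟨x, l⟩ : Traj S A) ∈ {ω : Traj S A | ∃ t ≤ N, stateAt ω t ∈ Tp}
  · rw [Set.indicator_of_mem hC]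
    by_cases hw : pathWeight T P π x l = 0
    · simp [hw]
    · obtain ⟨t, htN, ht⟩ := hC
      have hB : (⟨x, l⟩ : Traj S A) ∈ {ω : Traj S A | stateAt ω N ∈ Tp} :=
        supp_mono T P π hsub l x hw t N htN ht
      rw [Set.indicator_of_mem hB]
  · rw [Set.indicator_of_notMem hC]
    exact zero_le

lemma measure_upto_eq (Tp : Finset S) (hsub : Tp ⊆ T) (μ : S → ℝ) (N : ℕ) :
    trajMeasure T P π μ {ω : Traj S A | ∃ t ≤ N, stateAt ω t ∈ Tp}
      = trajMeasure T P π μ {ω : Traj S A | stateAt ω N ∈ Tp} :=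
  le_antisymm (measure_upto_le T P π Tp hsub μ N)
    (measure_mono fun ω h => ⟨N, le_refl N, h⟩)

lemma rho_eq_iSup (Tp : Finset S) (hsub : Tp ⊆ T) (μ : S → ℝ) :
    trajMeasure T P π μ (SuccessEvent Tp)
      = ⨆ N : ℕ, trajMeasure T P π μ {ω : Traj S A | stateAt ω N ∈ Tp} := by
  have h1 : SuccessEvent Tp
      = ⋃ N : ℕ, {ω : Traj S A | ∃ t ≤ N, stateAt ω t ∈ Tp} := by
    ext ω
    simp only [SuccessEvent, Set.mem_setOf_eq, Set.mem_iUnion]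
    constructor
    · rintro ⟨t, ht⟩; exact ⟨t, t, le_refl t, ht⟩
    · rintro ⟨N, t, _, ht⟩; exact ⟨t, ht⟩
  rw [h1, Directed.measure_iUnion]
  · exact iSup_congr fun N => measure_upto_eq T P π Tp hsub μ N
  · exact (monotone_nat_of_le_succ fun N => fun ω => by
      rintro ⟨t, htN, ht⟩; exact ⟨t, Nat.le_succ_of_le htN, ht⟩).directed_le

lemma stateEvent_in_Tp (Tp : Finset S) (μ : S → ℝ) (N : ℕ) :
    trajMeasure T P π μ {ω : Traj S A | stateAt ω N ∈ Tp}
      = ∑ s ∈ Tp, trajMeasure T P π μ (StateEvent N s) := by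
  have : {ω : Traj S A | stateAt ω N ∈ Tp} = ⋃ s ∈ (Tp : Finset S), StateEvent N s := by
    ext ω
    simp [StateEvent]
  rw [this, measure_biUnion_finset]
  · intro s _ s' _ hss
    refine Set.disjoint_left.mpr fun ω h1 h2 => hss ?_
    rw [← h1, ← h2]
  · exact fun s _ => MeasurableSpace.measurableSet_top

lemma u_monotone (Tp : Finset S) (hsub : Tp ⊆ T) (μ : S → ℝ) :
    Monotone fun N : ℕ => ∑ s ∈ Tp, trajMeasure T P π μ (StateEvent N s) := by
  intro N M hNM
  simp only []
  rw [← stateEvent_in_Tp, ← stateEvent_in_Tp, ← measure_upto_eq T P π Tp hsub μ,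
    ← measure_upto_eq T P π Tp hsub μ]
  exact measure_mono fun ω => by rintro ⟨t, htN, ht⟩; exact ⟨t, le_trans htN hNM, ht⟩

lemma rho_eq_iSup_u (Tp : Finset S) (hsub : Tp ⊆ T) (μ : S → ℝ) :
    trajMeasure T P π μ (SuccessEvent Tp)
      = ⨆ N : ℕ, ∑ s ∈ Tp, trajMeasure T P π μ (StateEvent N s) := by
  rw [rho_eq_iSup T P π Tp hsub μ]
  exact iSup_congr fun N => stateEvent_in_Tp T P π Tp μ N


lemma master (Tp : Finset S) (hsub : Tp ⊆ T) (hP : ∀ s a, IsPMFOn (P s a))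
    (π0 : S → A → ℝ) (hπ : ∀ s ∉ T, IsPMFOn (π s))
    (hTπ : ∀ s : S, trajMeasure T P π (pointMass s) Set.univ = 1)
    (μ : S → ℝ) (hμ : ∀ s, 0 ≤ μ s) (hμT : ∀ s ∈ T, μ s = 0) :
    trajMeasure T P π μ (SuccessEvent Tp)
      + ∑ y ∈ Tᶜ, dOcc T P π μ y * trajMeasure T P π0 (pointMass y) (SuccessEvent Tp)
    = trajMeasure T P π0 μ (SuccessEvent Tp)
      + ∑ y ∈ Tᶜ, dOcc T P π μ y *
          (∑ a : A, ∑ s : S, ENNReal.ofReal (π y a * P y a s) *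
            trajMeasure T P π0 (pointMass s) (SuccessEvent Tp)) := by
  classical
  set v : S → ℝ≥0∞ := fun s => trajMeasure T P π0 (pointMass s) (SuccessEvent Tp) with hv
  set Em : ℕ → S → ℝ≥0∞ := fun t s => trajMeasure T P π μ (StateEvent t s) with hEm
  set B : S → ℝ≥0∞ := fun y => ∑ a : A, ∑ s : S, ENNReal.ofReal (π y a * P y a s) * v s
    with hB
  have hvT : ∀ s ∈ T, v s = (if s ∈ Tp then 1 else 0) := fun s hs => G_term T Tp P π0 hs
  have hEmix : ∀ t s, Em t s
      = ∑ x : S, ENNReal.ofReal (μ x) * trajMeasure T P π (pointMass x) (StateEvent t s) :=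
    fun t s => mix_apply T P π μ hμ _
  have hE0 : ∀ s, Em 0 s = ENNReal.ofReal (μ s) := by
    intro s
    rw [hEmix, Finset.sum_congr rfl (fun x _ => by rw [m_zero T P π hTπ x s])]
    simp only [mul_ite, mul_one, mul_zero, Finset.sum_ite_eq', Finset.mem_univ, if_true]
  have hEstep : ∀ t s, Em (t + 1) s = ∑ y : S, Em t y * Kker T P π y s := by
    intro t s
    rw [hEmix,
      Finset.sum_congr rfl (fun x _ => by rw [chapman T P π hP hπ hTπ t x s, Finset.mul_sum])]
    rw [Finset.sum_comm]
    refine Finset.sum_congr rfl fun y _ => ?_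
    rw [hEmix, Finset.sum_mul]
    exact Finset.sum_congr rfl fun x _ => (mul_assoc _ _ _).symm
  have hsumTtoTp : ∀ f : S → ℝ≥0∞, (∑ s ∈ T, f s * v s) = ∑ s ∈ Tp, f s := by
    intro f
    have h1 : ∑ s ∈ Tp, f s * v s = ∑ s ∈ T, f s * v s :=
      Finset.sum_subset hsub fun x hx hnx => by rw [hvT x hx, if_neg hnx, mul_zero]
    rw [← h1]
    exact Finset.sum_congr rfl fun s hs => by rw [hvT s (hsub hs), if_pos hs, mul_one]
  have hsplit : ∀ f : S → ℝ≥0∞,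
      (∑ s : S, f s * v s) = (∑ s ∈ Tp, f s) + ∑ s ∈ Tᶜ, f s * v s := by
    intro f
    rw [← Finset.sum_add_sum_compl T (fun s => f s * v s), hsumTtoTp]
  have hKv : ∀ y : S, (∑ s : S, Kker T P π y s * v s) = if y ∈ T then v y else B y := by
    intro y
    by_cases hy : y ∈ T
    · rw [if_pos hy]
      simp only [Kker, if_pos hy, ite_mul, one_mul, zero_mul, Finset.sum_ite_eq,
        Finset.mem_univ, if_true]
    · rw [if_neg hy]
      simp only [Kker, if_neg hy, hB, Finset.sum_mul]
      rw [Finset.sum_comm]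
  have key : ∀ t : ℕ,
      (∑ s ∈ Tp, Em (t + 1) s) + (∑ y ∈ Tᶜ, Em (t + 1) y * v y)
        = (∑ s ∈ Tp, Em t s) + (∑ y ∈ Tᶜ, Em t y * B y) := by
    intro t
    have hF : (∑ s : S, Em (t + 1) s * v s)
        = (∑ s ∈ Tp, Em (t + 1) s) + ∑ y ∈ Tᶜ, Em (t + 1) y * v y := hsplit _
    have hF2 : (∑ s : S, Em (t + 1) s * v s)
        = (∑ s ∈ Tp, Em t s) + ∑ y ∈ Tᶜ, Em t y * B y := by
      calc (∑ s : S, Em (t + 1) s * v s)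
          = ∑ s : S, (∑ y : S, Em t y * Kker T P π y s) * v s := by
            exact Finset.sum_congr rfl fun s _ => by rw [hEstep]
        _ = ∑ y : S, Em t y * (∑ s : S, Kker T P π y s * v s) := by
            simp only [Finset.sum_mul]
            rw [Finset.sum_comm]
            refine Finset.sum_congr rfl fun y _ => ?_
            rw [Finset.mul_sum]
            exact Finset.sum_congr rfl fun s _ => (mul_assoc _ _ _)
        _ = ∑ y : S, Em t y * (if y ∈ T then v y else B y) := by
            exact Finset.sum_congr rfl fun y _ => by rw [hKv]
        _ = (∑ s ∈ Tp, Em t s) + ∑ y ∈ Tᶜ, Em t y * B y := by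
            rw [← Finset.sum_add_sum_compl T
              (fun y => Em t y * (if y ∈ T then v y else B y))]
            congr 1
            · rw [← hsumTtoTp (fun y => Em t y)]
              exact Finset.sum_congr rfl fun y hy => by rw [if_pos hy]
            · exact Finset.sum_congr rfl fun y hy => by
                rw [if_neg (Finset.mem_compl.mp hy)]
    rw [← hF]
    exact hF2
  have hu0 : (∑ s ∈ Tp, Em 0 s) = 0 := by
    refine Finset.sum_eq_zero fun s hs => ?_
    rw [hE0, hμT s (hsub hs), ENNReal.ofReal_zero]
  have partial_id : ∀ N : ℕ,
      (∑ s ∈ Tp, Em N s) + (∑ t ∈ Finset.range N, ∑ y ∈ Tᶜ, Em (t + 1) y * v y)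
        = ∑ t ∈ Finset.range N, ∑ y ∈ Tᶜ, Em t y * B y := by
    intro N
    induction N with
    | zero => simp [hu0]
    | succ N ih =>
      rw [Finset.sum_range_succ, Finset.sum_range_succ
        (f := fun t => ∑ y ∈ Tᶜ, Em t y * B y)]
      calc (∑ s ∈ Tp, Em (N + 1) s)
            + ((∑ t ∈ Finset.range N, ∑ y ∈ Tᶜ, Em (t + 1) y * v y)
              + ∑ y ∈ Tᶜ, Em (N + 1) y * v y)
          = ((∑ s ∈ Tp, Em (N + 1) s) + ∑ y ∈ Tᶜ, Em (N + 1) y * v y)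
            + ∑ t ∈ Finset.range N, ∑ y ∈ Tᶜ, Em (t + 1) y * v y := by ring
        _ = ((∑ s ∈ Tp, Em N s) + ∑ y ∈ Tᶜ, Em N y * B y)
            + ∑ t ∈ Finset.range N, ∑ y ∈ Tᶜ, Em (t + 1) y * v y := by rw [key N]
        _ = ((∑ s ∈ Tp, Em N s) + ∑ t ∈ Finset.range N, ∑ y ∈ Tᶜ, Em (t + 1) y * v y)
            + ∑ y ∈ Tᶜ, Em N y * B y := by ring
        _ = (∑ t ∈ Finset.range N, ∑ y ∈ Tᶜ, Em t y * B y) + ∑ y ∈ Tᶜ, Em N y * B y := by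
            rw [ih]
  have hmono_u : Monotone fun N : ℕ => ∑ s ∈ Tp, Em N s := u_monotone T P π Tp hsub μ
  have hmono_z : Monotone fun N : ℕ =>
      ∑ t ∈ Finset.range N, ∑ y ∈ Tᶜ, Em (t + 1) y * v y := by
    intro N M h
    exact Finset.sum_le_sum_of_subset (Finset.range_subset_range.mpr h)
  have h1 : (⨆ N : ℕ, ((∑ s ∈ Tp, Em N s)
        + ∑ t ∈ Finset.range N, ∑ y ∈ Tᶜ, Em (t + 1) y * v y))
      = ⨆ N : ℕ, ∑ t ∈ Finset.range N, ∑ y ∈ Tᶜ, Em t y * B y := iSup_congr partial_id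
  rw [← ENNReal.iSup_add_iSup_of_monotone hmono_u hmono_z] at h1
  rw [← rho_eq_iSup_u T P π Tp hsub μ, ← ENNReal.tsum_eq_iSup_nat,
    ← ENNReal.tsum_eq_iSup_nat] at h1
  -- h1 : ρπ + ∑' t, z (t+1) = ∑' t, w t
  have hz_tsum : (∑' t : ℕ, ∑ y ∈ Tᶜ, Em t y * v y) = ∑ y ∈ Tᶜ, dOcc T P π μ y * v y := by
    rw [Summable.tsum_finsetSum (fun i _ => ENNReal.summable)]
    exact Finset.sum_congr rfl fun y _ => by rw [ENNReal.tsum_mul_right]; rfl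
  have hw_tsum : (∑' t : ℕ, ∑ y ∈ Tᶜ, Em t y * B y) = ∑ y ∈ Tᶜ, dOcc T P π μ y * B y := by
    rw [Summable.tsum_finsetSum (fun i _ => ENNReal.summable)]
    exact Finset.sum_congr rfl fun y _ => by rw [ENNReal.tsum_mul_right]; rfl
  have hz0 : (∑ y ∈ Tᶜ, Em 0 y * v y) = trajMeasure T P π0 μ (SuccessEvent Tp) := by
    rw [mix_apply T P π0 μ hμ, ← Finset.sum_add_sum_compl T
      (fun x => ENNReal.ofReal (μ x) * v x)]
    have hTzero : (∑ x ∈ T, ENNReal.ofReal (μ x) * v x) = 0 :=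
      Finset.sum_eq_zero fun x hx => by rw [hμT x hx, ENNReal.ofReal_zero, zero_mul]
    rw [hTzero, zero_add]
    exact Finset.sum_congr rfl fun y _ => by rw [hE0]
  have hsplit_tsum : (∑' t : ℕ, ∑ y ∈ Tᶜ, Em t y * v y)
      = (∑ y ∈ Tᶜ, Em 0 y * v y) + ∑' t : ℕ, ∑ y ∈ Tᶜ, Em (t + 1) y * v y :=
    tsum_eq_zero_add' ENNReal.summable
  calc trajMeasure T P π μ (SuccessEvent Tp) + ∑ y ∈ Tᶜ, dOcc T P π μ y * v y
      = trajMeasure T P π μ (SuccessEvent Tp) + ∑' t : ℕ, ∑ y ∈ Tᶜ, Em t y * v y := by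
        rw [hz_tsum]
    _ = (∑ y ∈ Tᶜ, Em 0 y * v y)
        + (trajMeasure T P π μ (SuccessEvent Tp)
            + ∑' t : ℕ, ∑ y ∈ Tᶜ, Em (t + 1) y * v y) := by
        rw [hsplit_tsum]; ring
    _ = (∑ y ∈ Tᶜ, Em 0 y * v y) + ∑' t : ℕ, ∑ y ∈ Tᶜ, Em t y * B y := by rw [h1]
    _ = trajMeasure T P π0 μ (SuccessEvent Tp) + ∑ y ∈ Tᶜ, dOcc T P π μ y * B y := by
        rw [hz0, hw_tsum]

end Policy

end EIF

/-- **Exact improvement formula.**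
Episodic-MDP setup: `S` finite with terminal set `𝒯 = 𝒯₊ ∪ 𝒯₋` (disjoint), `A`
finite nonempty, transition kernel `P` (a pmf in its last argument) absorbing on
`𝒯`, every Markov policy reaching `𝒯` almost surely from every state, behavior
policy `π0` with `V_{π0}(s) > 0` at every nonterminal `s`, and initial
distribution `μ` supported on nonterminal states.

Assume `d_{π₊}(s) < ∞` for every nonterminal state `s`.  Then
`ρ(π₊) − ρ(π0) = Σ_{s nonterminal} d_{π₊}(s)·V_{π0}(s)·I(s)`. -/
theorem exact_improvement_formula
    {S A : Type*} [Fintype S] [DecidableEq S] [Fintype A] [Nonempty A]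
    (T Tp Tm : Finset S) (hpart : Tp ∪ Tm = T) (hdisj : Disjoint Tp Tm)
    (P : S → A → S → ℝ) (hP : ∀ s a, IsPMFOn (P s a))
    (habs : ∀ s ∈ T, ∀ a, P s a s = 1)
    (hterm : ∀ π : S → A → ℝ, (∀ s ∉ T, IsPMFOn (π s)) →
      ∀ s : S, trajMeasure T P π (pointMass s) Set.univ = 1)
    (π0 : S → A → ℝ) (hπ0 : ∀ s ∉ T, IsPMFOn (π0 s))
    (hV0 : ∀ s ∉ T, 0 < Vval T Tp P π0 s)
    (μ : S → ℝ) (hμ : IsPMFOn μ) (hμT : ∀ s ∈ T, μ s = 0)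
    (hd : ∀ s ∉ T, dOcc T P (piPlus T Tp P π0) μ s ≠ ⊤) :
    (trajMeasure T P (piPlus T Tp P π0) μ (SuccessEvent Tp)).toReal
        - (trajMeasure T P π0 μ (SuccessEvent Tp)).toReal
      = ∑ s ∈ Tᶜ, (dOcc T P (piPlus T Tp P π0) μ s).toReal
          * Vval T Tp P π0 s * influence T Tp P π0 s := by
  classical
  have hsub : Tp ⊆ T := hpart ▸ Finset.subset_union_left
  set π' := piPlus T Tp P π0 with hπ'def
  have hT0 : ∀ s : S, trajMeasure T P π0 (pointMass s) Set.univ = 1 := hterm π0 hπ0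
  have hvne : ∀ s : S, trajMeasure T P π0 (pointMass s) (SuccessEvent Tp) ≠ ⊤ :=
    fun s => (lt_of_le_of_lt (EIF.G_le_one T P π0 hT0 s _) ENNReal.one_lt_top).ne
  have hVdef : ∀ s, Vval T Tp P π0 s
      = (trajMeasure T P π0 (pointMass s) (SuccessEvent Tp)).toReal := fun s => rfl
  have hVnn : ∀ s, 0 ≤ Vval T Tp P π0 s := fun s => ENNReal.toReal_nonneg
  -- conversion of one-step ENNReal sums to real sums
  have hconv : ∀ (τ : S → A → ℝ) (y : S), (∀ a, 0 ≤ τ y a) →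
      (∑ a : A, ∑ s : S, ENNReal.ofReal (τ y a * P y a s) *
        trajMeasure T P π0 (pointMass s) (SuccessEvent Tp)).toReal
      = ∑ a : A, τ y a * Qval T Tp P π0 y a := by
    intro τ y hτ
    rw [ENNReal.toReal_sum (fun a _ => ENNReal.sum_ne_top.mpr
      (fun s _ => ENNReal.mul_ne_top ENNReal.ofReal_ne_top (hvne s)))]
    refine Finset.sum_congr rfl fun a _ => ?_
    rw [ENNReal.toReal_sum (fun s _ => ENNReal.mul_ne_top ENNReal.ofReal_ne_top (hvne s))]
    rw [Qval, Finset.mul_sum]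
    refine Finset.sum_congr rfl fun s' _ => ?_
    rw [ENNReal.toReal_mul, ENNReal.toReal_ofReal (mul_nonneg (hτ a) ((hP y a).1 s'))]
    rw [← hVdef, mul_assoc]
  have hbellQ : ∀ s ∉ T, (∑ a : A, π0 s a * Qval T Tp P π0 s a) = Vval T Tp P π0 s := by
    intro s hs
    rw [← hconv π0 s (hπ0 s hs).1, hVdef, EIF.G_step T Tp P π0 hsub hP hπ0 hs]
  have hQnn : ∀ s a, 0 ≤ Qval T Tp P π0 s a :=
    fun s a => Finset.sum_nonneg fun s' _ => mul_nonneg ((hP s a).1 s') (hVnn s')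
  have hπ'pmf : ∀ s ∉ T, IsPMFOn (π' s) := by
    intro s hs
    constructor
    · intro a
      exact div_nonneg (mul_nonneg ((hπ0 s hs).1 a) (hQnn s a)) (le_of_lt (hV0 s hs))
    · show (∑ a : A, π0 s a * Qval T Tp P π0 s a / Vval T Tp P π0 s) = 1
      rw [← Finset.sum_div, hbellQ s hs, div_self (hV0 s hs).ne']
  have hT' : ∀ s : S, trajMeasure T P π' (pointMass s) Set.univ = 1 := hterm π' hπ'pmf
  have hmaster := EIF.master T P π' Tp hsub hP π0 hπ'pmf hT' μ hμ.1 hμT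
  -- finiteness facts
  have huniv : ∀ (τ : S → A → ℝ),
      (∀ s : S, trajMeasure T P τ (pointMass s) Set.univ = 1) →
      trajMeasure T P τ μ Set.univ ≠ ⊤ := by
    intro τ hτuniv
    rw [EIF.mix_apply T P τ μ hμ.1,
      Finset.sum_congr rfl fun x _ => by rw [hτuniv x, mul_one]]
    rw [← ENNReal.ofReal_sum_of_nonneg (fun x _ => hμ.1 x)]
    exact ENNReal.ofReal_ne_top
  have hρ'ne : trajMeasure T P π' μ (SuccessEvent Tp) ≠ ⊤ :=
    (lt_of_le_of_lt (measure_mono (Set.subset_univ _)) (huniv π' hT').lt_top).ne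
  have hρ0ne : trajMeasure T P π0 μ (SuccessEvent Tp) ≠ ⊤ :=
    (lt_of_le_of_lt (measure_mono (Set.subset_univ _)) (huniv π0 hT0).lt_top).ne
  have hdne : ∀ y ∈ Tᶜ, dOcc T P π' μ y ≠ ⊤ := fun y hy => hd y (Finset.mem_compl.mp hy)
  have hBne : ∀ y : S, (∑ a : A, ∑ s : S, ENNReal.ofReal (π' y a * P y a s) *
      trajMeasure T P π0 (pointMass s) (SuccessEvent Tp)) ≠ ⊤ :=
    fun y => ENNReal.sum_ne_top.mpr fun a _ => ENNReal.sum_ne_top.mpr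
      fun s _ => ENNReal.mul_ne_top ENNReal.ofReal_ne_top (hvne s)
  -- toReal of the master identity
  have h1 := congrArg ENNReal.toReal hmaster
  rw [ENNReal.toReal_add hρ'ne (ENNReal.sum_ne_top.mpr fun y hy =>
        ENNReal.mul_ne_top (hdne y hy) (hvne y)),
      ENNReal.toReal_add hρ0ne (ENNReal.sum_ne_top.mpr fun y hy =>
        ENNReal.mul_ne_top (hdne y hy) (hBne y)),
      ENNReal.toReal_sum (fun y hy => ENNReal.mul_ne_top (hdne y hy) (hvne y)),
      ENNReal.toReal_sum (fun y hy => ENNReal.mul_ne_top (hdne y hy) (hBne y))] at h1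
  have hrw1 : (∑ y ∈ Tᶜ, (dOcc T P π' μ y * trajMeasure T P π0 (pointMass y)
        (SuccessEvent Tp)).toReal)
      = ∑ y ∈ Tᶜ, (dOcc T P π' μ y).toReal * Vval T Tp P π0 y :=
    Finset.sum_congr rfl fun y _ => by rw [ENNReal.toReal_mul, ← hVdef y]
  have hrw2 : (∑ y ∈ Tᶜ, (dOcc T P π' μ y * ∑ a : A, ∑ s : S,
        ENNReal.ofReal (π' y a * P y a s) *
          trajMeasure T P π0 (pointMass s) (SuccessEvent Tp)).toReal)
      = ∑ y ∈ Tᶜ, (dOcc T P π' μ y).toReal * (∑ a : A, π' y a * Qval T Tp P π0 y a) :=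
    Finset.sum_congr rfl fun y hy => by
      rw [ENNReal.toReal_mul, hconv π' y (hπ'pmf y (Finset.mem_compl.mp hy)).1]
  rw [hrw1, hrw2] at h1
  -- h1 is now the real-valued identity
  have halg : ∀ y ∉ T, (∑ a : A, π' y a * Qval T Tp P π0 y a)
      = Vval T Tp P π0 y + Vval T Tp P π0 y * influence T Tp P π0 y := by
    intro y hy
    have hV := hV0 y hy
    have hper : ∀ a : A, π' y a * Qval T Tp P π0 y a
        = Vval T Tp P π0 y * (π0 y a *
            ((Qval T Tp P π0 y a - Vval T Tp P π0 y) / Vval T Tp P π0 y) ^ 2)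
          + 2 * (π0 y a * Qval T Tp P π0 y a) - π0 y a * Vval T Tp P π0 y := by
      intro a
      show π0 y a * Qval T Tp P π0 y a / Vval T Tp P π0 y * Qval T Tp P π0 y a = _
      field_simp
      ring
    rw [Finset.sum_congr rfl fun a _ => hper a]
    rw [Finset.sum_sub_distrib, Finset.sum_add_distrib, ← Finset.mul_sum,
      ← Finset.mul_sum, ← Finset.sum_mul, hbellQ y hy, (hπ0 y hy).2]
    show Vval T Tp P π0 y * influence T Tp P π0 y + _ - _ = _
    ring
  have hsum2 : (∑ y ∈ Tᶜ, (dOcc T P π' μ y).toReal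
        * (∑ a : A, π' y a * Qval T Tp P π0 y a))
      - ∑ y ∈ Tᶜ, (dOcc T P π' μ y).toReal * Vval T Tp P π0 y
      = ∑ y ∈ Tᶜ, (dOcc T P π' μ y).toReal * Vval T Tp P π0 y * influence T Tp P π0 y := by
    rw [← Finset.sum_sub_distrib]
    refine Finset.sum_congr rfl fun y hy => ?_
    rw [halg y (Finset.mem_compl.mp hy)]
    ring
  linarith [h1, hsum2]
end

section
/- Proxy-reward identity: assume Var(Adv) > 0 and Var(Ãdv) > 0. Then (Σ_a π̃₊(a)·Adv(a)) / (Σ_a π₊(a)·Adv(a)) = √(Ĩ/I) · Cov(Adv,Ãdv)/√(Var(Adv)·Var(Ãdv)); that is, the ratio of the faithful advantage of the proxy success-conditioned policy to that of the faithful success-conditioned policy equals the square root of the ratio of action-influences times the correlation between the two advantage functions under π0. -/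
/-- **Proxy-reward identity.**
Single-state setup with two rewards: `π0` is a strictly positive pmf on a finite
nonempty action type `A`; `Q, Q̃ : A → ℝ` take values in `[0,1]`;
`V = Σ_a π0(a)·Q(a) > 0` and `Ṽ = Σ_a π0(a)·Q̃(a) > 0`;
`Adv(a) = Q(a) − V`, `Ãdv(a) = Q̃(a) − Ṽ`; `π₊(a) = π0(a)·Q(a)/V`,
`π̃₊(a) = π0(a)·Q̃(a)/Ṽ`; the action-influences are `I = Σ_a π0(a)·(Adv(a)/V)²`
and `Ĩ = Σ_a π0(a)·(Ãdv(a)/Ṽ)²`; and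
`Cov(f,g) = Σ_a π0(a)·f(a)·g(a) − (Σ_a π0(a)·f(a))·(Σ_a π0(a)·g(a))`,
`Var(f) = Cov(f,f)`.

Assume `Var(Adv) > 0` and `Var(Ãdv) > 0`.  Then
`(Σ_a π̃₊(a)·Adv(a)) / (Σ_a π₊(a)·Adv(a))
  = √(Ĩ/I) · Cov(Adv,Ãdv)/√(Var(Adv)·Var(Ãdv))`. -/
theorem proxy_reward_identity
    {A : Type*} [Fintype A] [Nonempty A]
    (π0 : A → ℝ) (hπ0pos : ∀ a, 0 < π0 a) (hπ0sum : ∑ a, π0 a = 1)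
    (Q Qt : A → ℝ) (hQ : ∀ a, 0 ≤ Q a ∧ Q a ≤ 1) (hQt : ∀ a, 0 ≤ Qt a ∧ Qt a ≤ 1)
    (V Vt : ℝ) (hV : V = ∑ a, π0 a * Q a) (hVt : Vt = ∑ a, π0 a * Qt a)
    (hVpos : 0 < V) (hVtpos : 0 < Vt)
    (Adv Advt : A → ℝ) (hAdv : ∀ a, Adv a = Q a - V) (hAdvt : ∀ a, Advt a = Qt a - Vt)
    (πp πpt : A → ℝ) (hπp : ∀ a, πp a = π0 a * Q a / V)
    (hπpt : ∀ a, πpt a = π0 a * Qt a / Vt)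
    (I It : ℝ) (hI : I = ∑ a, π0 a * (Adv a / V) ^ 2)
    (hIt : It = ∑ a, π0 a * (Advt a / Vt) ^ 2)
    (Cov : (A → ℝ) → (A → ℝ) → ℝ)
    (hCov : ∀ f g, Cov f g
      = ∑ a, π0 a * f a * g a - (∑ a, π0 a * f a) * (∑ a, π0 a * g a))
    (hVar : 0 < Cov Adv Adv) (hVart : 0 < Cov Advt Advt) :
    (∑ a, πpt a * Adv a) / (∑ a, πp a * Adv a)
      = Real.sqrt (It / I)
        * (Cov Adv Advt / Real.sqrt (Cov Adv Adv * Cov Advt Advt)) := by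
  have hsum0 : ∑ a, π0 a * Adv a = 0 := by
    have : ∑ a, π0 a * Adv a = (∑ a, π0 a * Q a) - V * ∑ a, π0 a := by
      rw [Finset.mul_sum, ← Finset.sum_sub_distrib]
      exact Finset.sum_congr rfl (fun a _ => by rw [hAdv a]; ring)
    rw [this, hπ0sum, ← hV]; ring
  have hCovA : Cov Adv Adv = ∑ a, π0 a * Adv a * Adv a := by
    rw [hCov, hsum0]; ring
  have hCovAt : Cov Adv Advt = ∑ a, π0 a * Adv a * Advt a := by
    rw [hCov, hsum0]; ring
  have hCovtt : Cov Advt Advt = ∑ a, π0 a * Advt a * Advt a := by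
    rw [hCov]
    have hsumt0 : ∑ a, π0 a * Advt a = 0 := by
      have : ∑ a, π0 a * Advt a = (∑ a, π0 a * Qt a) - Vt * ∑ a, π0 a := by
        rw [Finset.mul_sum, ← Finset.sum_sub_distrib]
        exact Finset.sum_congr rfl (fun a _ => by rw [hAdvt a]; ring)
      rw [this, hπ0sum, ← hVt]; ring
    rw [hsumt0]; ring
  have hIeq : I = Cov Adv Adv / V ^ 2 := by
    rw [hI, hCovA, Finset.sum_div]
    exact Finset.sum_congr rfl (fun a _ => by field_simp)
  have hIteq : It = Cov Advt Advt / Vt ^ 2 := by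
    rw [hIt, hCovtt, Finset.sum_div]
    exact Finset.sum_congr rfl (fun a _ => by field_simp)
  have hSp : ∑ a, πp a * Adv a = Cov Adv Adv / V := by
    have h1 : ∀ a ∈ Finset.univ, πp a * Adv a
        = π0 a * Adv a * Adv a / V + π0 a * Adv a := by
      intro a _
      have hQa : Q a = Adv a + V := by rw [hAdv a]; ring
      rw [hπp a, hQa]; field_simp
    rw [Finset.sum_congr rfl h1, Finset.sum_add_distrib, hsum0, ← Finset.sum_div, ← hCovA]
    ring
  have hSpt : ∑ a, πpt a * Adv a = Cov Adv Advt / Vt := by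
    have h1 : ∀ a ∈ Finset.univ, πpt a * Adv a
        = π0 a * Adv a * Advt a / Vt + π0 a * Adv a := by
      intro a _
      have hQa : Qt a = Advt a + Vt := by rw [hAdvt a]; ring
      rw [hπpt a, hQa]; field_simp
    rw [Finset.sum_congr rfl h1, Finset.sum_add_distrib, hsum0, ← Finset.sum_div, ← hCovAt]
    ring
  set sA := Real.sqrt (Cov Adv Adv) with hsAdef
  set sB := Real.sqrt (Cov Advt Advt) with hsBdef
  have hsA : sA ^ 2 = Cov Adv Adv := Real.sq_sqrt hVar.le
  have hsB : sB ^ 2 = Cov Advt Advt := Real.sq_sqrt hVart.le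
  have hsApos : 0 < sA := Real.sqrt_pos.mpr hVar
  have hsBpos : 0 < sB := Real.sqrt_pos.mpr hVart
  have h2 : It / I = (sB * V / (sA * Vt)) ^ 2 := by
    rw [hIeq, hIteq, ← hsA, ← hsB]
    field_simp
  have hmul : Real.sqrt (Cov Adv Adv * Cov Advt Advt) = sA * sB := by
    rw [Real.sqrt_mul hVar.le]
  rw [hSp, hSpt, h2, Real.sqrt_sq (by positivity), hmul, ← hsA]
  field_simp
end
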